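/- arXiv:1709.09646 — 4 statements merged into one kernel-verified Lean document; each statement's English description precedes it below -/
import Mathlib

section
/- Let X be an infinite-dimensional real Banach space. Then X has a separable quotient if and only if X admits a strictly increasing sequence (X_n) of closed linear subspaces of X whose union is dense in X. -/
open Submodule TopologicalSpace Set

section Aux

variable {X : Type*} [NormedAddCommGroup X] [NormedSpace ℝ X]

/-- Hahn–Banach: separate a point from a closed subspace by a continuous functional
vanishing on the subspace and taking value 1 at the point. -/
lemma exists_functional_of_closed_submodule (Y : Submodule ℝ X) (hY : IsClosed (Y : Set X))
    {x : X} (hx : x ∉ Y) :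
    ∃ f : X →L[ℝ] ℝ, (∀ y ∈ Y, f y = 0) ∧ f x = 1 := by
  obtain ⟨f, u, hfs, hux⟩ := geometric_hahn_banach_closed_point Y.convex hY hx
  have hf0 : ∀ y ∈ Y, f y = 0 := by
    intro y hy
    by_contra h
    have hmem : ((u + 1) / f y) • y ∈ Y := Y.smul_mem _ hy
    have := hfs _ hmem
    rw [map_smul, smul_eq_mul, div_mul_cancel₀ _ h] at this
    linarith
  have hu0 : 0 < u := by
    have h0 := hf0 0 Y.zero_mem
    have := hfs 0 Y.zero_mem
    rw [h0] at this
    exact this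
  have hfx : f x ≠ 0 := (hu0.trans hux).ne'
  refine ⟨(f x)⁻¹ • f, fun y hy => ?_, ?_⟩
  · simp [hf0 y hy]
  · simp [inv_mul_cancel₀ hfx]

/-- Gram–Schmidt style biorthogonalization. -/
noncomputable def gsAux (f : ℕ → X →L[ℝ] ℝ) (x : ℕ → X) : ℕ → X
  | n => x n - ∑ k ∈ (Finset.range n).attach, f k.1 (x n) • gsAux f x k.1
  decreasing_by exact Finset.mem_range.mp k.2

lemma gsAux_def (f : ℕ → X →L[ℝ] ℝ) (x : ℕ → X) (n : ℕ) :
    gsAux f x n = x n - ∑ k ∈ (Finset.range n).attach, f k.1 (x n) • gsAux f x k.1 := by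
  rw [gsAux]

/-- A finite-dimensional submodule of an infinite-dimensional space is proper. -/
lemma exists_not_mem_of_fd {V : Type*} [AddCommGroup V] [Module ℝ V]
    (hV : ¬ FiniteDimensional ℝ V) (G : Submodule ℝ V) [FiniteDimensional ℝ G] :
    ∃ b, b ∉ G := by
  by_contra h
  push_neg at h
  have hG : G = ⊤ := Submodule.eq_top_iff'.2 h
  apply hV
  have : FiniteDimensional ℝ (⊤ : Submodule ℝ V) := hG ▸ ‹_›
  exact Submodule.topEquiv.finiteDimensional

open Classical in
/-- Auxiliary increasing sequence of finite-dimensional submodules containing a given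
sequence, growing strictly. -/
noncomputable def fdSeq {Q : Type*} [AddCommGroup Q] [Module ℝ Q] (d : ℕ → Q) :
    ℕ → Submodule ℝ Q
  | 0 => ⊥
  | n + 1 =>
    let G := fdSeq d n ⊔ Submodule.span ℝ {d n}
    G ⊔ Submodule.span ℝ {if h : ∃ b, b ∉ G then h.choose else 0}

end Aux

/-- A Banach space has a separable quotient if there is a closed linear subspace `Y`
such that the quotient `X ⧸ Y` is infinite-dimensional and separable. -/
def HasSeparableQuotient (X : Type*) [NormedAddCommGroup X] [NormedSpace ℝ X] : Prop :=
  ∃ Y : Submodule ℝ X, IsClosed (Y : Set X) ∧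
    ¬ FiniteDimensional ℝ (X ⧸ Y) ∧ TopologicalSpace.SeparableSpace (X ⧸ Y)

section Rev

variable {X : Type*} [NormedAddCommGroup X] [NormedSpace ℝ X]

lemma rev_dir (S : ℕ → Submodule ℝ X) (hc : ∀ n, IsClosed ((S n : Set X)))
    (hm : StrictMono S) (hd : Dense (⋃ n, (S n : Set X))) :
    HasSeparableQuotient X := by
  -- choose points and functionals
  have hex : ∀ n : ℕ, ∃ x : X, ∃ f : X →L[ℝ] ℝ,
      x ∈ S (n + 1) ∧ (∀ y ∈ S n, f y = 0) ∧ f x = 1 := by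
    intro n
    obtain ⟨x, hx1, hx2⟩ := SetLike.exists_of_lt (hm (Nat.lt_succ_self n))
    obtain ⟨f, hf0, hfx⟩ := exists_functional_of_closed_submodule (S n) (hc n) hx2
    exact ⟨x, f, hx1, hf0, hfx⟩
  choose x f hx1 hf0 hfx using hex
  set xp : ℕ → X := gsAux f x with hxpdef
  -- membership and biorthogonality
  have key : ∀ n : ℕ, xp n ∈ S (n + 1) ∧ ∀ k, f k (xp n) = if k = n then 1 else 0 := by
    intro n
    induction n using Nat.strong_induction_on with
    | _ n ih =>
      have hmem : xp n ∈ S (n + 1) := by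
        rw [hxpdef, gsAux_def]
        refine Submodule.sub_mem _ (hm.monotone (Nat.le_refl _) (hx1 n)) ?_
        refine Submodule.sum_mem _ fun k hk => ?_
        have hk' : (k : ℕ) < n := Finset.mem_range.mp k.2
        exact Submodule.smul_mem _ _
          (hm.monotone (Nat.succ_le_of_lt (hk'.trans (Nat.lt_succ_self n)))
            ((ih k hk').1))
      refine ⟨hmem, fun k => ?_⟩
      rcases lt_trichotomy k n with hkn | rfl | hkn
      · -- k < n
        rw [if_neg hkn.ne, hxpdef, gsAux_def, map_sub, map_sum]
        have : ∀ j ∈ (Finset.range n).attach,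
            f k (f j.1 (x n) • gsAux f x j.1) = f j.1 (x n) * (if k = j.1 then 1 else 0) := by
          intro j hj
          rw [map_smul, smul_eq_mul, ← hxpdef, (ih j.1 (Finset.mem_range.mp j.2)).2 k]
        rw [Finset.sum_congr rfl this,
          Finset.sum_attach (Finset.range n) (fun j => f j (x n) * if k = j then 1 else 0)]
        simp only [mul_ite, mul_one, mul_zero]
        rw [Finset.sum_ite_eq]
        simp [Finset.mem_range.mpr hkn]
      · -- k = n
        rw [if_pos rfl, hxpdef, gsAux_def, map_sub, map_sum]
        have : ∀ j ∈ (Finset.range k).attach,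
            f k (f j.1 (x k) • gsAux f x j.1) = 0 := by
          intro j hj
          have hj' : (j : ℕ) < k := Finset.mem_range.mp j.2
          rw [map_smul, smul_eq_mul, ← hxpdef,
            hf0 k _ (hm.monotone (Nat.succ_le_of_lt hj') ((ih j.1 hj').1))]
          ring
        rw [Finset.sum_congr rfl this]
        simp [hfx k]
      · -- n < k
        rw [if_neg hkn.ne', hf0 k _ (hm.monotone hkn hmem)]
  have hxpmem : ∀ n, xp n ∈ S (n + 1) := fun n => (key n).1
  have hbio : ∀ k n, f k (xp n) = if k = n then 1 else 0 := fun k n => (key n).2 k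
  -- the closed subspace Y
  set Y : Submodule ℝ X := ⨅ k, LinearMap.ker (f k : X →ₗ[ℝ] ℝ) with hYdef
  have hYmem : ∀ v : X, v ∈ Y ↔ ∀ k, f k v = 0 := by
    intro v
    simp [hYdef, Submodule.mem_iInf, LinearMap.mem_ker]
  have hYclosed : IsClosed (Y : Set X) := by
    have : (Y : Set X) = ⋂ k, (LinearMap.ker (f k : X →ₗ[ℝ] ℝ) : Set X) := by
      simp [hYdef, Submodule.coe_iInf]
    rw [this]
    exact isClosed_iInter fun k => ContinuousLinearMap.isClosed_ker (f k)
  haveI : IsClosed (Y : Set X) := hYclosed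
  -- the quotient map as a continuous linear map
  let π : X →L[ℝ] X ⧸ Y := LinearMap.mkContinuous Y.mkQ 1 (by
    intro v
    simpa using Submodule.Quotient.norm_mk_le Y v)
  have hπ : ∀ v : X, π v = Y.mkQ v := fun v => rfl
  have hπsurj : Function.Surjective π := Y.mkQ_surjective
  -- the lifted functionals
  have hYle : ∀ k, Y ≤ LinearMap.ker (f k : X →ₗ[ℝ] ℝ) := by
    intro k v hv
    exact (hYmem v).1 hv k
  let g : ℕ → (X ⧸ Y) →ₗ[ℝ] ℝ := fun k => Y.liftQ (f k : X →ₗ[ℝ] ℝ) (hYle k)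
  have hgπ : ∀ k (v : X), g k (π v) = f k v := by
    intro k v
    rw [hπ]
    exact Submodule.liftQ_apply _ _ _
  -- the quotient is infinite-dimensional
  have hli : LinearIndependent ℝ (fun n => π (xp n)) := by
    rw [linearIndependent_iff']
    intro s gc hsum j hj
    have := congrArg (g j) hsum
    rw [map_sum, map_zero] at this
    have hterm : ∀ i ∈ s, g j (gc i • π (xp i)) = gc i * (if j = i then 1 else 0) := by
      intro i hi
      rw [map_smul, smul_eq_mul, hgπ, hbio]
    rw [Finset.sum_congr rfl hterm] at this
    simp only [mul_ite, mul_one, mul_zero] at this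
    rw [Finset.sum_ite_eq] at this
    simpa [hj] using this
  have hinf : ¬ FiniteDimensional ℝ (X ⧸ Y) := by
    intro h
    exact Module.Finite.not_linearIndependent_of_infinite (R := ℝ) (fun n => π (xp n)) hli
  -- separability: the image of each `S n` lies in the span of finitely many vectors
  have hspan : ∀ n, ∀ v ∈ S n, π v ∈ Submodule.span ℝ (Set.range fun m => π (xp m)) := by
    intro n v hv
    have hw : v - ∑ k ∈ Finset.range n, f k v • xp k ∈ Y := by
      rw [hYmem]
      intro j
      rw [map_sub, map_sum]
      rcases lt_or_ge j n with hjn | hjn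
      · have hterm : ∀ i ∈ Finset.range n, f j (f i v • xp i) = f i v * (if j = i then 1 else 0) := by
          intro i hi
          rw [map_smul, smul_eq_mul, hbio]
        rw [Finset.sum_congr rfl hterm]
        simp only [mul_ite, mul_one, mul_zero]
        rw [Finset.sum_ite_eq]
        simp [Finset.mem_range.mpr hjn]
      · have hv0 : f j v = 0 := hf0 j v (hm.monotone hjn hv)
        have hterm : ∀ i ∈ Finset.range n, f j (f i v • xp i) = 0 := by
          intro i hi
          have hij : j ≠ i := fun h => absurd (h ▸ Finset.mem_range.mp hi) (not_lt.mpr hjn)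
          rw [map_smul, smul_eq_mul, hbio, if_neg hij, mul_zero]
        rw [Finset.sum_congr rfl hterm]
        simp [hv0]
    have : π v = ∑ k ∈ Finset.range n, f k v • π (xp k) := by
      have h0 : π (v - ∑ k ∈ Finset.range n, f k v • xp k) = 0 := by
        rw [hπ]
        exact (Submodule.Quotient.mk_eq_zero Y).mpr hw
      rw [map_sub, sub_eq_zero] at h0
      rw [h0, map_sum]
      simp
    rw [this]
    exact Submodule.sum_mem _ fun k _ =>
      Submodule.smul_mem _ _ (Submodule.subset_span ⟨k, rfl⟩)
  -- density of the span
  have hdense : Dense ((Submodule.span ℝ (Set.range fun m => π (xp m)) : Submodule ℝ (X ⧸ Y)) :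
      Set (X ⧸ Y)) := by
    set D := ((Submodule.span ℝ (Set.range fun m => π (xp m)) : Submodule ℝ (X ⧸ Y)) :
      Set (X ⧸ Y))
    have himg : π '' (⋃ n, (S n : Set X)) ⊆ D := by
      rintro _ ⟨v, hv, rfl⟩
      obtain ⟨_, ⟨n, rfl⟩, hvn⟩ := hv
      exact hspan n v hvn
    intro q
    rcases hπsurj q with ⟨v, rfl⟩
    have hv : v ∈ closure (⋃ n, (S n : Set X)) := hd v
    have := image_closure_subset_closure_image (f := π) π.continuous (Set.mem_image_of_mem π hv)
    exact closure_mono himg this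
  have hsep : TopologicalSpace.SeparableSpace (X ⧸ Y) := by
    rw [← isSeparable_univ_iff]
    have hcount : (Set.range fun m => π (xp m)).Countable := Set.countable_range _
    have hsepD := (hcount.isSeparable).span (R := ℝ)
    refine (hsepD.closure).mono ?_
    rw [hdense.closure_eq]
  exact ⟨Y, hYclosed, hinf, hsep⟩

end Rev

theorem separableQuotient_iff_denseUnion_strictMono_closed_subspaces
    (X : Type*) [NormedAddCommGroup X] [NormedSpace ℝ X] [CompleteSpace X]
    (hX : ¬ FiniteDimensional ℝ X) :
    HasSeparableQuotient X ↔
      ∃ S : ℕ → Submodule ℝ X, (∀ n, IsClosed (S n : Set X)) ∧ StrictMono S ∧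
        Dense (⋃ n, (S n : Set X)) := by
  constructor
  · rintro ⟨Y, hYc, hYinf, hYsep⟩
    haveI : IsClosed (Y : Set X) := hYc
    haveI := hYsep
    obtain ⟨d, hdd⟩ := TopologicalSpace.exists_dense_seq (X ⧸ Y)
    -- finite-dimensional strictly increasing sequence in the quotient
    set F : ℕ → Submodule ℝ (X ⧸ Y) := fdSeq d with hFdef
    have hFfd : ∀ n, FiniteDimensional ℝ (F n) := by
      intro n
      induction n with
      | zero => simpa [hFdef, fdSeq] using inferInstanceAs (FiniteDimensional ℝ (⊥ : Submodule ℝ (X ⧸ Y)))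
      | succ n ih =>
        rw [hFdef, fdSeq]
        haveI := ih
        infer_instance
    have hFlt : ∀ n, F n < F (n + 1) := by
      intro n
      haveI := hFfd n
      set G := F n ⊔ Submodule.span ℝ {d n} with hG
      haveI : FiniteDimensional ℝ G := by rw [hG]; infer_instance
      have hex : ∃ b, b ∉ G := exists_not_mem_of_fd hYinf G
      have hFsucc : F (n + 1) = G ⊔ Submodule.span ℝ {hex.choose} := by
        rw [hFdef]
        show fdSeq d (n + 1) = _
        rw [fdSeq, dif_pos hex]
      refine lt_of_le_of_lt (le_sup_left : F n ≤ G) ?_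
      rw [hFsucc]
      refine lt_of_le_of_ne le_sup_left ?_
      intro h
      have hmem : hex.choose ∈ G ⊔ Submodule.span ℝ {hex.choose} :=
        (le_sup_right : Submodule.span ℝ {hex.choose} ≤ _)
          (Submodule.mem_span_singleton_self _)
      rw [← h] at hmem
      exact hex.choose_spec hmem
    have hFd : ∀ n, d n ∈ F (n + 1) := by
      intro n
      haveI := hFfd n
      set G := F n ⊔ Submodule.span ℝ {d n} with hG
      haveI : FiniteDimensional ℝ G := by rw [hG]; infer_instance
      have hex : ∃ b, b ∉ G := exists_not_mem_of_fd hYinf G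
      have hFsucc : F (n + 1) = G ⊔ Submodule.span ℝ {hex.choose} := by
        rw [hFdef]
        show fdSeq d (n + 1) = _
        rw [fdSeq, dif_pos hex]
      rw [hFsucc]
      exact (le_sup_left : G ≤ _) ((le_sup_right : Submodule.span ℝ {d n} ≤ G)
        (Submodule.mem_span_singleton_self _))
    -- pull back
    refine ⟨fun n => (F n).comap Y.mkQ, ?_, ?_, ?_⟩
    · intro n
      haveI := hFfd n
      have hclosed : IsClosed ((F n : Set (X ⧸ Y))) := (F n).closed_of_finiteDimensional
      have : ((F n).comap Y.mkQ : Set X) = Y.mkQ ⁻¹' (F n) := rfl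
      rw [this]
      have hcont : Continuous Y.mkQ := by
        have : Continuous fun v : X => (Submodule.Quotient.mk v : X ⧸ Y) :=
          (LinearMap.mkContinuous Y.mkQ 1 (by
            intro v
            simpa using Submodule.Quotient.norm_mk_le Y v)).continuous
        exact this
      exact hclosed.preimage hcont
    · have hmono : Monotone fun n => (F n).comap Y.mkQ :=
        fun a b hab => Submodule.comap_mono ((strictMono_nat_of_lt_succ hFlt).monotone hab)
      refine hmono.strictMono_of_injective ?_
      intro a b hab
      have := congrArg (Submodule.map Y.mkQ) hab
      rw [Submodule.map_comap_eq_of_surjective Y.mkQ_surjective,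
        Submodule.map_comap_eq_of_surjective Y.mkQ_surjective] at this
      exact (strictMono_nat_of_lt_succ hFlt).injective this
    · have hU : (⋃ n, (((F n).comap Y.mkQ : Submodule ℝ X) : Set X)) =
          Y.mkQ ⁻¹' (⋃ n, (F n : Set (X ⧸ Y))) := by
        rw [Set.preimage_iUnion]
        rfl
      rw [hU]
      have hdense : Dense (⋃ n, (F n : Set (X ⧸ Y))) := by
        have : Set.range d ⊆ ⋃ n, (F n : Set (X ⧸ Y)) := by
          rintro _ ⟨n, rfl⟩
          exact Set.mem_iUnion.mpr ⟨n + 1, hFd n⟩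
        exact hdd.mono this
      exact hdense.preimage Y.isOpenMap_mkQ
  · rintro ⟨S, hc, hmono, hdense⟩
    exact rev_dir S hc hmono hdense
end

section
/- Let X be an infinite-dimensional real Banach space. Then X has a separable quotient if and only if X* contains a pseudobounded sequence, i.e., a sequence (x_n*) in X* for which there exists a dense linear subspace D of X with sup_n |x_n*(x)| < ∞ for every x ∈ D, while sup_n ‖x_n*‖ = ∞. -/
open TopologicalSpace

noncomputable def qCLM {R : Type*} [Ring R] {M : Type*} [SeminormedAddCommGroup M] [Module R M]
    (Y : Submodule R M) : M →L[R] M ⧸ Y :=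
  LinearMap.mkContinuous Y.mkQ 1 (fun x => by
    simpa using Submodule.Quotient.norm_mk_le Y x)

@[simp] lemma qCLM_apply {R : Type*} [Ring R] {M : Type*} [SeminormedAddCommGroup M] [Module R M]
    (Y : Submodule R M) (x : M) : qCLM Y x = Submodule.Quotient.mk x := rfl

/-- Packaged data of a pseudobounded sequence of functionals. -/
structure PBdata (X : Type*) [NormedAddCommGroup X] [NormedSpace ℝ X] where
  f : ℕ → X →L[ℝ] ℝ
  B : Submodule ℝ X
  dense : Dense (B : Set X)
  bdd : ∀ x ∈ B, ∃ C : ℝ, ∀ n, |f n x| ≤ C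
  unbdd : ∀ C : ℝ, ∃ n, C < ‖f n‖

namespace PBdata

variable {X : Type*} [NormedAddCommGroup X] [NormedSpace ℝ X] (P : PBdata X)

/-- Canonical pointwise bound. -/
noncomputable def Cx (x : X) : ℝ := ⨆ n, |P.f n x|

lemma bddAbove_of_mem {x : X} (hx : x ∈ P.B) : BddAbove (Set.range fun n => |P.f n x|) := by
  obtain ⟨C, hC⟩ := P.bdd x hx
  exact ⟨C, by rintro _ ⟨n, rfl⟩; exact hC n⟩

lemma abs_le_Cx {x : X} (hx : x ∈ P.B) (n : ℕ) : |P.f n x| ≤ P.Cx x :=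
  le_ciSup (P.bddAbove_of_mem hx) n

lemma Cx_nonneg {x : X} (hx : x ∈ P.B) : 0 ≤ P.Cx x :=
  le_trans (abs_nonneg _) (P.abs_le_Cx hx 0)

/-- Key lemma: `f` is unbounded even on the part of `B` annihilated by finitely many
functionals. -/
lemma key (l : List (X →L[ℝ] ℝ)) (M : ℝ) :
    ∃ n, ∃ e ∈ P.B, (∀ φ ∈ l, φ e = 0) ∧ ‖e‖ ≤ 1 ∧ M < |P.f n e| := by
  induction l generalizing M with
  | nil =>
    by_contra h
    push_neg at h
    -- h : ∀ n, ∀ e ∈ P.B, ‖e‖ ≤ 1 → |P.f n e| ≤ M  (with trivial list condition)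
    have hM : 0 ≤ M := by
      have := h 0 0 (zero_mem _) (by simp) (by simp)
      simpa using this
    obtain ⟨n, hn⟩ := P.unbdd M
    have hb : ∀ x ∈ P.B, |P.f n x| ≤ M * ‖x‖ := by
      intro x hx
      rcases eq_or_ne x 0 with rfl | hx0
      · simp [mul_comm]
      · have hnx : ‖x‖ ≠ 0 := norm_ne_zero_iff.mpr hx0
        have := h n (‖x‖⁻¹ • x) (Submodule.smul_mem _ _ hx)
          (fun φ hφ => absurd hφ List.not_mem_nil)
          (by rw [norm_smul, norm_inv, norm_norm, inv_mul_cancel₀ hnx])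
        rw [map_smul] at this
        have h2 : ‖x‖⁻¹ * |P.f n x| ≤ M := by
          rwa [smul_eq_mul, abs_mul, abs_inv, abs_norm] at this
        calc |P.f n x| = ‖x‖ * (‖x‖⁻¹ * |P.f n x|) := by field_simp
        _ ≤ ‖x‖ * M := mul_le_mul_of_nonneg_left h2 (norm_nonneg x)
        _ = M * ‖x‖ := mul_comm _ _
    -- extend to all of X by density
    have hall : ∀ x : X, |P.f n x| ≤ M * ‖x‖ := by
      intro x
      have hcl : IsClosed {x : X | |P.f n x| ≤ M * ‖x‖} := by
        apply isClosed_le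
        · exact (continuous_abs.comp (P.f n).continuous)
        · exact continuous_const.mul continuous_norm
      have : (P.B : Set X) ⊆ {x : X | |P.f n x| ≤ M * ‖x‖} := hb
      have := closure_minimal this hcl
      rw [P.dense.closure_eq] at this
      exact this (Set.mem_univ x)
    have : ‖P.f n‖ ≤ M := by
      apply ContinuousLinearMap.opNorm_le_bound _ hM
      intro x
      rw [Real.norm_eq_abs]
      exact hall x
    linarith
  | cons φ l ih =>
    by_cases hu : ∃ u ∈ P.B, (∀ ψ ∈ l, ψ u = 0) ∧ φ u ≠ 0
    · obtain ⟨u₀, hu₀B, hu₀l, hu₀φ⟩ := hu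
      -- normalize
      set u := (φ u₀)⁻¹ • u₀ with hudef
      have huB : u ∈ P.B := Submodule.smul_mem _ _ hu₀B
      have hul : ∀ ψ ∈ l, ψ u = 0 := fun ψ hψ => by
        rw [hudef, map_smul, hu₀l ψ hψ, smul_zero]
      have huφ : φ u = 1 := by
        rw [hudef, map_smul, smul_eq_mul, inv_mul_cancel₀ hu₀φ]
      by_contra h
      push_neg at h
      -- h : ∀ n, ∀ e ∈ B, (conds for φ::l) → ‖e‖ ≤ 1 → |f n e| ≤ M
      set c : ℝ := 1 + ‖φ‖ * ‖u‖ with hc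
      have hc1 : (1:ℝ) ≤ c := le_add_of_nonneg_right (by positivity)
      set M' : ℝ := c * |M| + ‖φ‖ * P.Cx u with hM'
      obtain ⟨n, e, heB, hel, he1, heM⟩ := ih M'
      -- e' := e - φ e • u
      set e' : X := e - φ e • u with he'
      have he'B : e' ∈ P.B := Submodule.sub_mem _ heB (Submodule.smul_mem _ _ huB)
      have he'l : ∀ ψ ∈ (φ :: l), ψ e' = 0 := by
        intro ψ hψ
        rcases List.mem_cons.mp hψ with rfl | hψl
        · simp only [he', map_sub, map_smul, huφ, smul_eq_mul, mul_one, sub_self]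
        · simp only [he', map_sub, map_smul, hel ψ hψl, hul ψ hψl, smul_zero, sub_zero]
      have hφe : |φ e| ≤ ‖φ‖ := by
        have := φ.le_opNorm e
        rw [Real.norm_eq_abs] at this
        calc |φ e| ≤ ‖φ‖ * ‖e‖ := this
        _ ≤ ‖φ‖ * 1 := mul_le_mul_of_nonneg_left he1 (norm_nonneg φ)
        _ = ‖φ‖ := mul_one _
      have he'norm : ‖e'‖ ≤ c := by
        calc ‖e'‖ ≤ ‖e‖ + ‖φ e • u‖ := norm_sub_le _ _
        _ ≤ 1 + ‖φ‖ * ‖u‖ := by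
          apply add_le_add he1
          rw [norm_smul, Real.norm_eq_abs]
          exact mul_le_mul_of_nonneg_right hφe (norm_nonneg u)
        _ = c := hc.symm
      have hcpos : (0:ℝ) < c := lt_of_lt_of_le one_pos hc1
      -- apply the assumed bound to the normalized vector
      have hbound : |P.f n e'| ≤ c * |M| := by
        have h2 := h n (c⁻¹ • e') (Submodule.smul_mem _ _ he'B)
          (fun ψ hψ => by rw [map_smul, he'l ψ hψ, smul_zero])
          (by
            rw [norm_smul, norm_inv, Real.norm_eq_abs, abs_of_pos hcpos]
            rw [inv_mul_le_iff₀ hcpos, mul_one]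
            exact he'norm)
        rw [map_smul, smul_eq_mul, abs_mul, abs_inv, abs_of_pos hcpos] at h2
        have h3 : |P.f n e'| ≤ c * M := by
          rwa [inv_mul_le_iff₀ hcpos] at h2
        calc |P.f n e'| ≤ c * M := h3
        _ ≤ c * |M| := mul_le_mul_of_nonneg_left (le_abs_self M) (le_of_lt hcpos)
      -- derive a bound for f n e, contradicting heM
      have hfe : |P.f n e| ≤ M' := by
        have hsplit : P.f n e = P.f n e' + φ e * P.f n u := by
          simp only [he', map_sub, map_smul, smul_eq_mul]
          ring
        rw [hsplit]
        calc |P.f n e' + φ e * P.f n u| ≤ |P.f n e'| + |φ e * P.f n u| := abs_add_le _ _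
        _ ≤ c * |M| + ‖φ‖ * P.Cx u := by
          apply add_le_add hbound
          rw [abs_mul]
          exact mul_le_mul hφe (P.abs_le_Cx huB n) (abs_nonneg _) (norm_nonneg φ)
        _ = M' := hM'.symm
      exact absurd heM (not_lt.mpr hfe)
    · push_neg at hu
      obtain ⟨n, e, heB, hel, he1, heM⟩ := ih M
      exact ⟨n, e, heB, fun ψ hψ => by
        rcases List.mem_cons.mp hψ with rfl | hψl
        · exact hu e heB hel
        · exact hel ψ hψl, he1, heM⟩


/-- From the key lemma: small vectors normalized against some `f n`, annihilated by a
finite list of functionals. -/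
lemma pick (l : List (X →L[ℝ] ℝ)) (a : ℝ) :
    ∃ p : ℕ × X, p.2 ∈ P.B ∧ (∀ φ ∈ l, φ p.2 = 0) ∧ P.f p.1 p.2 = 1 ∧
      ‖p.2‖ ≤ (1/2) ^ l.length / max a 1 := by
  set ε : ℝ := (1/2) ^ l.length / max a 1 with hε
  have hεpos : 0 < ε := by
    apply div_pos (by positivity)
    exact lt_of_lt_of_le one_pos (le_max_right a 1)
  obtain ⟨n, e, heB, hel, he1, heM⟩ := P.key l (1/ε)
  have hfe : (0:ℝ) < |P.f n e| := lt_trans (by positivity) heM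
  have hfne : P.f n e ≠ 0 := fun h => by simp [h] at hfe
  refine ⟨⟨n, (P.f n e)⁻¹ • e⟩, Submodule.smul_mem _ _ heB, ?_, ?_, ?_⟩
  · intro φ hφ
    simp only [map_smul, hel φ hφ, smul_zero]
  · simp only [map_smul, smul_eq_mul, inv_mul_cancel₀ hfne]
  · rw [norm_smul, norm_inv, Real.norm_eq_abs]
    show |P.f n e|⁻¹ * ‖e‖ ≤ ε
    calc |P.f n e|⁻¹ * ‖e‖ ≤ |P.f n e|⁻¹ * 1 :=
      mul_le_mul_of_nonneg_left he1 (by positivity)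
    _ = |P.f n e|⁻¹ := mul_one _
    _ ≤ ε := by
      rw [inv_le_comm₀ hfe hεpos]
      exact le_of_lt (by rwa [one_div] at heM)

/-- The recursively constructed sequence of (index, vector) pairs. -/
noncomputable def step : (k : ℕ) → ℕ × X := fun k =>
  Classical.choose (P.pick
    ((List.finRange k).map fun j => P.f (step j.1).1)
    (∏ j : Fin k, (1 + max (P.Cx (step j.1).2) 0)))
termination_by k => k
decreasing_by all_goals exact j.2

/-- Index sequence. -/
noncomputable def nn (k : ℕ) : ℕ := (P.step k).1
/-- Vector sequence. -/
noncomputable def e (k : ℕ) : X := (P.step k).2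
/-- Bounds. -/
noncomputable def c (k : ℕ) : ℝ := max (P.Cx (P.e k)) 0
/-- Products of bounds. -/
noncomputable def Q (k : ℕ) : ℝ := ∏ j ∈ Finset.range k, (1 + P.c j)

lemma Q_pos (k : ℕ) : 0 < P.Q k := by
  apply Finset.prod_pos
  intro j _
  have : (0:ℝ) ≤ P.c j := le_max_right _ _
  linarith

lemma one_le_Q (k : ℕ) : 1 ≤ P.Q k := by
  rw [Q]
  calc (1:ℝ) = ∏ _j ∈ Finset.range k, 1 := by simp
  _ ≤ ∏ j ∈ Finset.range k, (1 + P.c j) :=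
    Finset.prod_le_prod (by simp) (fun j _ => le_add_of_nonneg_right (le_max_right _ _))

lemma step_spec (k : ℕ) :
    P.e k ∈ P.B ∧ (∀ j, j < k → P.f (P.nn j) (P.e k) = 0) ∧ P.f (P.nn k) (P.e k) = 1 ∧
      ‖P.e k‖ ≤ (1/2) ^ k / P.Q k := by
  have hQ : (∏ j : Fin k, (1 + max (P.Cx (P.e j.1)) 0)) = P.Q k := by
    rw [Q]
    rw [← Fin.prod_univ_eq_prod_range (fun j => 1 + P.c j) k]
    rfl
  have hstep : P.step k = Classical.choose (P.pick
      ((List.finRange k).map fun j => P.f (P.step j.1).1)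
      (∏ j : Fin k, (1 + max (P.Cx (P.step j.1).2) 0))) := by
    rw [step]
  have hs := Classical.choose_spec (P.pick
      ((List.finRange k).map fun j => P.f (P.step j.1).1)
      (∏ j : Fin k, (1 + max (P.Cx (P.step j.1).2) 0)))
  rw [← hstep] at hs
  obtain ⟨h1, h2, h3, h4⟩ := hs
  refine ⟨h1, ?_, h3, ?_⟩
  · intro j hj
    apply h2
    simp only [List.mem_map]
    exact ⟨⟨j, hj⟩, List.mem_finRange _, rfl⟩
  · have hmax : max (∏ j : Fin k, (1 + max (P.Cx (P.e j.1)) 0)) 1 = P.Q k := by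
      rw [hQ]
      exact max_eq_left (P.one_le_Q k)
    calc ‖P.e k‖ ≤ (1/2) ^ ((List.finRange k).map fun j => P.f (P.step j.1).1).length /
        max (∏ j : Fin k, (1 + max (P.Cx (P.step j.1).2) 0)) 1 := h4
    _ = (1/2) ^ k / P.Q k := by
      rw [List.length_map, List.length_finRange]
      show (1/2:ℝ) ^ k / max (∏ j : Fin k, (1 + max (P.Cx (P.e j.1)) 0)) 1 = _
      rw [hmax]

lemma e_mem (k : ℕ) : P.e k ∈ P.B := (P.step_spec k).1
lemma f_e_eq_zero {j k : ℕ} (h : j < k) : P.f (P.nn j) (P.e k) = 0 := (P.step_spec k).2.1 j h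
lemma f_e_eq_one (k : ℕ) : P.f (P.nn k) (P.e k) = 1 := (P.step_spec k).2.2.1
lemma e_norm (k : ℕ) : ‖P.e k‖ ≤ (1/2) ^ k / P.Q k := (P.step_spec k).2.2.2


/-- Biorthogonalized functionals. -/
noncomputable def g : (k : ℕ) → (X →L[ℝ] ℝ) := fun k =>
  P.f (P.nn k) - ∑ j : Fin k, P.f (P.nn k) (P.e j.1) • g j.1
termination_by k => k
decreasing_by all_goals exact j.2

lemma g_def (k : ℕ) :
    P.g k = P.f (P.nn k) - ∑ j ∈ Finset.range k, P.f (P.nn k) (P.e j) • P.g j := by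
  rw [g]
  congr 1
  rw [← Fin.sum_univ_eq_sum_range (fun j => P.f (P.nn k) (P.e j) • P.g j) k]

lemma g_apply (k : ℕ) (x : X) :
    P.g k x = P.f (P.nn k) x - ∑ j ∈ Finset.range k, P.f (P.nn k) (P.e j) * P.g j x := by
  rw [g_def]
  simp only [ContinuousLinearMap.sub_apply, ContinuousLinearMap.coe_sum',
    Finset.sum_apply, ContinuousLinearMap.coe_smul', Pi.smul_apply, smul_eq_mul]

/-- `g j` kills later vectors. -/
lemma g_e_later {j k : ℕ} (h : j < k) : P.g j (P.e k) = 0 := by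
  induction j using Nat.strong_induction_on with
  | _ j ih =>
    rw [g_apply, P.f_e_eq_zero h]
    rw [Finset.sum_eq_zero, sub_zero]
    intro i hi
    rw [ih i (Finset.mem_range.mp hi) (lt_trans (Finset.mem_range.mp hi) h), mul_zero]

lemma g_e_self (k : ℕ) : P.g k (P.e k) = 1 := by
  rw [g_apply, P.f_e_eq_one]
  rw [Finset.sum_eq_zero, sub_zero]
  intro i hi
  rw [P.g_e_later (Finset.mem_range.mp hi), mul_zero]

/-- `g k` kills earlier vectors. -/
lemma g_e_earlier {j k : ℕ} (h : j < k) : P.g k (P.e j) = 0 := by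
  induction k using Nat.strong_induction_on with
  | _ k ih =>
    rw [g_apply]
    rw [Finset.sum_eq_single j]
    · rw [P.g_e_self, mul_one, sub_self]
    · intro i hi hij
      rcases lt_or_gt_of_ne hij with hlt | hgt
      · rw [P.g_e_later hlt, mul_zero]
      · rw [ih i (Finset.mem_range.mp hi) hgt, mul_zero]
    · intro hj
      exact absurd (Finset.mem_range.mpr h) hj

lemma g_e (j k : ℕ) : P.g k (P.e j) = if j = k then 1 else 0 := by
  rcases lt_trichotomy j k with h | rfl | h
  · rw [P.g_e_earlier h, if_neg (ne_of_lt h)]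
  · rw [P.g_e_self, if_pos rfl]
  · rw [P.g_e_later h, if_neg (ne_of_gt h)]

/-- `g k` vanishes where all relevant `f (nn j)` vanish. -/
lemma g_eq_zero {k : ℕ} {x : X} (h : ∀ j, j ≤ k → P.f (P.nn j) x = 0) : P.g k x = 0 := by
  induction k using Nat.strong_induction_on with
  | _ k ih =>
    rw [g_apply, h k le_rfl]
    rw [Finset.sum_eq_zero, sub_zero]
    intro i hi
    rw [ih i (Finset.mem_range.mp hi)
      (fun j hj => h j (le_trans hj (le_of_lt (Finset.mem_range.mp hi)))), mul_zero]

/-- Telescoping identity. -/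
lemma Q_telescope (k : ℕ) : P.Q k = 1 + ∑ j ∈ Finset.range k, P.c j * P.Q j := by
  induction k with
  | zero => simp [Q]
  | succ k ih =>
    rw [Q, Finset.prod_range_succ, ← Q, Finset.sum_range_succ, ih]
    ring

/-- Pointwise growth bound for `g` on `B`. -/
lemma g_bound {x : X} (hx : x ∈ P.B) (k : ℕ) : |P.g k x| ≤ P.Cx x * P.Q k := by
  induction k using Nat.strong_induction_on with
  | _ k ih =>
    rw [g_apply]
    calc |P.f (P.nn k) x - ∑ j ∈ Finset.range k, P.f (P.nn k) (P.e j) * P.g j x|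
        ≤ |P.f (P.nn k) x| + |∑ j ∈ Finset.range k, P.f (P.nn k) (P.e j) * P.g j x| :=
          abs_sub _ _
    _ ≤ P.Cx x + ∑ j ∈ Finset.range k, P.c j * (P.Cx x * P.Q j) := by
        apply add_le_add (P.abs_le_Cx hx _)
        calc |∑ j ∈ Finset.range k, P.f (P.nn k) (P.e j) * P.g j x|
            ≤ ∑ j ∈ Finset.range k, |P.f (P.nn k) (P.e j) * P.g j x| :=
              Finset.abs_sum_le_sum_abs _ _
        _ ≤ ∑ j ∈ Finset.range k, P.c j * (P.Cx x * P.Q j) := by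
            apply Finset.sum_le_sum
            intro j hj
            rw [abs_mul]
            apply mul_le_mul
            · exact le_trans (P.abs_le_Cx (P.e_mem j) _) (le_max_left _ _)
            · exact ih j (Finset.mem_range.mp hj)
            · exact abs_nonneg _
            · exact le_max_right _ _
    _ = P.Cx x * P.Q k := by
        rw [P.Q_telescope k, mul_add, mul_one, Finset.mul_sum]
        congr 1
        apply Finset.sum_congr rfl
        intro j _
        ring

end PBdata


section Backward

variable {X : Type*} [NormedAddCommGroup X] [NormedSpace ℝ X] [CompleteSpace X]

lemma backward_dir (P : PBdata X) :
    ∃ Y : Submodule ℝ X, IsClosed (Y : Set X) ∧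
      ¬ FiniteDimensional ℝ (X ⧸ Y) ∧ TopologicalSpace.SeparableSpace (X ⧸ Y) := by
  classical
  set Y : Submodule ℝ X := ⨅ k, LinearMap.ker (P.f (P.nn k) : X →ₗ[ℝ] ℝ) with hY
  have hYmem : ∀ x : X, x ∈ Y ↔ ∀ k, P.f (P.nn k) x = 0 := by
    intro x
    simp [hY, Submodule.mem_iInf, LinearMap.mem_ker]
  have hYclosed : IsClosed (Y : Set X) := by
    rw [hY, Submodule.coe_iInf]
    exact isClosed_iInter fun k => ContinuousLinearMap.isClosed_ker _
  -- the quotient map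
  set q : X →L[ℝ] X ⧸ Y := qCLM Y with hq
  -- summability of the expansion of any x ∈ B
  have hsum : ∀ x ∈ P.B, Summable (fun k => P.g k x • P.e k) := by
    intro x hx
    apply Summable.of_norm_bounded (g := fun k => P.Cx x * (1/2) ^ k)
    · exact (summable_geometric_of_lt_one (by norm_num) (by norm_num)).mul_left _
    · intro k
      rw [norm_smul, Real.norm_eq_abs]
      have step1 : |P.g k x| * ‖P.e k‖ ≤ (P.Cx x * P.Q k) * ((1/2) ^ k / P.Q k) :=
        mul_le_mul (P.g_bound hx k) (P.e_norm k) (norm_nonneg _)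
          (mul_nonneg (P.Cx_nonneg hx) (le_of_lt (P.Q_pos k)))
      have step2 : (P.Cx x * P.Q k) * ((1/2) ^ k / P.Q k) = P.Cx x * (1/2) ^ k := by
        have hQ0 : P.Q k ≠ 0 := ne_of_gt (P.Q_pos k)
        field_simp
      rw [← step2]
      exact step1
  -- the expansion lies in the closure, and the remainder is in Y
  have hdecomp : ∀ x ∈ P.B, ∃ s : X,
      HasSum (fun k => P.g k x • P.e k) s ∧ x - s ∈ Y := by
    intro x hx
    refine ⟨∑' k, P.g k x • P.e k, (hsum x hx).hasSum, ?_⟩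
    rw [hYmem]
    intro m
    -- first: g m (x - s) = 0 for every m
    have hg : ∀ m, P.g m (x - (∑' k, P.g k x • P.e k)) = 0 := by
      intro m
      have h1 : HasSum (fun k => P.g m (P.g k x • P.e k)) (P.g m (∑' k, P.g k x • P.e k)) :=
        (P.g m).hasSum (hsum x hx).hasSum
      have h2 : ∀ k, P.g m (P.g k x • P.e k) = if k = m then P.g m x else 0 := by
        intro k
        rw [map_smul, smul_eq_mul, P.g_e k m]
        by_cases h : k = m
        · subst h; simp [P.g_e_self]
        · simp [h]
      have h3 : HasSum (fun k => P.g m (P.g k x • P.e k)) (P.g m x) := by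
        rw [show P.g m x = P.g m (P.g m x • P.e m) by
          rw [map_smul, smul_eq_mul, P.g_e_self, mul_one]]
        apply hasSum_single m
        intro k hk
        rw [h2 k, if_neg hk]
      have := h1.unique h3
      rw [map_sub, this, sub_self]
    -- then f (nn m) (x - s) = 0
    have hfg : P.f (P.nn m) (x - (∑' k, P.g k x • P.e k)) = 0 := by
      set w := x - (∑' k, P.g k x • P.e k) with hw
      have := P.g_apply m w
      rw [hg m] at this
      have h5 : P.f (P.nn m) w = ∑ j ∈ Finset.range m, P.f (P.nn m) (P.e j) * P.g j w := by
        linarith [this]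
      rw [h5]
      apply Finset.sum_eq_zero
      intro j _
      rw [hg j, mul_zero]
    exact hfg
  refine ⟨Y, hYclosed, ?_, ?_⟩
  · -- infinite dimensional quotient
    intro hfin
    have hli : LinearIndependent ℝ (fun k : ℕ => Submodule.Quotient.mk (P.e k) : ℕ → X ⧸ Y) := by
      rw [linearIndependent_iff']
      intro s co hco i hi
      have hmem : (∑ k ∈ s, co k • P.e k) ∈ Y := by
        rw [← Submodule.Quotient.mk_eq_zero]
        rw [← hco]
        simp [← Submodule.mkQ_apply, map_sum, map_smul]
      have hz : P.g i (∑ k ∈ s, co k • P.e k) = 0 :=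
        P.g_eq_zero (fun j _ => (hYmem _).mp hmem j)
      rw [map_sum] at hz
      simp only [map_smul, smul_eq_mul] at hz
      have : ∑ k ∈ s, co k * P.g i (P.e k) = co i := by
        rw [Finset.sum_eq_single i]
        · rw [P.g_e_self, mul_one]
        · intro b _ hb
          rw [P.g_e b i, if_neg hb, mul_zero]
        · intro h; exact absurd hi h
      rw [this] at hz
      exact hz
    exact Module.Finite.not_linearIndependent_of_infinite _ hli
  · -- separability
    set T : Submodule ℝ (X ⧸ Y) := Submodule.span ℝ (Set.range fun k => q (P.e k)) with hT
    have hTsep : TopologicalSpace.IsSeparable (T : Set (X ⧸ Y)) :=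
      (Set.countable_range _).isSeparable.span
    have hTdense : Dense (T : Set (X ⧸ Y)) := by
      -- B ⊆ closure (Y ⊔ S) and q maps into T
      have hBsub : (P.B : Set X) ⊆ q ⁻¹' (closure (T : Set (X ⧸ Y))) := by
        intro x hx
        obtain ⟨s, hs, hxs⟩ := hdecomp x hx
        have hqx : q x = q s := by
          have h0 : q (x - s) = 0 := by
            show qCLM Y (x - s) = 0
            rw [qCLM_apply, Submodule.Quotient.mk_eq_zero]
            exact hxs
          rw [map_sub, sub_eq_zero] at h0
          exact h0
        have hqs : q s ∈ closure (T : Set (X ⧸ Y)) := by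
          have htend : Filter.Tendsto (fun K => ∑ k ∈ Finset.range K, P.g k x • P.e k)
              Filter.atTop (nhds s) := hs.tendsto_sum_nat
          have htq : Filter.Tendsto (fun K => q (∑ k ∈ Finset.range K, P.g k x • P.e k))
              Filter.atTop (nhds (q s)) := (q.continuous.tendsto s).comp htend
          apply mem_closure_of_tendsto htq
          apply Filter.Eventually.of_forall
          intro K
          rw [map_sum]
          apply Submodule.sum_mem
          intro k _
          rw [map_smul]
          exact Submodule.smul_mem _ _ (Submodule.subset_span ⟨k, rfl⟩)
        simpa [Set.mem_preimage, hqx] using hqs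
      have huniv : (Set.univ : Set X) ⊆ q ⁻¹' (closure (T : Set (X ⧸ Y))) := by
        have h1 : closure (P.B : Set X) ⊆ q ⁻¹' (closure (T : Set (X ⧸ Y))) :=
          closure_minimal hBsub (IsClosed.preimage q.continuous isClosed_closure)
        rw [P.dense.closure_eq] at h1
        exact h1
      intro z
      obtain ⟨x, rfl⟩ := Submodule.Quotient.mk_surjective Y z
      have : x ∈ q ⁻¹' (closure (T : Set (X ⧸ Y))) := huniv (Set.mem_univ x)
      simpa [hq] using this
    have hU : TopologicalSpace.IsSeparable (Set.univ : Set (X ⧸ Y)) := by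
      rw [← hTdense.closure_eq]
      exact hTsep.closure
    exact TopologicalSpace.isSeparable_univ_iff.mp hU

end Backward

section Forward

variable {X : Type*} [NormedAddCommGroup X] [NormedSpace ℝ X]

/-- On a closed proper subspace there is a nonzero functional vanishing on it. -/
lemma exists_functional_of_ne_top {Z : Type*} [NormedAddCommGroup Z] [NormedSpace ℝ Z]
    (F : Submodule ℝ Z) (hFc : IsClosed (F : Set Z)) (hF : F ≠ ⊤) :
    ∃ φ : Z →L[ℝ] ℝ, φ ≠ 0 ∧ ∀ y ∈ F, φ y = 0 := by
  haveI := hFc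
  obtain ⟨v, hv⟩ : ∃ v : Z, v ∉ F := by
    by_contra h
    push_neg at h
    exact hF (Submodule.eq_top_iff'.mpr h)
  have hv0 : (Submodule.Quotient.mk v : Z ⧸ F) ≠ 0 := by
    simpa [Submodule.Quotient.mk_eq_zero] using hv
  obtain ⟨g, hg1, hgv⟩ := exists_dual_vector ℝ _ (norm_ne_zero_iff.mpr hv0)
  refine ⟨g.comp (qCLM F), ?_, ?_⟩
  · intro h
    have : g (Submodule.Quotient.mk v) = 0 := by
      have := congrArg (fun ψ => ψ v) h
      simpa using this
    rw [hgv] at this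
    exact hv0 (norm_eq_zero.mp this)
  · intro y hy
    have : (Submodule.Quotient.mk y : Z ⧸ F) = 0 := (Submodule.Quotient.mk_eq_zero F).mpr hy
    simp [this]

lemma forward_dir (Y : Submodule ℝ X) (hYc : IsClosed (Y : Set X))
    (hfd : ¬ FiniteDimensional ℝ (X ⧸ Y)) (hsep : SeparableSpace (X ⧸ Y)) :
    ∃ f : ℕ → (X →L[ℝ] ℝ),
      (∃ D : Submodule ℝ X, Dense (D : Set X) ∧
        ∀ x ∈ D, ∃ C : ℝ, ∀ n, |f n x| ≤ C) ∧
      (∀ C : ℝ, ∃ n, C < ‖f n‖) := by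
  haveI := hYc
  haveI : Nonempty (X ⧸ Y) := ⟨0⟩
  obtain ⟨z, hz⟩ := exists_dense_seq (X ⧸ Y)
  set F : ℕ → Submodule ℝ (X ⧸ Y) := fun k => Submodule.span ℝ (z '' Set.Iio k) with hF
  have hFfin : ∀ k, FiniteDimensional ℝ (F k) := fun k =>
    FiniteDimensional.span_of_finite ℝ ((Set.finite_Iio k).image z)
  have hFne : ∀ k, F k ≠ ⊤ := by
    intro k hk
    refine hfd (Module.finite_def.mpr ⟨((Set.finite_Iio k).image z).toFinset, ?_⟩)
    rw [Set.Finite.coe_toFinset]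
    exact hk
  have hFc : ∀ k, IsClosed ((F k : Submodule ℝ (X ⧸ Y)) : Set (X ⧸ Y)) := fun k =>
    haveI := hFfin k
    (F k).closed_of_finiteDimensional
  -- choose functionals
  have hφ : ∀ k : ℕ, ∃ φ : (X ⧸ Y) →L[ℝ] ℝ, φ ≠ 0 ∧ ∀ y ∈ F k, φ y = 0 :=
    fun k => exists_functional_of_ne_top (F k) (hFc k) (hFne k)
  choose φ hφ0 hφF using hφ
  -- pull back and scale
  set ψ : ℕ → (X →L[ℝ] ℝ) := fun k => (φ k).comp (qCLM Y) with hψ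
  have hψ0 : ∀ k, ψ k ≠ 0 := by
    intro k h
    apply hφ0 k
    ext w
    obtain ⟨x, rfl⟩ := Submodule.Quotient.mk_surjective Y w
    have := congrArg (fun τ => τ x) h
    simpa [hψ] using this
  set f : ℕ → (X →L[ℝ] ℝ) := fun k => ((k : ℝ) / ‖ψ k‖) • ψ k with hf
  have hfnorm : ∀ k, ‖f k‖ = k := by
    intro k
    have h0 : ‖ψ k‖ ≠ 0 := fun h => hψ0 k (norm_eq_zero.mp h)
    have h1 : ‖f k‖ = |(k:ℝ)/‖ψ k‖| * ‖ψ k‖ := by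
      rw [hf]; show ‖((k:ℝ)/‖ψ k‖) • ψ k‖ = _
      rw [show |(k:ℝ)/‖ψ k‖| = ‖(k:ℝ)/‖ψ k‖‖ from (Real.norm_eq_abs _).symm]
      exact norm_smul ((k:ℝ)/‖ψ k‖) (ψ k)
    rw [h1, abs_div, abs_of_nonneg (Nat.cast_nonneg k), abs_of_nonneg (norm_nonneg _)]
    field_simp
  refine ⟨f, ⟨Submodule.comap (qCLM Y).toLinearMap (Submodule.span ℝ (Set.range z)), ?_, ?_⟩, ?_⟩
  · -- density
    rw [Metric.dense_iff]
    intro x ε hε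
    have hd : Dense ((Submodule.span ℝ (Set.range z) : Submodule ℝ (X ⧸ Y)) : Set (X ⧸ Y)) :=
      hz.mono (Submodule.subset_span)
    obtain ⟨d, hd1, hd2⟩ := Metric.dense_iff.mp hd (Submodule.Quotient.mk x) (ε/2) (by linarith)
    -- lift d - mk x
    obtain ⟨u, hu1, hu2⟩ := Submodule.Quotient.norm_mk_lt
      (d - Submodule.Quotient.mk x) (show (0:ℝ) < ε/2 - dist d (Submodule.Quotient.mk x) by
        rw [Metric.mem_ball] at hd1; linarith)
    refine ⟨x + u, ?_, ?_⟩
    · rw [Metric.mem_ball, dist_eq_norm]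
      have : ‖d - Submodule.Quotient.mk x‖ = dist d (Submodule.Quotient.mk x) := by
        rw [dist_eq_norm]
      rw [this] at hu2
      simp only [add_sub_cancel_left]
      linarith
    · simp only [SetLike.mem_coe, Submodule.mem_comap]
      have : (qCLM Y).toLinearMap (x + u) = d := by
        simp only [ContinuousLinearMap.coe_coe, qCLM_apply]
        have : (Submodule.Quotient.mk (x + u) : X ⧸ Y)
            = Submodule.Quotient.mk x + Submodule.Quotient.mk u := by
          simp [Submodule.Quotient.mk_add]
        rw [this, hu1]
        abel
      rw [this]
      exact hd2
  · -- pointwise boundedness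
    intro x hx
    simp only [SetLike.mem_coe, Submodule.mem_comap, ContinuousLinearMap.coe_coe,
      qCLM_apply] at hx
    obtain ⟨t, hts, htx⟩ := Submodule.mem_span_finite_of_mem_span hx
    have hind : ∀ y ∈ t, ∃ i, z i = y := fun y hy => hts hy
    choose ind hindeq using hind
    set K : ℕ := (t.attach.sup fun y => ind y.1 y.2) + 1 with hK
    have htK : (t : Set (X ⧸ Y)) ⊆ z '' Set.Iio K := by
      intro y hy
      refine ⟨ind y hy, ?_, hindeq y hy⟩
      have : ind y hy ≤ t.attach.sup fun p : {y // y ∈ t} => ind p.1 p.2 :=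
        Finset.le_sup (f := fun p : {y // y ∈ t} => ind p.1 p.2) (Finset.mem_attach t ⟨y, hy⟩)
      simpa [hK, Set.mem_Iio, Nat.lt_succ_iff] using this
    have hmem : ∀ n, K ≤ n → (Submodule.Quotient.mk x : X ⧸ Y) ∈ F n := by
      intro n hn
      refine Submodule.span_mono (htK.trans (Set.image_mono ?_)) htx
      intro i hi
      exact lt_of_lt_of_le hi hn
    have hzero : ∀ n, K ≤ n → f n x = 0 := by
      intro n hn
      have : φ n (Submodule.Quotient.mk x) = 0 := hφF n _ (hmem n hn)
      simp [hf, hψ, this]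
    refine ⟨∑ j ∈ Finset.range K, |f j x|, fun n => ?_⟩
    by_cases hn : n < K
    · exact Finset.single_le_sum (f := fun j => |f j x|) (fun i _ => abs_nonneg _)
        (Finset.mem_range.mpr hn)
    · rw [hzero n (le_of_not_gt hn)]
      simp only [abs_zero]
      exact Finset.sum_nonneg fun i _ => abs_nonneg _
  · -- unboundedness
    intro C
    obtain ⟨n, hn⟩ := exists_nat_gt C
    exact ⟨n, by rw [hfnorm]; exact hn⟩


end Forward

theorem separableQuotient_iff_exists_pseudobounded_sequence
    (X : Type*) [NormedAddCommGroup X] [NormedSpace ℝ X] [CompleteSpace X]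
    (hX : ¬ FiniteDimensional ℝ X) :
    HasSeparableQuotient X ↔
      ∃ f : ℕ → (X →L[ℝ] ℝ),
        (∃ D : Submodule ℝ X, Dense (D : Set X) ∧
          ∀ x ∈ D, ∃ C : ℝ, ∀ n, |f n x| ≤ C) ∧
        (∀ C : ℝ, ∃ n, C < ‖f n‖) := by
  constructor
  · rintro ⟨Y, h1, h2, h3⟩
    exact forward_dir Y h1 h2 h3
  · rintro ⟨f, ⟨D, hdense, hbdd⟩, hunbdd⟩
    exact backward_dir ⟨f, D, hdense, hbdd, hunbdd⟩
end

section
/- If a real Banach space X contains an isomorphic copy of ℓ₁, then X has a quotient isomorphic to ℓ₂. -/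
/-- `X` contains an isomorphic copy of `Z`: a continuous linear injection from `Z` into `X`
which is bounded below (an isomorphism onto its image). -/
def ContainsIsomorphicCopy (Z X : Type*) [NormedAddCommGroup Z] [NormedSpace ℝ Z]
    [NormedAddCommGroup X] [NormedSpace ℝ X] : Prop :=
  ∃ f : Z →L[ℝ] X, ∃ c : ℝ, 0 < c ∧ ∀ z : Z, c * ‖z‖ ≤ ‖f z‖

/-- A Banach space `X` has a quotient isomorphic to `Z` iff there exists a surjective
bounded linear operator from `X` onto `Z`. -/
def HasQuotientIsomorphicTo (X Z : Type*) [NormedAddCommGroup X] [NormedSpace ℝ X]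
    [NormedAddCommGroup Z] [NormedSpace ℝ Z] : Prop :=
  ∃ f : X →L[ℝ] Z, Function.Surjective f


noncomputable section
namespace QE12

open Finset

abbrev Om := ℕ → Bool

/-- sign of a boolean -/
def sg (b : Bool) : ℝ := if b then 1 else -1

lemma sg_mul_self (b : Bool) : sg b * sg b = 1 := by cases b <;> simp [sg]

lemma sg_not (b : Bool) : sg (!b) = - sg b := by cases b <;> simp [sg]

lemma abs_sg (b : Bool) : |sg b| = 1 := by cases b <;> simp [sg]

/-- extension of a finite boolean vector by `false`s -/
def ext {N : ℕ} (ε : Fin N → Bool) : Om := fun i => if h : i < N then ε ⟨i, h⟩ else false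

/-- expectation over the uniform measure on the cube of dimension `N` -/
def Exp (N : ℕ) (g : Om → ℝ) : ℝ := (2 ^ N : ℝ)⁻¹ * ∑ ε : Fin N → Bool, g (ext ε)

lemma Exp_congr {N : ℕ} {g h : Om → ℝ} (H : ∀ ε : Fin N → Bool, g (ext ε) = h (ext ε)) :
    Exp N g = Exp N h := by
  unfold Exp; rw [Finset.sum_congr rfl (fun ε _ => H ε)]

lemma Exp_add (N : ℕ) (g h : Om → ℝ) :
    Exp N (fun x => g x + h x) = Exp N g + Exp N h := by
  unfold Exp; rw [Finset.sum_add_distrib]; ring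

lemma Exp_sub (N : ℕ) (g h : Om → ℝ) :
    Exp N (fun x => g x - h x) = Exp N g - Exp N h := by
  unfold Exp; rw [Finset.sum_sub_distrib]; ring

lemma Exp_const_mul (N : ℕ) (c : ℝ) (g : Om → ℝ) :
    Exp N (fun x => c * g x) = c * Exp N g := by
  unfold Exp; rw [← Finset.mul_sum]; ring

lemma Exp_const (N : ℕ) (c : ℝ) : Exp N (fun _ => c) = c := by
  unfold Exp
  rw [Finset.sum_const]
  simp [Finset.card_univ, Fintype.card_fun]

lemma Exp_sum {ι : Type*} (N : ℕ) (s : Finset ι) (F : ι → Om → ℝ) :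
    Exp N (fun x => ∑ i ∈ s, F i x) = ∑ i ∈ s, Exp N (F i) := by
  unfold Exp
  rw [Finset.sum_comm, ← Finset.mul_sum]

lemma Exp_nonneg {N : ℕ} {g : Om → ℝ} (h : ∀ x, 0 ≤ g x) : 0 ≤ Exp N g := by
  unfold Exp
  have : (0:ℝ) ≤ ∑ ε : Fin N → Bool, g (ext ε) :=
    Finset.sum_nonneg (fun ε _ => h _)
  positivity

lemma Exp_mono {N : ℕ} {g h : Om → ℝ} (H : ∀ x, g x ≤ h x) : Exp N g ≤ Exp N h := by
  have := Exp_nonneg (N := N) (g := fun x => h x - g x) (fun x => by simpa using sub_nonneg.mpr (H x))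
  rw [Exp_sub] at this; linarith

lemma Exp_le_const {N : ℕ} {g : Om → ℝ} {C : ℝ} (H : ∀ x, g x ≤ C) : Exp N g ≤ C := by
  have := Exp_mono (N := N) (h := fun _ => C) H
  rwa [Exp_const] at this

lemma ext_lt {N i : ℕ} (h : i < N) (ε : Fin N → Bool) : ext ε i = ε ⟨i, h⟩ := dif_pos h
lemma ext_ge {N i : ℕ} (h : ¬ i < N) (ε : Fin N → Bool) : ext ε i = false := dif_neg h

/-- cylindricity: `g` depends only on the first `N` coordinates -/
def Cyl (N : ℕ) (g : Om → ℝ) : Prop := ∀ x y : Om, (∀ i, i < N → x i = y i) → g x = g y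

def snocEquiv (N : ℕ) : ((Fin N → Bool) × Bool) ≃ (Fin (N+1) → Bool) where
  toFun p := Fin.snoc p.1 p.2
  invFun ε := (Fin.init ε, ε (Fin.last N))
  left_inv p := by simp [Fin.init_snoc, Fin.snoc_last]
  right_inv ε := by simp [Fin.snoc_init_self]

lemma ext_snoc {N : ℕ} (ε : Fin N → Bool) (b : Bool) :
    ext (Fin.snoc ε b) = Function.update (ext ε) N b := by
  funext i
  rcases lt_trichotomy i N with h | h | h
  · have h1 : i < N + 1 := by omega
    rw [Function.update_of_ne (by omega : i ≠ N), ext_lt h1, ext_lt h]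
    have h2 : (⟨i, h1⟩ : Fin (N+1)) = Fin.castSucc ⟨i, h⟩ := rfl
    rw [h2, Fin.snoc_castSucc]
  · subst h
    rw [Function.update_self, ext_lt (Nat.lt_succ_self i)]
    have h2 : (⟨i, Nat.lt_succ_self i⟩ : Fin (i+1)) = Fin.last i := rfl
    rw [h2, Fin.snoc_last]
  · rw [Function.update_of_ne (by omega : i ≠ N), ext_ge (by omega : ¬ i < N + 1),
      ext_ge (by omega : ¬ i < N)]

lemma Exp_succ (N : ℕ) (g : Om → ℝ) :
    Exp (N+1) g
      = Exp N (fun x => (g (Function.update x N true) + g (Function.update x N false)) / 2) := by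
  unfold Exp
  rw [← (snocEquiv N).sum_comp (fun ε => g (ext ε))]
  have key : ∀ p : (Fin N → Bool) × Bool,
      g (ext (snocEquiv N p)) = g (Function.update (ext p.1) N p.2) := by
    intro p; rw [show (snocEquiv N p) = Fin.snoc p.1 p.2 from rfl, ext_snoc]
  rw [Finset.sum_congr rfl (fun p _ => key p)]
  rw [Fintype.sum_prod_type]
  simp only [Fintype.sum_bool]
  rw [Finset.mul_sum, Finset.mul_sum]
  apply Finset.sum_congr rfl
  intro ε _
  rw [pow_succ]
  field_simp

lemma Cyl.mono {N M : ℕ} {g : Om → ℝ} (h : Cyl N g) (hNM : N ≤ M) : Cyl M g :=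
  fun x y hxy => h x y (fun i hi => hxy i (lt_of_lt_of_le hi hNM))

lemma Exp_stable {N : ℕ} {g : Om → ℝ} (hg : Cyl N g) :
    ∀ M, N ≤ M → Exp M g = Exp N g := by
  intro M hM
  induction M, hM using Nat.le_induction with
  | base => rfl
  | succ M hM ih =>
    rw [Exp_succ]
    rw [show (fun x => (g (Function.update x M true) + g (Function.update x M false)) / 2)
        = g from ?_]
    · exact ih
    · funext x
      have h1 : g (Function.update x M true) = g x := by
        apply hg; intro i hi
        exact Function.update_of_ne (by omega) _ _
      have h2 : g (Function.update x M false) = g x := by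
        apply hg; intro i hi
        exact Function.update_of_ne (by omega) _ _
      rw [h1, h2]; ring

/-- flip coordinate `k` -/
def flp (k : ℕ) (x : Om) : Om := Function.update x k (!(x k))

lemma flp_self (k : ℕ) (x : Om) : flp k x k = !(x k) := Function.update_self _ _ _
lemma flp_ne {k i : ℕ} (h : i ≠ k) (x : Om) : flp k x i = x i := Function.update_of_ne h _ _

lemma flp_invol (k : ℕ) : Function.Involutive (flp k) := by
  intro x
  funext i
  by_cases h : i = k
  · subst h; rw [flp_self, flp_self]; simp
  · rw [flp_ne h, flp_ne h]

/-- the flip on the finite cube -/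
noncomputable def flpFin {N : ℕ} (k : ℕ) (hk : k < N) : Equiv.Perm (Fin N → Bool) :=
  Function.Involutive.toPerm (fun ε => fun i => if i = (⟨k, hk⟩ : Fin N) then !(ε i) else ε i)
    (by
      intro ε
      funext i
      by_cases h : i = (⟨k, hk⟩ : Fin N) <;> simp [h])

lemma ext_flpFin {N k : ℕ} (hk : k < N) (ε : Fin N → Bool) :
    ext (flpFin k hk ε) = flp k (ext ε) := by
  funext i
  by_cases hi : i < N
  · rw [ext_lt hi]
    show (if (⟨i, hi⟩ : Fin N) = (⟨k, hk⟩ : Fin N) then !(ε ⟨i, hi⟩) else ε ⟨i, hi⟩) = _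
    by_cases h : i = k
    · subst h
      rw [if_pos rfl, flp_self, ext_lt hi]
    · rw [if_neg (by simp [Fin.ext_iff]; omega), flp_ne h, ext_lt hi]
  · rw [ext_ge hi, flp_ne (by omega), ext_ge hi]

lemma Exp_flip_zero {N k : ℕ} (hk : k < N) {g : Om → ℝ}
    (hodd : ∀ x : Om, g (flp k x) = - g x) : Exp N g = 0 := by
  have h1 : ∑ ε : Fin N → Bool, g (ext ε) = ∑ ε : Fin N → Bool, g (ext (flpFin k hk ε)) :=
    (Equiv.sum_comp (flpFin k hk) (fun ε => g (ext ε))).symm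
  have h2 : ∑ ε : Fin N → Bool, g (ext (flpFin k hk ε)) = - ∑ ε : Fin N → Bool, g (ext ε) := by
    rw [← Finset.sum_neg_distrib]
    exact Finset.sum_congr rfl (fun ε _ => by rw [ext_flpFin, hodd])
  have h3 : ∑ ε : Fin N → Bool, g (ext ε) = 0 := by linarith
  unfold Exp; rw [h3]; ring

end QE12
namespace QE12
open Finset

lemma sg_orth {N k l : ℕ} (hk : k < N) (hl : l < N) :
    Exp N (fun x => sg (x k) * sg (x l)) = if k = l then 1 else 0 := by
  by_cases h : k = l
  · subst h
    rw [if_pos rfl]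
    have e : Exp N (fun x => sg (x k) * sg (x k)) = Exp N (fun _ => 1) :=
      Exp_congr (fun ε => sg_mul_self _)
    rw [e, Exp_const]
  · rw [if_neg h]
    apply Exp_flip_zero hk
    intro x
    have h1 : flp k x k = !(x k) := flp_self k x
    have h2 : flp k x l = x l := flp_ne (Ne.symm h) x
    show sg (flp k x k) * sg (flp k x l) = -(sg (x k) * sg (x l))
    rw [h1, h2, sg_not]; ring

lemma Exp_mul_sg_sum {N : ℕ} (c : ℕ → ℝ) (g : Om → ℝ) :
    Exp N (fun x => g x * ∑ k ∈ range N, c k * sg (x k))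
      = ∑ k ∈ range N, c k * Exp N (fun x => g x * sg (x k)) := by
  have e : ∀ x : Om, g x * ∑ k ∈ range N, c k * sg (x k)
      = ∑ k ∈ range N, c k * (g x * sg (x k)) := by
    intro x; rw [Finset.mul_sum]; exact Finset.sum_congr rfl (fun k _ => by ring)
  rw [show (fun x => g x * ∑ k ∈ range N, c k * sg (x k))
      = (fun x => ∑ k ∈ range N, c k * (g x * sg (x k))) from funext e]
  rw [Exp_sum]
  exact Finset.sum_congr rfl (fun k _ => by rw [Exp_const_mul])

lemma Exp_sq_sum {N : ℕ} (c : ℕ → ℝ) :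
    Exp N (fun x => (∑ k ∈ range N, c k * sg (x k)) ^ 2) = ∑ k ∈ range N, (c k) ^ 2 := by
  have e1 : ∀ x : Om, (∑ k ∈ range N, c k * sg (x k)) ^ 2
      = ∑ k ∈ range N, ∑ l ∈ range N, (c k * c l) * (sg (x k) * sg (x l)) := by
    intro x
    rw [sq, Finset.sum_mul_sum]
    exact Finset.sum_congr rfl (fun k _ => Finset.sum_congr rfl (fun l _ => by ring))
  rw [congrArg (Exp N) (funext e1)]
  rw [Exp_sum]
  have e2 : ∀ k ∈ range N,
      Exp N (fun x => ∑ l ∈ range N, (c k * c l) * (sg (x k) * sg (x l)))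
        = ∑ l ∈ range N, (c k * c l) * (if k = l then (1:ℝ) else 0) := by
    intro k hk
    rw [Exp_sum]
    refine Finset.sum_congr rfl (fun l hl => ?_)
    rw [Exp_const_mul, sg_orth (mem_range.mp hk) (mem_range.mp hl)]
  rw [Finset.sum_congr rfl e2]
  refine Finset.sum_congr rfl (fun k hk => ?_)
  rw [Finset.sum_eq_single k]
  · simp [sq]
  · intro l _ hlk; rw [if_neg (Ne.symm hlk)]; ring
  · intro hk'; exact absurd hk hk'

lemma bessel {N : ℕ} (g : Om → ℝ) :
    ∑ k ∈ range N, (Exp N (fun x => g x * sg (x k))) ^ 2 ≤ Exp N (fun x => (g x) ^ 2) := by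
  have key : Exp N (fun x =>
        (g x - ∑ k ∈ range N, (Exp N (fun y => g y * sg (y k))) * sg (x k)) ^ 2)
      = Exp N (fun x => (g x) ^ 2)
        - ∑ k ∈ range N, (Exp N (fun y => g y * sg (y k))) ^ 2 := by
    have e1 : (fun x => (g x - ∑ k ∈ range N, (Exp N (fun y => g y * sg (y k))) * sg (x k)) ^ 2)
        = (fun x => (g x) ^ 2
            - 2 * (g x * ∑ k ∈ range N, (Exp N (fun y => g y * sg (y k))) * sg (x k))
            + (∑ k ∈ range N, (Exp N (fun y => g y * sg (y k))) * sg (x k)) ^ 2) :=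
      funext (fun x => by ring)
    rw [e1, Exp_add, Exp_sub, Exp_const_mul,
      Exp_mul_sg_sum (fun k => Exp N (fun y => g y * sg (y k))) g,
      Exp_sq_sum (fun k => Exp N (fun y => g y * sg (y k)))]
    simp only [← pow_two]
    ring
  have h0 : 0 ≤ Exp N (fun x =>
      (g x - ∑ k ∈ range N, (Exp N (fun y => g y * sg (y k))) * sg (x k)) ^ 2) :=
    Exp_nonneg (fun x => sq_nonneg _)
  linarith

/-- the Rademacher sum with coefficients `c` -/
def hc (c : ℕ → ℝ) (N : ℕ) (x : Om) : ℝ := ∑ k ∈ range N, c k * sg (x k)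

lemma hc_update (c : ℕ → ℝ) (N : ℕ) (x : Om) (b : Bool) :
    hc c (N+1) (Function.update x N b) = hc c N x + c N * sg b := by
  unfold hc
  rw [Finset.sum_range_succ, Function.update_self]
  congr 1
  refine Finset.sum_congr rfl (fun k hk => ?_)
  rw [Function.update_of_ne (by have := mem_range.mp hk; omega)]

lemma moment2 (c : ℕ → ℝ) (N : ℕ) :
    Exp N (fun x => (hc c N x) ^ 2) = ∑ k ∈ range N, (c k) ^ 2 := Exp_sq_sum c

lemma moment4 (c : ℕ → ℝ) (N : ℕ) :
    Exp N (fun x => (hc c N x) ^ 4) ≤ 3 * (∑ k ∈ range N, (c k) ^ 2) ^ 2 := by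
  induction N with
  | zero =>
    rw [show (fun x => (hc c 0 x) ^ 4) = (fun _ => (0:ℝ)) from
      funext (fun x => by simp [hc])]
    rw [Exp_const]
    simp
  | succ N ih =>
    rw [Exp_succ]
    have e1 : (fun x => ((hc c (N+1) (Function.update x N true)) ^ 4
          + (hc c (N+1) (Function.update x N false)) ^ 4) / 2)
        = (fun x => (hc c N x) ^ 4 + (6 * (c N)^2) * (hc c N x) ^ 2 + (c N)^4) := by
      funext x
      rw [hc_update, hc_update]
      show ((hc c N x + c N * sg true)^4 + (hc c N x + c N * sg false)^4)/2 = _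
      rw [show sg true = 1 from rfl, show sg false = (-1 : ℝ) from rfl]
      ring
    rw [e1, Exp_add, Exp_add, Exp_const, Exp_const_mul, moment2]
    rw [Finset.sum_range_succ]
    nlinarith [ih, sq_nonneg (c N), sq_nonneg (∑ k ∈ range N, (c k)^2),
      Finset.sum_nonneg (fun k (_ : k ∈ range N) => sq_nonneg (c k))]

lemma Exp_CS (N : ℕ) (u v : Om → ℝ) :
    (Exp N (fun x => u x * v x)) ^ 2 ≤ Exp N (fun x => (u x) ^ 2) * Exp N (fun x => (v x) ^ 2) := by
  have h := Finset.sum_mul_sq_le_sq_mul_sq Finset.univ (fun ε : Fin N → Bool => u (ext ε))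
    (fun ε => v (ext ε))
  unfold Exp
  have hq : (0:ℝ) ≤ ((2:ℝ) ^ N)⁻¹ := by positivity
  nlinarith [mul_le_mul_of_nonneg_left h (mul_self_nonneg ((2:ℝ)^N)⁻¹)]

lemma khintchine (c : ℕ → ℝ) (N : ℕ) :
    ∑ k ∈ range N, (c k) ^ 2 ≤ 3 * (Exp N (fun x => |hc c N x|)) ^ 2 := by
  set A := Exp N (fun x => |hc c N x|) with hA
  set B := ∑ k ∈ range N, (c k) ^ 2 with hB
  set D := Exp N (fun x => |hc c N x| ^ 3) with hD
  have hB0 : 0 ≤ B := Finset.sum_nonneg (fun k _ => sq_nonneg _)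
  have hA0 : 0 ≤ A := Exp_nonneg (fun x => abs_nonneg _)
  have hD0 : 0 ≤ D := Exp_nonneg (fun x => pow_nonneg (abs_nonneg _) 3)
  have hC : Exp N (fun x => (hc c N x) ^ 4) ≤ 3 * B ^ 2 := moment4 c N
  -- CS1 : B^2 ≤ A * D
  have cs1 : B ^ 2 ≤ A * D := by
    have h := Exp_CS N (fun x => Real.sqrt |hc c N x|) (fun x => (Real.sqrt |hc c N x|) ^ 3)
    have e1 : (fun x => Real.sqrt |hc c N x| * (Real.sqrt |hc c N x|) ^ 3)
        = (fun x => (hc c N x) ^ 2) := by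
      funext x
      have : Real.sqrt |hc c N x| * (Real.sqrt |hc c N x|) ^ 3
          = ((Real.sqrt |hc c N x|) ^ 2) ^ 2 := by ring
      rw [this, Real.sq_sqrt (abs_nonneg _), sq_abs]
    have e2 : (fun x => (Real.sqrt |hc c N x|) ^ 2) = (fun x => |hc c N x|) := by
      funext x; rw [Real.sq_sqrt (abs_nonneg _)]
    have e3 : (fun x => ((Real.sqrt |hc c N x|) ^ 3) ^ 2) = (fun x => |hc c N x| ^ 3) := by
      funext x
      have : ((Real.sqrt |hc c N x|) ^ 3) ^ 2 = ((Real.sqrt |hc c N x|) ^ 2) ^ 3 := by ring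
      rw [this, Real.sq_sqrt (abs_nonneg _)]
    rw [e1, e2, e3] at h
    rw [moment2] at h
    exact h
  -- CS2 : D^2 ≤ B * Exp h^4
  have cs2 : D ^ 2 ≤ B * (3 * B ^ 2) := by
    have h := Exp_CS N (fun x => |hc c N x|) (fun x => (hc c N x) ^ 2)
    have e1 : (fun x => |hc c N x| * (hc c N x) ^ 2) = (fun x => |hc c N x| ^ 3) := by
      funext x
      rw [← sq_abs]; ring
    have e2 : (fun x => (|hc c N x|) ^ 2) = (fun x => (hc c N x) ^ 2) := by
      funext x; rw [sq_abs]
    have e3 : (fun x => ((hc c N x) ^ 2) ^ 2) = (fun x => (hc c N x) ^ 4) := by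
      funext x; ring
    rw [e1, e2, e3] at h
    rw [moment2] at h
    calc D ^ 2 ≤ B * Exp N (fun x => (hc c N x) ^ 4) := h
      _ ≤ B * (3 * B ^ 2) := mul_le_mul_of_nonneg_left hC hB0
  have h4 : B ^ 4 ≤ A ^ 2 * (3 * B ^ 3) := by
    calc B ^ 4 = (B ^ 2) ^ 2 := by ring
      _ ≤ (A * D) ^ 2 := pow_le_pow_left₀ (sq_nonneg B) cs1 2
      _ = A ^ 2 * D ^ 2 := by ring
      _ ≤ A ^ 2 * (B * (3 * B ^ 2)) := mul_le_mul_of_nonneg_left cs2 (sq_nonneg A)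
      _ = A ^ 2 * (3 * B ^ 3) := by ring
  rcases eq_or_lt_of_le hB0 with heq | hpos
  · rw [← heq]; positivity
  · nlinarith [h4, pow_pos hpos 3]

/-- sign of a real number (value in {−1, 1}) -/
def sgn (t : ℝ) : ℝ := if t < 0 then -1 else 1

lemma sgn_mul (t : ℝ) : sgn t * t = |t| := by
  unfold sgn
  by_cases h : t < 0
  · rw [if_pos h, abs_of_neg h]; ring
  · rw [if_neg h, abs_of_nonneg (not_lt.mp h)]; ring

lemma sgn_sq (t : ℝ) : sgn t * sgn t = 1 := by
  unfold sgn; by_cases h : t < 0 <;> simp [h]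

lemma abs_sgn (t : ℝ) : |sgn t| = 1 := by
  unfold sgn; by_cases h : t < 0 <;> simp [h]

end QE12
namespace QE12
open Finset
open scoped ENNReal InnerProductSpace

abbrev L1 := lp (fun _ : ℕ => ℝ) 1
abbrev L2 := lp (fun _ : ℕ => ℝ) 2

lemma two_toReal : ((2 : ℝ≥0∞)).toReal = (2:ℝ) := by norm_num

lemma rpow_two_norm (x : ℝ) : ‖x‖ ^ ((2:ℝ≥0∞)).toReal = x ^ 2 := by
  rw [two_toReal]
  rw [show (2:ℝ) = ((2:ℕ):ℝ) by norm_num, Real.rpow_natCast]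
  rw [Real.norm_eq_abs, sq_abs]

lemma memℓp_two_of_supp {u : ℕ → ℝ} {m : ℕ} (h : ∀ k, m ≤ k → u k = 0) :
    Memℓp u (2 : ℝ≥0∞) := by
  apply memℓp_gen' (C := ∑ k ∈ range m, ‖u k‖ ^ ((2:ℝ≥0∞)).toReal)
  intro s
  have h1 : ∑ i ∈ s, ‖u i‖ ^ ((2:ℝ≥0∞)).toReal
      = ∑ i ∈ s ∩ range m, ‖u i‖ ^ ((2:ℝ≥0∞)).toReal := by
    refine (Finset.sum_subset (Finset.inter_subset_left) (fun k hk hk' => ?_)).symm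
    have : m ≤ k := by
      by_contra hcon
      exact hk' (Finset.mem_inter.mpr ⟨hk, mem_range.mpr (not_le.mp hcon)⟩)
    rw [h k this, rpow_two_norm]
    norm_num
  rw [h1]
  refine Finset.sum_le_sum_of_subset_of_nonneg Finset.inter_subset_right (fun k _ _ => ?_)
  rw [rpow_two_norm]; exact sq_nonneg _

lemma lp2_norm_le {f : L2} {C : ℝ} (hC : 0 ≤ C)
    (h : ∀ s : Finset ℕ, ∑ k ∈ s, (f k) ^ 2 ≤ C ^ 2) : ‖f‖ ≤ C := by
  apply lp.norm_le_of_forall_sum_le (by rw [two_toReal]; norm_num) hC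
  intro s
  have e1 : ∑ k ∈ s, ‖f k‖ ^ ((2:ℝ≥0∞)).toReal = ∑ k ∈ s, (f k) ^ 2 :=
    Finset.sum_congr rfl (fun k _ => rpow_two_norm _)
  have e2 : C ^ ((2:ℝ≥0∞)).toReal = C ^ 2 := by
    rw [two_toReal, show (2:ℝ) = ((2:ℕ):ℝ) by norm_num, Real.rpow_natCast]
  rw [e1, e2]; exact h s

lemma lp2_inner (f g : L2) : ⟪f, g⟫_ℝ = ∑' k, f k * g k := by
  rw [lp.inner_eq_tsum]
  simp [RCLike.inner_apply, starRingEnd_apply]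
  exact tsum_congr (fun k => mul_comm _ _)

lemma lp2_inner_finsupp {u : ℕ → ℝ} {m : ℕ} (hu : Memℓp u (2:ℝ≥0∞))
    (hsupp : ∀ k, m ≤ k → u k = 0) (g : L2) :
    ⟪(⟨u, hu⟩ : L2), g⟫_ℝ = ∑ k ∈ range m, u k * g k := by
  rw [lp2_inner]
  refine tsum_eq_sum (fun k hk => ?_)
  have : m ≤ k := not_lt.mp (fun h => hk (mem_range.mpr h))
  show u k * g k = 0
  rw [hsupp k this]; ring

end QE12
namespace QE12
open Finset
open scoped ENNReal InnerProductSpace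

/-- countable family of finite rational vectors -/
abbrev CD := Σ m : ℕ, (Fin m → ℚ)

noncomputable def FF : ℕ → CD := (exists_surjective_nat CD).choose

lemma FF_surj : Function.Surjective FF := (exists_surjective_nat CD).choose_spec

/-- a finite rational vector as a real sequence -/
noncomputable def vecOf (d : CD) : ℕ → ℝ := fun k => if h : k < d.1 then ((d.2 ⟨k, h⟩ : ℚ) : ℝ) else 0

lemma vecOf_supp (d : CD) : ∀ k, d.1 ≤ k → vecOf d k = 0 := by
  intro k hk; unfold vecOf; rw [dif_neg (by omega)]

/-- the `n`-th candidate vector, supported in `[0, n]` -/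
noncomputable def cvec (n : ℕ) : ℕ → ℝ := fun k =>
  if (FF n.unpair.1).1 ≤ n then vecOf (FF n.unpair.1) k else 0

lemma cvec_supp (n : ℕ) : ∀ k, n + 1 ≤ k → cvec n k = 0 := by
  intro k hk
  unfold cvec
  by_cases h : (FF n.unpair.1).1 ≤ n
  · rw [if_pos h]; exact vecOf_supp _ k (by omega)
  · rw [if_neg h]

lemma cvec_dense (m : ℕ) (q : Fin m → ℚ) :
    ∃ n : ℕ, m ≤ n + 1 ∧ cvec n = vecOf ⟨m, q⟩ := by
  obtain ⟨i, hi⟩ := FF_surj ⟨m, q⟩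
  refine ⟨Nat.pair i m, ?_, ?_⟩
  · have := Nat.right_le_pair i m; omega
  · have hFF : FF (Nat.unpair (Nat.pair i m)).1 = ⟨m, q⟩ := by rw [Nat.unpair_pair]; exact hi
    funext k
    unfold cvec
    rw [hFF, if_pos (by simpa using Nat.right_le_pair i m)]

/-- the sign functions -/
noncomputable def ff (n : ℕ) : Om → ℝ := fun x => sgn (hc (cvec n) (n + 1) x)

lemma ff_cyl (n : ℕ) : Cyl (n + 1) (ff n) := by
  intro x y hxy
  unfold ff hc
  congr 1
  refine Finset.sum_congr rfl (fun k hk => ?_)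
  rw [hxy k (mem_range.mp hk)]

lemma ff_sq (n : ℕ) (x : Om) : (ff n x) ^ 2 = 1 := by
  rw [sq]; exact sgn_sq _

lemma abs_ff_le (n : ℕ) (x : Om) : |ff n x| ≤ 1 := le_of_eq (abs_sgn _)

/-- coordinates of the candidate vectors `v n` -/
noncomputable def wc (n k : ℕ) : ℝ :=
  if hk : k < n + 1 then Exp (n + 1) (fun x => ff n x * sg (x k)) else 0

lemma wc_supp (n : ℕ) : ∀ k, n + 1 ≤ k → wc n k = 0 := by
  intro k hk; unfold wc; rw [dif_neg (by omega)]

lemma sum_wc_sq_le_one (n : ℕ) (s : Finset ℕ) : ∑ k ∈ s, (wc n k) ^ 2 ≤ 1 := by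
  have h1 : ∑ k ∈ s, (wc n k) ^ 2 ≤ ∑ k ∈ range (n + 1), (wc n k) ^ 2 := by
    have e1 : ∑ k ∈ s, (wc n k) ^ 2 = ∑ k ∈ s ∩ range (n + 1), (wc n k) ^ 2 := by
      refine (Finset.sum_subset Finset.inter_subset_left (fun k hk hk' => ?_)).symm
      have : n + 1 ≤ k := by
        by_contra hcon
        exact hk' (Finset.mem_inter.mpr ⟨hk, mem_range.mpr (not_le.mp hcon)⟩)
      rw [wc_supp n k this]; norm_num
    rw [e1]
    exact Finset.sum_le_sum_of_subset_of_nonneg Finset.inter_subset_right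
      (fun k _ _ => sq_nonneg _)
  have h2 : ∑ k ∈ range (n + 1), (wc n k) ^ 2
      = ∑ k ∈ range (n + 1), (Exp (n + 1) (fun x => ff n x * sg (x k))) ^ 2 := by
    refine Finset.sum_congr rfl (fun k hk => ?_)
    unfold wc; rw [dif_pos (mem_range.mp hk)]
  have h3 := bessel (N := n + 1) (ff n)
  have h4 : Exp (n + 1) (fun x => (ff n x) ^ 2) = 1 := by
    rw [show (fun x => (ff n x) ^ 2) = (fun _ : Om => (1:ℝ)) from funext (ff_sq n), Exp_const]
  calc ∑ k ∈ s, (wc n k) ^ 2 ≤ ∑ k ∈ range (n + 1), (wc n k) ^ 2 := h1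
    _ = _ := h2
    _ ≤ Exp (n + 1) (fun x => (ff n x) ^ 2) := h3
    _ = 1 := h4

noncomputable def vv (n : ℕ) : L2 := ⟨wc n, memℓp_two_of_supp (wc_supp n)⟩

lemma norm_vv_le_one (n : ℕ) : ‖vv n‖ ≤ 1 := by
  apply lp2_norm_le (by norm_num)
  intro s
  have : ((1:ℝ)) ^ 2 = 1 := one_pow 2
  rw [this]
  exact sum_wc_sq_le_one n s

noncomputable def cL2 (n : ℕ) : L2 := ⟨cvec n, memℓp_two_of_supp (cvec_supp n)⟩

lemma inner_cL2_vv (n : ℕ) :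
    0 ≤ ⟪cL2 n, vv n⟫_ℝ ∧
    ∑ k ∈ range (n + 1), (cvec n k) ^ 2 ≤ 3 * (⟪cL2 n, vv n⟫_ℝ) ^ 2 := by
  have e0 : ⟪cL2 n, vv n⟫_ℝ = ∑ k ∈ range (n + 1), cvec n k * wc n k :=
    lp2_inner_finsupp _ (cvec_supp n) (vv n)
  have e1 : ∑ k ∈ range (n + 1), cvec n k * wc n k
      = ∑ k ∈ range (n + 1), cvec n k * Exp (n + 1) (fun x => ff n x * sg (x k)) := by
    refine Finset.sum_congr rfl (fun k hk => ?_)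
    unfold wc; rw [dif_pos (mem_range.mp hk)]
  have e2 : Exp (n + 1) (fun x => ff n x * hc (cvec n) (n + 1) x)
      = ∑ k ∈ range (n + 1), cvec n k * Exp (n + 1) (fun x => ff n x * sg (x k)) :=
    Exp_mul_sg_sum (cvec n) (ff n)
  have e3 : Exp (n + 1) (fun x => ff n x * hc (cvec n) (n + 1) x)
      = Exp (n + 1) (fun x => |hc (cvec n) (n + 1) x|) := by
    refine congrArg (Exp (n+1)) (funext (fun x => ?_))
    exact sgn_mul _
  have hA : ⟪cL2 n, vv n⟫_ℝ = Exp (n + 1) (fun x => |hc (cvec n) (n + 1) x|) := by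
    rw [e0, e1, ← e2, e3]
  constructor
  · rw [hA]; exact Exp_nonneg (fun x => abs_nonneg _)
  · rw [hA]; exact khintchine (cvec n) (n + 1)

end QE12
namespace QE12
open Finset
open scoped ENNReal InnerProductSpace

lemma lp_finsum_coe (m : ℕ) (u : ℕ → ℝ) (k : ℕ) :
    ((∑ i ∈ range m, lp.single 2 i (u i) : L2) : ℕ → ℝ) k = if k < m then u k else 0 := by
  rw [lp.coeFn_sum]
  rw [Finset.sum_apply]
  have e1 : ∀ i ∈ range m, ((lp.single (E := fun _ : ℕ => ℝ) 2 i (u i)) : ℕ → ℝ) k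
      = if k = i then u i else 0 := by
    intro i _
    rw [lp.single_apply]
    by_cases h : k = i
    · rw [Pi.single_apply]
    · rw [Pi.single_apply]
  rw [Finset.sum_congr rfl e1, Finset.sum_ite_eq]
  simp [mem_range]

lemma lp_single_sub (i : ℕ) (a b : ℝ) :
    lp.single (E := fun _ : ℕ => ℝ) 2 i (a - b) = lp.single 2 i a - lp.single 2 i b := by
  apply lp.ext
  funext k
  rw [lp.coeFn_sub, Pi.sub_apply, lp.single_apply, lp.single_apply, lp.single_apply]
  by_cases h : k = i
  · rw [Pi.single_apply, Pi.single_apply, Pi.single_apply, if_pos h, if_pos h, if_pos h]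
  · rw [Pi.single_apply, Pi.single_apply, Pi.single_apply, if_neg h, if_neg h, if_neg h]; ring

lemma exists_cvec_near (y : L2) (η : ℝ) (hη : 0 < η) : ∃ n : ℕ, ‖y - cL2 n‖ < η := by
  have hs : HasSum (fun i : ℕ => lp.single 2 i (y i)) y :=
    lp.hasSum_single (by norm_num) y
  have ht := hs.tendsto_sum_nat
  rw [Metric.tendsto_atTop] at ht
  obtain ⟨m, hm⟩ := ht (η/2) (by positivity)
  have hm' : ‖y - ∑ i ∈ range m, lp.single 2 i (y i)‖ < η/2 := by
    have := hm m (le_refl m)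
    rw [dist_eq_norm, ← norm_neg] at this
    simpa using this
  set δ := η / (2 * (m + 1)) with hδ
  have hδ0 : 0 < δ := by positivity
  have hq : ∀ i : ℕ, ∃ q : ℚ, |y i - (q:ℝ)| < δ := fun i => exists_rat_near _ hδ0
  choose q hq' using hq
  obtain ⟨n, hmn, hcv⟩ := cvec_dense m (fun i => q i)
  refine ⟨n, ?_⟩
  have hc1 : cL2 n = ∑ i ∈ range m, lp.single 2 i ((q i : ℝ)) := by
    apply lp.ext
    funext k
    show cvec n k = _
    rw [hcv, lp_finsum_coe]
    unfold vecOf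
    by_cases h : k < m
    · rw [dif_pos h, if_pos h]
    · rw [dif_neg h, if_neg h]
  have hP : ‖(∑ i ∈ range m, lp.single 2 i (y i) : L2) - cL2 n‖ ≤ m * δ := by
    rw [hc1, ← Finset.sum_sub_distrib]
    have e2 : ∀ i ∈ range m, (lp.single (E := fun _ : ℕ => ℝ) 2 i (y i) - lp.single 2 i ((q i : ℝ)))
        = lp.single 2 i (y i - (q i : ℝ)) := fun i _ => (lp_single_sub i _ _).symm
    rw [Finset.sum_congr rfl e2]
    refine le_trans (norm_sum_le _ _) ?_
    have e3 : ∀ i ∈ range m, ‖lp.single (E := fun _ : ℕ => ℝ) 2 i (y i - (q i : ℝ))‖ ≤ δ := by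
      intro i _
      have := lp.norm_single (E := fun _ : ℕ => ℝ) (p := 2) (by norm_num)
        i (y i - (q i : ℝ))
      rw [this]
      exact le_of_lt (by simpa [Real.norm_eq_abs] using hq' i)
    refine le_trans (Finset.sum_le_sum e3) ?_
    rw [Finset.sum_const, card_range, nsmul_eq_mul]
  have hmδ : (m:ℝ) * δ < η/2 := by
    have hm1 : ((m:ℝ)+1) ≠ 0 := by positivity
    have e : ((m:ℝ)+1) * (η/(2*((m:ℝ)+1))) = η/2 := by field_simp
    calc (m:ℝ)*δ < ((m:ℝ)+1)*δ := by apply mul_lt_mul_of_pos_right (by linarith) hδ0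
      _ = η/2 := by rw [hδ]; exact e
  calc ‖y - cL2 n‖
      = ‖(y - ∑ i ∈ range m, lp.single 2 i (y i))
          + ((∑ i ∈ range m, lp.single 2 i (y i) : L2) - cL2 n)‖ := by
        rw [sub_add_sub_cancel]
    _ ≤ ‖y - ∑ i ∈ range m, lp.single 2 i (y i)‖
          + ‖(∑ i ∈ range m, lp.single 2 i (y i) : L2) - cL2 n‖ := norm_add_le _ _
    _ < η/2 + η/2 := by
        apply add_lt_add_of_lt_of_le hm'
        exact le_trans hP (le_of_lt hmδ)
    _ = η := by ring

lemma norming (y : L2) (hy : y ≠ 0) : ∃ n : ℕ, (2/5) * ‖y‖ ≤ ⟪y, vv n⟫_ℝ := by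
  have hy0 : (0:ℝ) < ‖y‖ := norm_pos_iff.mpr hy
  obtain ⟨n, hn⟩ := exists_cvec_near y (‖y‖/10) (by positivity)
  refine ⟨n, ?_⟩
  have hBc0 : ⟪cL2 n, cL2 n⟫_ℝ = ∑ k ∈ range (n+1), cvec n k * (cL2 n) k :=
    lp2_inner_finsupp _ (cvec_supp n) (cL2 n)
  have hBc : ⟪cL2 n, cL2 n⟫_ℝ = ∑ k ∈ range (n+1), (cvec n k)^2 := by
    rw [hBc0]
    exact Finset.sum_congr rfl (fun k _ => by rw [sq]; rfl)
  have hnormc : ‖cL2 n‖^2 = ∑ k ∈ range (n+1), (cvec n k)^2 := by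
    rw [← real_inner_self_eq_norm_sq, hBc]
  have h9 : (9/10) * ‖y‖ ≤ ‖cL2 n‖ := by
    have h := norm_sub_norm_le y (cL2 n)
    linarith [hn]
  obtain ⟨hA0, hkh⟩ := inner_cL2_vv n
  have hB : (81/100) * ‖y‖^2 ≤ ∑ k ∈ range (n+1), (cvec n k)^2 := by
    rw [← hnormc]
    nlinarith [h9, hy0, norm_nonneg (cL2 n)]
  have hA51 : (51/100) * ‖y‖ ≤ ⟪cL2 n, vv n⟫_ℝ := by
    nlinarith [hB, hkh, hA0, hy0]
  have hsub := inner_sub_left (𝕜 := ℝ) y (cL2 n) (vv n)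
  have hbound : |⟪y - cL2 n, vv n⟫_ℝ| ≤ ‖y - cL2 n‖ * ‖vv n‖ := abs_real_inner_le_norm _ _
  have hvb : ‖y - cL2 n‖ * ‖vv n‖ ≤ (‖y‖/10) * 1 := by
    apply mul_le_mul (le_of_lt hn) (norm_vv_le_one n) (norm_nonneg _) (by positivity)
  have habs := abs_le.mp hbound
  have : ⟪y, vv n⟫_ℝ = ⟪cL2 n, vv n⟫_ℝ + ⟪y - cL2 n, vv n⟫_ℝ := by
    rw [hsub]; ring
  rw [this]
  linarith [habs.1, hvb, hA51]

end QE12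
namespace QE12
open Finset Filter
open scoped ENNReal InnerProductSpace Topology

lemma abs_le_of_sq_le' {r B : ℝ} (h : r ^ 2 ≤ B ^ 2) (hB : 0 ≤ B) : |r| ≤ B := by
  nlinarith [sq_abs r, abs_nonneg r]

section Construction

variable {X : Type*} [NormedAddCommGroup X] [NormedSpace ℝ X]
variable (Φ : ∀ N : ℕ, (Fin N → Bool) → (X →L[ℝ] ℝ))

/-- the approximating operators, coordinatewise -/
noncomputable def rf (N : ℕ) (x : X) (k : ℕ) : ℝ :=
  if k < N then Exp N (fun ω => Φ N (fun i => ω i.val) x * sg (ω k)) else 0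

lemma restr_ext {N : ℕ} (ε : Fin N → Bool) : (fun i : Fin N => ext ε i.val) = ε := by
  funext i
  rw [ext_lt i.isLt]

variable {C : ℝ} (hΦ : ∀ N ε, ‖Φ N ε‖ ≤ C) (hC : 0 ≤ C)

include hΦ hC in
lemma rf_sq_sum_le (N : ℕ) (x : X) (s : Finset ℕ) :
    ∑ k ∈ s, (rf Φ N x k) ^ 2 ≤ (C * ‖x‖) ^ 2 := by
  have h1 : ∑ k ∈ s, (rf Φ N x k) ^ 2 ≤ ∑ k ∈ range N, (rf Φ N x k) ^ 2 := by
    have e1 : ∑ k ∈ s, (rf Φ N x k) ^ 2 = ∑ k ∈ s ∩ range N, (rf Φ N x k) ^ 2 := by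
      refine (Finset.sum_subset Finset.inter_subset_left (fun k hk hk' => ?_)).symm
      have hkN : ¬ k < N := by
        intro hcon
        exact hk' (Finset.mem_inter.mpr ⟨hk, mem_range.mpr hcon⟩)
      unfold rf; rw [if_neg hkN]; norm_num
    rw [e1]
    exact Finset.sum_le_sum_of_subset_of_nonneg Finset.inter_subset_right
      (fun k _ _ => sq_nonneg _)
  have h2 : ∑ k ∈ range N, (rf Φ N x k) ^ 2
      = ∑ k ∈ range N, (Exp N (fun ω => Φ N (fun i => ω i.val) x * sg (ω k))) ^ 2 := by
    refine Finset.sum_congr rfl (fun k hk => ?_)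
    unfold rf; rw [if_pos (mem_range.mp hk)]
  have h3 := bessel (N := N) (fun ω => Φ N (fun i => ω i.val) x)
  have h4 : Exp N (fun ω => (Φ N (fun i => ω i.val) x) ^ 2) ≤ (C * ‖x‖) ^ 2 := by
    apply Exp_le_const
    intro ω
    have hb : |Φ N (fun i => ω i.val) x| ≤ C * ‖x‖ := by
      have hb0 : ‖Φ N (fun i => ω i.val) x‖ ≤ C * ‖x‖ :=
        le_trans ((Φ N (fun i => ω i.val)).le_opNorm x)
          (mul_le_mul_of_nonneg_right (hΦ N _) (norm_nonneg x))
      rwa [Real.norm_eq_abs] at hb0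
    calc (Φ N (fun i => ω i.val) x) ^ 2 = |Φ N (fun i => ω i.val) x| ^ 2 := (sq_abs _).symm
      _ ≤ (C * ‖x‖) ^ 2 := by
          apply pow_le_pow_left₀ (abs_nonneg _) hb
  calc ∑ k ∈ s, (rf Φ N x k) ^ 2 ≤ ∑ k ∈ range N, (rf Φ N x k) ^ 2 := h1
    _ = _ := h2
    _ ≤ Exp N (fun ω => (Φ N (fun i => ω i.val) x) ^ 2) := h3
    _ ≤ (C * ‖x‖) ^ 2 := h4

lemma rf_add (N : ℕ) (x y : X) (k : ℕ) :
    rf Φ N (x + y) k = rf Φ N x k + rf Φ N y k := by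
  unfold rf
  by_cases h : k < N
  · rw [if_pos h, if_pos h, if_pos h, ← Exp_add]
    refine congrArg (Exp N) (funext (fun ω => ?_))
    rw [map_add]; ring
  · rw [if_neg h, if_neg h, if_neg h]; ring

lemma rf_smul (N : ℕ) (t : ℝ) (x : X) (k : ℕ) :
    rf Φ N (t • x) k = t * rf Φ N x k := by
  unfold rf
  by_cases h : k < N
  · rw [if_pos h, if_pos h, ← Exp_const_mul]
    refine congrArg (Exp N) (funext (fun ω => ?_))
    rw [map_smul, smul_eq_mul]; ring
  · rw [if_neg h, if_neg h]; ring

lemma rf_single {xx : ℕ → X}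
    (hval : ∀ (N : ℕ) (ε : Fin N → Bool) (n : ℕ), n < N → Φ N ε (xx n) = ff n (ext ε))
    {n N : ℕ} (hn : n < N) (k : ℕ) :
    rf Φ N (xx n) k = wc n k := by
  unfold rf
  by_cases hk : k < N
  · rw [if_pos hk]
    have e1 : Exp N (fun ω => Φ N (fun i => ω i.val) (xx n) * sg (ω k))
        = Exp N (fun ω => ff n ω * sg (ω k)) := by
      refine Exp_congr (fun ε => ?_)
      rw [show (fun i : Fin N => ext ε i.val) = ε from restr_ext ε]
      rw [hval N ε n hn]
    rw [e1]
    by_cases hkn : k < n + 1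
    · have hcyl : Cyl (n + 1) (fun ω => ff n ω * sg (ω k)) := by
        intro a b hab
        show ff n a * sg (a k) = ff n b * sg (b k)
        rw [ff_cyl n a b hab, hab k hkn]
      rw [Exp_stable hcyl N (by omega)]
      unfold wc; rw [dif_pos hkn]
    · have hodd : ∀ ω : Om, (fun ω => ff n ω * sg (ω k)) (flp k ω)
          = - ((fun ω => ff n ω * sg (ω k)) ω) := by
        intro ω
        show ff n (flp k ω) * sg (flp k ω k) = - (ff n ω * sg (ω k))
        have h1 : ff n (flp k ω) = ff n ω := by
          apply ff_cyl
          intro i hi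
          exact flp_ne (by omega) ω
        rw [h1, flp_self, sg_not]; ring
      rw [Exp_flip_zero hk hodd]
      rw [wc_supp n k (by omega)]
  · rw [if_neg hk]
    rw [wc_supp n k (by omega)]

end Construction
end QE12
namespace QE12
open Finset
open scoped ENNReal InnerProductSpace

lemma abs_ff (n : ℕ) (x : Om) : |ff n x| = 1 := abs_sgn _

section HB
variable {X : Type*} [NormedAddCommGroup X] [NormedSpace ℝ X]

lemma exists_phi (j : L1 →L[ℝ] X) (c : ℝ) (hc : 0 < c) (hj : ∀ z, c * ‖z‖ ≤ ‖j z‖)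
    (N : ℕ) (ε : Fin N → Bool) :
    ∃ g : X →L[ℝ] ℝ, ‖g‖ ≤ c⁻¹ ∧ ∀ n, n < N → g (j (lp.single 1 n 1)) = ff n (ext ε) := by
  have hinj : Function.Injective (j : L1 →ₗ[ℝ] X) := by
    intro a b hab
    have h1 : j (a - b) = 0 := by
      rw [map_sub]
      rw [show j a = j b from hab]
      simp
    have h2 := hj (a - b)
    rw [h1, norm_zero] at h2
    have h3 : ‖a - b‖ ≤ 0 := by
      by_contra hcon
      push_neg at hcon
      nlinarith
    have h4 : a - b = 0 := by
      rwa [← norm_le_zero_iff]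
    rw [← sub_eq_zero]; exact h4
  let G : L1 →ₗ[ℝ] ℝ :=
  { toFun := fun a => ∑ n ∈ range N, ff n (ext ε) * a n
    map_add' := by
      intro a b
      simp only [lp.coeFn_add, Pi.add_apply]
      rw [← Finset.sum_add_distrib]
      exact Finset.sum_congr rfl (fun n _ => by ring)
    map_smul' := by
      intro t a
      simp only [lp.coeFn_smul, Pi.smul_apply, smul_eq_mul, RingHom.id_apply]
      rw [Finset.mul_sum]
      exact Finset.sum_congr rfl (fun n _ => by ring) }
  have hG : ∀ a : L1, |G a| ≤ ‖a‖ := by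
    intro a
    have h1 : |∑ n ∈ range N, ff n (ext ε) * a n| ≤ ∑ n ∈ range N, |ff n (ext ε) * a n| :=
      Finset.abs_sum_le_sum_abs _ _
    have h2 : ∑ n ∈ range N, |ff n (ext ε) * a n| = ∑ n ∈ range N, |a n| := by
      refine Finset.sum_congr rfl (fun n _ => ?_)
      rw [abs_mul, abs_ff, one_mul]
    have h3 := lp.sum_rpow_le_norm_rpow (p := 1) (by norm_num) a (range N)
    simp only [ENNReal.toReal_one, Real.rpow_one] at h3
    have h4 : ∑ n ∈ range N, |a n| ≤ ‖a‖ := by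
      have e : ∑ n ∈ range N, |a n| = ∑ n ∈ range N, ‖a n‖ := by
        refine Finset.sum_congr rfl (fun n _ => (Real.norm_eq_abs _).symm)
      rw [e]; exact h3
    calc |G a| ≤ ∑ n ∈ range N, |ff n (ext ε) * a n| := h1
      _ = ∑ n ∈ range N, |a n| := h2
      _ ≤ ‖a‖ := h4
  let p : Submodule ℝ X := LinearMap.range (j : L1 →ₗ[ℝ] X)
  let e : L1 ≃ₗ[ℝ] p := LinearEquiv.ofInjective (j : L1 →ₗ[ℝ] X) hinj
  let ψ : p →ₗ[ℝ] ℝ := G.comp e.symm.toLinearMap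
  have hψ : ∀ z : p, ‖ψ z‖ ≤ c⁻¹ * ‖(z : X)‖ := by
    intro z
    have hz : j (e.symm z) = (z : X) := by
      have h1 : ((e (e.symm z)) : X) = j (e.symm z) :=
        LinearEquiv.ofInjective_apply (f := (j : L1 →ₗ[ℝ] X)) (h := hinj) (e.symm z)
      rw [e.apply_symm_apply] at h1
      exact h1.symm
    have h2 : ‖e.symm z‖ ≤ c⁻¹ * ‖j (e.symm z)‖ := by
      have h3 := hj (e.symm z)
      have h4 : ‖e.symm z‖ = c⁻¹ * (c * ‖e.symm z‖) := by field_simp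
      rw [h4]
      exact mul_le_mul_of_nonneg_left h3 (by positivity)
    calc ‖ψ z‖ = |G (e.symm z)| := by rw [Real.norm_eq_abs]; rfl
      _ ≤ ‖e.symm z‖ := hG _
      _ ≤ c⁻¹ * ‖j (e.symm z)‖ := h2
      _ = c⁻¹ * ‖(z : X)‖ := by rw [hz]
  let ψc : p →L[ℝ] ℝ := LinearMap.mkContinuous ψ c⁻¹ hψ
  obtain ⟨g, hg_eq, hg_norm⟩ := exists_extension_norm_eq p ψc
  refine ⟨g, ?_, ?_⟩
  · rw [hg_norm]
    exact LinearMap.mkContinuous_norm_le _ (by positivity) _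
  · intro n hn
    have hmem : j (lp.single 1 n 1) ∈ p := ⟨lp.single 1 n 1, rfl⟩
    have h1 : g (j (lp.single 1 n 1)) = ψc ⟨j (lp.single 1 n 1), hmem⟩ :=
      hg_eq ⟨j (lp.single 1 n 1), hmem⟩
    have he : e.symm ⟨j (lp.single 1 n 1), hmem⟩ = lp.single 1 n 1 := by
      apply e.injective
      rw [e.apply_symm_apply]
      apply Subtype.ext
      exact (LinearEquiv.ofInjective_apply (f := (j : L1 →ₗ[ℝ] X)) (h := hinj) (lp.single 1 n 1)).symm
    calc g (j (lp.single 1 n 1)) = ψc ⟨j (lp.single 1 n 1), hmem⟩ := h1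
      _ = G (e.symm ⟨j (lp.single 1 n 1), hmem⟩) := rfl
      _ = G (lp.single 1 n 1) := by rw [he]
      _ = ∑ n' ∈ range N, ff n' (ext ε) * (lp.single 1 n (1:ℝ) : L1) n' := rfl
      _ = ff n (ext ε) := by
          rw [Finset.sum_eq_single n]
          · rw [lp.single_apply_self, mul_one]
          · intro b _ hbn
            rw [lp.single_apply_ne (E := fun _ : ℕ => ℝ) 1 n (1:ℝ) hbn, mul_zero]
          · intro hcon
            exact absurd (mem_range.mpr hn) hcon

end HB
end QE12
namespace QE12
open Finset Filter
open scoped ENNReal InnerProductSpace Topology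

set_option maxHeartbeats 1000000 in
theorem main {X : Type*} [NormedAddCommGroup X] [NormedSpace ℝ X] [CompleteSpace X]
    (j : L1 →L[ℝ] X) (c : ℝ) (hc : 0 < c) (hj : ∀ z, c * ‖z‖ ≤ ‖j z‖) :
    ∃ T : X →L[ℝ] L2, Function.Surjective T := by
  classical
  choose Φ hΦn hΦv using (fun N ε => exists_phi j c hc hj N ε)
  have hCnn : (0:ℝ) ≤ c⁻¹ := by positivity
  set U := Ultrafilter.of (Filter.atTop : Filter ℕ) with hU
  have hUle : (U : Filter ℕ) ≤ Filter.atTop := Ultrafilter.of_le _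
  set Rf : X → ℕ → ℝ := fun x k => limUnder (U : Filter ℕ) (fun N => rf Φ N x k) with hRfdef
  have htd : ∀ (x : X) (k : ℕ),
      Filter.Tendsto (fun N => rf Φ N x k) U (𝓝 (Rf x k)) := by
    intro x k
    have hBnn : (0:ℝ) ≤ c⁻¹ * ‖x‖ := by positivity
    have hmem : ∀ N, rf Φ N x k ∈ Set.Icc (-(c⁻¹ * ‖x‖)) (c⁻¹ * ‖x‖) := by
      intro N
      have h1 : (rf Φ N x k) ^ 2 ≤ (c⁻¹ * ‖x‖) ^ 2 := by
        have h2 := rf_sq_sum_le Φ hΦn hCnn N x {k}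
        simpa using h2
      have h3 := abs_le.mp (abs_le_of_sq_le' h1 hBnn)
      exact ⟨h3.1, h3.2⟩
    have hle : ↑(U.map (fun N => rf Φ N x k))
        ≤ Filter.principal (Set.Icc (-(c⁻¹ * ‖x‖)) (c⁻¹ * ‖x‖)) := by
      rw [Filter.le_principal_iff]
      exact Filter.mem_map.mpr (Filter.univ_mem' (fun N => hmem N))
    obtain ⟨a, _, ha⟩ :=
      (isCompact_Icc (a := -(c⁻¹ * ‖x‖)) (b := c⁻¹ * ‖x‖)).ultrafilter_le_nhds
        (U.map (fun N => rf Φ N x k)) hle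
    have ht : Filter.Tendsto (fun N => rf Φ N x k) U (𝓝 a) := ha
    have : Rf x k = a := ht.limUnder_eq
    rw [this]
    exact ht
  have hRsq : ∀ (x : X) (s : Finset ℕ), ∑ k ∈ s, (Rf x k) ^ 2 ≤ (c⁻¹ * ‖x‖) ^ 2 := by
    intro x s
    have h1 : Filter.Tendsto (fun N => ∑ k ∈ s, (rf Φ N x k) ^ 2) U
        (𝓝 (∑ k ∈ s, (Rf x k) ^ 2)) :=
      tendsto_finset_sum s (fun k _ => (htd x k).pow 2)
    exact le_of_tendsto h1 (Filter.Eventually.of_forall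
      (fun N => rf_sq_sum_le Φ hΦn hCnn N x s))
  have hRadd : ∀ (x y : X) (k : ℕ), Rf (x + y) k = Rf x k + Rf y k := by
    intro x y k
    have h1 := (htd x k).add (htd y k)
    have h2 : Filter.Tendsto (fun N => rf Φ N (x + y) k) U (𝓝 (Rf x k + Rf y k)) := by
      refine Filter.Tendsto.congr (fun N => ?_) h1
      exact (rf_add Φ N x y k).symm
    exact h2.limUnder_eq
  have hRsmul : ∀ (t : ℝ) (x : X) (k : ℕ), Rf (t • x) k = t * Rf x k := by
    intro t x k
    have h1 := (htd x k).const_mul t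
    have h2 : Filter.Tendsto (fun N => rf Φ N (t • x) k) U (𝓝 (t * Rf x k)) := by
      refine Filter.Tendsto.congr (fun N => ?_) h1
      exact (rf_smul Φ N t x k).symm
    exact h2.limUnder_eq
  have hRsingle : ∀ (n k : ℕ), Rf (j (lp.single 1 n 1)) k = wc n k := by
    intro n k
    have hev : ∀ᶠ N in (Filter.atTop : Filter ℕ),
        wc n k = rf Φ N (j (lp.single 1 n 1)) k := by
      refine Filter.eventually_atTop.mpr ⟨n + 1, fun N hN => ?_⟩
      exact (rf_single Φ (xx := fun m => j (lp.single 1 m 1))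
        (fun N' ε' n' hn' => hΦv N' ε' n' hn') (by omega) k).symm
    have h2 : Filter.Tendsto (fun N => rf Φ N (j (lp.single 1 n 1)) k)
        (Filter.atTop) (𝓝 (wc n k)) :=
      Filter.Tendsto.congr' hev tendsto_const_nhds
    exact ((h2.mono_left hUle)).limUnder_eq
  have hRmem : ∀ x : X, Memℓp (Rf x) (2 : ℝ≥0∞) := by
    intro x
    apply memℓp_gen' (C := (c⁻¹ * ‖x‖) ^ 2)
    intro s
    have e1 : ∑ i ∈ s, ‖Rf x i‖ ^ ((2:ℝ≥0∞)).toReal = ∑ i ∈ s, (Rf x i) ^ 2 :=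
      Finset.sum_congr rfl (fun i _ => rpow_two_norm _)
    rw [e1]
    exact hRsq x s
  let Tlin : X →ₗ[ℝ] L2 :=
  { toFun := fun x => (⟨Rf x, hRmem x⟩ : L2)
    map_add' := by
      intro x y
      apply lp.ext
      rw [lp.coeFn_add]
      funext k
      exact hRadd x y k
    map_smul' := by
      intro t x
      apply lp.ext
      rw [lp.coeFn_smul]
      funext k
      simp only [RingHom.id_apply, Pi.smul_apply, smul_eq_mul]
      exact hRsmul t x k }
  let T : X →L[ℝ] L2 := Tlin.mkContinuous c⁻¹ (fun x => by
    apply lp2_norm_le (by positivity)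
    intro s
    show ∑ k ∈ s, (Rf x k) ^ 2 ≤ (c⁻¹ * ‖x‖) ^ 2
    exact hRsq x s)
  have hTsingle : ∀ n : ℕ, T (j (lp.single 1 n 1)) = vv n := by
    intro n
    apply lp.ext
    funext k
    exact hRsingle n k
  refine ⟨T, ?_⟩
  intro y
  have hpick : ∀ z : L2, ∃ n : ℕ, z = 0 ∨ (2/5) * ‖z‖ ≤ ⟪z, vv n⟫_ℝ := by
    intro z
    by_cases hz : z = 0
    · exact ⟨0, Or.inl hz⟩
    · obtain ⟨n, hn⟩ := norming z hz
      exact ⟨n, Or.inr hn⟩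
  choose pk hpk using hpick
  set stp : L2 → L2 := fun z => z - ⟪z, vv (pk z)⟫_ℝ • vv (pk z) with hstp
  have hkey : ∀ z : L2, ‖stp z‖ ≤ (24/25) * ‖z‖ ∧ |⟪z, vv (pk z)⟫_ℝ| ≤ ‖z‖ := by
    intro z
    have habs : |⟪z, vv (pk z)⟫_ℝ| ≤ ‖z‖ := by
      refine le_trans (abs_real_inner_le_norm _ _) ?_
      calc ‖z‖ * ‖vv (pk z)‖ ≤ ‖z‖ * 1 :=
            mul_le_mul_of_nonneg_left (norm_vv_le_one _) (norm_nonneg _)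
        _ = ‖z‖ := mul_one _
    refine ⟨?_, habs⟩
    rcases hpk z with hz0 | hzn
    · rw [hz0]
      show ‖(0:L2) - ⟪(0:L2), vv (pk 0)⟫_ℝ • vv (pk 0)‖ ≤ (24/25) * ‖(0:L2)‖
      rw [inner_zero_left]
      simp
    · have hns := norm_sub_sq_real z (⟪z, vv (pk z)⟫_ℝ • vv (pk z))
      rw [real_inner_smul_right] at hns
      have hnsm : ‖⟪z, vv (pk z)⟫_ℝ • vv (pk z)‖ = |⟪z, vv (pk z)⟫_ℝ| * ‖vv (pk z)‖ := by
        rw [norm_smul, Real.norm_eq_abs]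
      rw [hnsm] at hns
      have hv1 : ‖vv (pk z)‖ ≤ 1 := norm_vv_le_one _
      have hv0 : (0:ℝ) ≤ ‖vv (pk z)‖ := norm_nonneg _
      have hz0 : (0:ℝ) ≤ ‖z‖ := norm_nonneg z
      have hsq : ‖stp z‖ ^ 2 ≤ (21/25) * ‖z‖ ^ 2 := by
        rw [hstp]
        show ‖z - ⟪z, vv (pk z)⟫_ℝ • vv (pk z)‖ ^ 2 ≤ (21/25) * ‖z‖ ^ 2
        rw [hns]
        nlinarith [sq_abs (⟪z, vv (pk z)⟫_ℝ), hzn, hz0, hv0, hv1, sq_nonneg (⟪z, vv (pk z)⟫_ℝ),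
          mul_le_mul hv1 hv1 hv0 zero_le_one, sq_nonneg (‖z‖ - ⟪z, vv (pk z)⟫_ℝ)]
      nlinarith [hsq, norm_nonneg (stp z), hz0]
  set Y : ℕ → L2 := fun i => stp^[i] y with hY
  have hYs : ∀ i, Y (i + 1) = stp (Y i) := fun i => Function.iterate_succ_apply' stp i y
  have hYn : ∀ i, ‖Y i‖ ≤ (24/25) ^ i * ‖y‖ := by
    intro i
    induction i with
    | zero => simp [hY]
    | succ i ih =>
      rw [hYs i]
      calc ‖stp (Y i)‖ ≤ (24/25) * ‖Y i‖ := (hkey (Y i)).1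
        _ ≤ (24/25) * ((24/25) ^ i * ‖y‖) :=
            mul_le_mul_of_nonneg_left ih (by norm_num)
        _ = (24/25) ^ (i + 1) * ‖y‖ := by ring
  set tt : ℕ → ℝ := fun i => ⟪Y i, vv (pk (Y i))⟫_ℝ with htt
  have htn : ∀ i, |tt i| ≤ (24/25) ^ i * ‖y‖ := fun i => le_trans (hkey (Y i)).2 (hYn i)
  set g : ℕ → X := fun i => tt i • (j (lp.single 1 (pk (Y i)) 1)) with hg
  have hjs : ∀ m : ℕ, ‖j (lp.single 1 m 1)‖ ≤ ‖j‖ := by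
    intro m
    calc ‖j (lp.single 1 m 1)‖ ≤ ‖j‖ * ‖lp.single (E := fun _ : ℕ => ℝ) 1 m (1:ℝ)‖ :=
          j.le_opNorm _
      _ = ‖j‖ := by
          rw [show ‖lp.single (E := fun _ : ℕ => ℝ) 1 m ((fun _ : ℕ => (1:ℝ)) m)‖
              = ‖(fun _ : ℕ => (1:ℝ)) m‖ from lp.norm_single (E := fun _ : ℕ => ℝ) (p := 1) (by norm_num) m (1:ℝ)]
          norm_num
  have hsum : Summable g := by
    apply Summable.of_norm_bounded (g := fun i => (‖j‖ * ‖y‖) * (24/25) ^ i)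
    · exact (summable_geometric_of_lt_one (by norm_num) (by norm_num)).mul_left _
    · intro i
      calc ‖g i‖ = |tt i| * ‖j (lp.single 1 (pk (Y i)) 1)‖ := by
            rw [hg]; rw [norm_smul, Real.norm_eq_abs]
        _ ≤ ((24/25) ^ i * ‖y‖) * ‖j‖ := by
            apply mul_le_mul (htn i) (hjs _) (norm_nonneg _) (by positivity)
        _ = (‖j‖ * ‖y‖) * (24/25) ^ i := by ring
  obtain ⟨x, hx⟩ := hsum
  refine ⟨x, ?_⟩
  have hTx : HasSum (fun i => T (g i)) (T x) := hx.mapL T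
  have hTg : (fun i => T (g i)) = fun i => tt i • vv (pk (Y i)) := by
    funext i
    rw [hg]
    show T (tt i • j (lp.single 1 (pk (Y i)) 1)) = _
    rw [map_smul, hTsingle]
  rw [hTg] at hTx
  have hpart : ∀ I : ℕ, y - ∑ i ∈ range I, tt i • vv (pk (Y i)) = Y I := by
    intro I
    induction I with
    | zero => simp [hY]
    | succ I ih =>
      rw [Finset.sum_range_succ, hYs I]
      calc y - (∑ i ∈ range I, tt i • vv (pk (Y i)) + tt I • vv (pk (Y I)))
          = (y - ∑ i ∈ range I, tt i • vv (pk (Y i))) - tt I • vv (pk (Y I)) := by abel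
        _ = Y I - tt I • vv (pk (Y I)) := by rw [ih]
        _ = stp (Y I) := rfl
  have hY0 : Filter.Tendsto Y Filter.atTop (𝓝 0) := by
    apply squeeze_zero_norm hYn
    have h1 := (tendsto_pow_atTop_nhds_zero_of_lt_one
      (by norm_num : (0:ℝ) ≤ 24/25) (by norm_num)).mul_const ‖y‖
    simpa using h1
  have h1 : Filter.Tendsto (fun I => ∑ i ∈ range I, tt i • vv (pk (Y i)))
      Filter.atTop (𝓝 y) := by
    have h2 : (fun I => ∑ i ∈ range I, tt i • vv (pk (Y i))) = fun I => y - Y I := by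
      funext I
      rw [← hpart I]
      abel
    rw [h2]
    have h3 : Filter.Tendsto (fun I : ℕ => y - Y I) Filter.atTop (𝓝 (y - 0)) :=
      Filter.Tendsto.sub tendsto_const_nhds hY0
    rw [sub_zero] at h3
    exact h3
  exact tendsto_nhds_unique hTx.tendsto_sum_nat h1

end QE12

theorem quotient_ell2_of_contains_ell1
    (X : Type*) [NormedAddCommGroup X] [NormedSpace ℝ X] [CompleteSpace X]
    (h : ContainsIsomorphicCopy (lp (fun _ : ℕ => ℝ) 1) X) :
    HasQuotientIsomorphicTo X (lp (fun _ : ℕ => ℝ) 2) := by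
  obtain ⟨j, c, hc, hj⟩ := h
  obtain ⟨T, hT⟩ := QE12.main j c hc hj
  exact ⟨T, hT⟩
end
end

section
/- If X is a real Banach space that is weakly sequentially complete and not reflexive, then X contains an isomorphic copy of ℓ₁. -/
open Filter Topology Classical Metric NormedSpace

noncomputable section NW

/-- first `n` elements cut: `P ∩ [0,n)` as a Finset. -/
def seg (P : Set ℕ) (n : ℕ) : Finset ℕ := (Finset.range n).filter (· ∈ P)

lemma mem_seg {P : Set ℕ} {n m : ℕ} : m ∈ seg P n ↔ m < n ∧ m ∈ P := by
  simp [seg]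

variable (F : Finset ℕ → Prop)

def accepts (M : Set ℕ) (s : Finset ℕ) : Prop :=
  ∀ P : Set ℕ, P ⊆ M → P.Infinite → (∀ m ∈ P, ∀ x ∈ s, x < m) → ∃ n, F (s ∪ seg P n)

def srej (M : Set ℕ) (s : Finset ℕ) : Prop :=
  ∀ M' : Set ℕ, M' ⊆ M → M'.Infinite → ¬ accepts F M' s

def decides (M : Set ℕ) (s : Finset ℕ) : Prop := accepts F M s ∨ srej F M s

variable {F}

lemma accepts_mono {M M' : Set ℕ} {s : Finset ℕ} (h : M' ⊆ M) (ha : accepts F M s) :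
    accepts F M' s := fun P hP => ha P (hP.trans h)

lemma srej_mono {M M' : Set ℕ} {s : Finset ℕ} (h : M' ⊆ M) (ha : srej F M s) :
    srej F M' s := fun P hP => ha P (hP.trans h)

lemma decides_mono {M M' : Set ℕ} {s : Finset ℕ} (h : M' ⊆ M) (ha : decides F M s) :
    decides F M' s := ha.imp (accepts_mono h) (srej_mono h)

lemma accepts_of_F {M : Set ℕ} {s : Finset ℕ} (h : F s) : accepts F M s := by
  intro P _ _ _
  exact ⟨0, by simpa [seg] using h⟩

lemma exists_decides (s : Finset ℕ) (M : Set ℕ) (hM : M.Infinite) :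
    ∃ M' ⊆ M, M'.Infinite ∧ decides F M' s := by
  by_cases h : ∃ M' ⊆ M, M'.Infinite ∧ accepts F M' s
  · obtain ⟨M', h1, h2, h3⟩ := h
    exact ⟨M', h1, h2, Or.inl h3⟩
  · push_neg at h
    exact ⟨M, subset_rfl, hM, Or.inr fun M' h1 h2 => h M' h1 h2⟩

lemma exists_decides_finset (L : Finset (Finset ℕ)) (M : Set ℕ) (hM : M.Infinite) :
    ∃ M' ⊆ M, M'.Infinite ∧ ∀ s ∈ L, decides F M' s := by
  induction L using Finset.induction_on generalizing M with
  | empty => exact ⟨M, subset_rfl, hM, by simp⟩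
  | insert a L' hnot ih =>
    obtain ⟨M1, h1, h2, h3⟩ := exists_decides (F := F) a M hM
    obtain ⟨M2, h4, h5, h6⟩ := ih M1 h2
    refine ⟨M2, h4.trans h1, h5, ?_⟩
    intro s hs
    rcases Finset.mem_insert.mp hs with rfl | hs
    · exact decides_mono h4 h3
    · exact h6 s hs

end NW

/-- generic chain builder -/
lemma exists_chain {α : Type*} (init : α) (R : α → α → Prop) (h : ∀ a, ∃ b, R a b) :
    ∃ f : ℕ → α, f 0 = init ∧ ∀ n, R (f n) (f (n + 1)) := by
  choose g hg using h
  refine ⟨fun n => g^[n] init, rfl, fun n => ?_⟩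
  have : g^[n+1] init = g (g^[n] init) := Function.iterate_succ_apply' g n init
  simpa [this] using hg (g^[n] init)

/-- helper: if a monotone sequence of finsets eventually contains each point of s -/
lemma finset_subset_of_forall_mem {t : ℕ → Finset ℕ} (hmono : ∀ j k, j ≤ k → t j ⊆ t k)
    (s : Finset ℕ) (h : ∀ x ∈ s, ∃ k, x ∈ t k) : ∃ k, s ⊆ t k := by
  induction s using Finset.induction_on with
  | empty => exact ⟨0, by simp⟩
  | insert a s' hnot ih =>
    obtain ⟨k1, hk1⟩ := ih fun x hx => h x (Finset.mem_insert_of_mem hx)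
    obtain ⟨k2, hk2⟩ := h a (Finset.mem_insert_self a s')
    refine ⟨max k1 k2, ?_⟩
    intro x hx
    rcases Finset.mem_insert.mp hx with rfl | hx
    · exact hmono k2 _ (le_max_right _ _) hk2
    · exact hmono k1 _ (le_max_left _ _) (hk1 hx)

section Machine
variable {F : Finset ℕ → Prop}

/-- one fusion step -/
lemma fusion_step (t : Finset ℕ) (M : Set ℕ) (hM : M.Infinite)
    (habove : ∀ x ∈ t, ∀ m ∈ M, x < m) :
    ∃ (n : ℕ) (M' : Set ℕ), n ∈ M ∧ M' ⊆ M ∧ M'.Infinite ∧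
      (∀ x ∈ t ∪ {n}, ∀ m ∈ M', x < m) ∧ (∀ s ⊆ t ∪ {n}, decides F M' s) := by
  have hne : M.Nonempty := hM.nonempty
  set n := sInf M with hn
  have hnM : n ∈ M := Nat.sInf_mem hne
  have hM2 : (M \ {m | m ≤ n}).Infinite := hM.diff (Set.finite_Iic n)
  obtain ⟨M', h1, h2, h3⟩ := exists_decides_finset (F := F) (t ∪ {n}).powerset _ hM2
  refine ⟨n, M', hnM, h1.trans Set.diff_subset, h2, ?_, ?_⟩
  · intro x hx m hm
    have hmM : m ∈ M \ {m | m ≤ n} := h1 hm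
    rcases Finset.mem_union.mp hx with hx | hx
    · exact habove x hx m hmM.1
    · have : x = n := Finset.mem_singleton.mp hx
      subst this
      exact lt_of_not_ge hmM.2
  · intro s hs
    exact h3 s (Finset.mem_powerset.mpr hs)

/-- the decision machine: a strictly monotone sequence `e : ℕ → ℕ` inside `M` such that
    every finite subset of its range is decided by the tail above it. -/
lemma exists_machine (M : Set ℕ) (hM : M.Infinite) :
    ∃ e : ℕ → ℕ, StrictMono e ∧ (∀ k, e k ∈ M) ∧
      ∀ s : Finset ℕ, ↑s ⊆ Set.range e →
        decides F {m ∈ Set.range e | ∀ x ∈ s, x < m} s := by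
  obtain ⟨M0, hM0sub, hM0inf, hM0dec⟩ := exists_decides (F := F) ∅ M hM
  -- state type
  let α := {p : Finset ℕ × Set ℕ // p.2.Infinite ∧ (∀ x ∈ p.1, ∀ m ∈ p.2, x < m) ∧
    ∀ s ⊆ p.1, decides F p.2 s}
  have hstep : ∀ a : α, ∃ b : α, (∃ n ∈ a.val.2, b.val.1 = a.val.1 ∪ {n}) ∧ b.val.2 ⊆ a.val.2 := by
    rintro ⟨⟨t, Mk⟩, hInf, hAb, _hDec⟩
    obtain ⟨n, M', hnM, hsub, hinf, hab, hdec⟩ := fusion_step (F := F) t Mk hInf hAb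
    exact ⟨⟨⟨t ∪ {n}, M'⟩, hinf, hab, hdec⟩, ⟨n, hnM, rfl⟩, hsub⟩
  have hdec0 : ∀ s ⊆ (∅ : Finset ℕ), decides F M0 s := by
    intro s hs
    rw [Finset.subset_empty.mp hs]
    exact hM0dec
  obtain ⟨f, hf0, hfR⟩ := exists_chain (⟨⟨∅, M0⟩, hM0inf, by simp, hdec0⟩ : α) _ hstep
  -- extract data
  set t : ℕ → Finset ℕ := fun k => (f k).val.1 with ht
  set Ms : ℕ → Set ℕ := fun k => (f k).val.2 with hMs
  have ht0 : t 0 = ∅ := by rw [ht]; simp [hf0]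
  have hMs0 : Ms 0 = M0 := by rw [hMs]; simp [hf0]
  choose e he1 he2 using fun k => (hfR k).1
  have hMsub : ∀ k, Ms (k + 1) ⊆ Ms k := fun k => (hfR k).2
  have hMsmono : ∀ j k, j ≤ k → Ms k ⊆ Ms j := fun j k h => antitone_nat_of_succ_le hMsub h
  have htsucc : ∀ k, t (k + 1) = t k ∪ {e k} := he2
  have htmono : ∀ j k, j ≤ k → t j ⊆ t k := fun j k h =>
    monotone_nat_of_le_succ (fun k => by rw [htsucc k]; exact Finset.subset_union_left) h
  have hek : ∀ k, e k ∈ Ms k := he1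
  have hInfk : ∀ k, (Ms k).Infinite := fun k => (f k).property.1
  have hAbk : ∀ k, ∀ x ∈ t k, ∀ m ∈ Ms k, x < m := fun k => (f k).property.2.1
  have hDeck : ∀ k, ∀ s ⊆ t k, decides F (Ms k) s := fun k => (f k).property.2.2
  have hte : ∀ k, t k = (Finset.range k).image e := by
    intro k
    induction k with
    | zero => simp [ht0]
    | succ k ih => rw [htsucc, ih, Finset.range_add_one, Finset.image_insert]
                   ext x; simp [Finset.mem_union, Finset.mem_insert, or_comm]
  have hemem : ∀ k, e k ∈ t (k + 1) := by
    intro k; rw [htsucc]; simp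
  have hmono : StrictMono e := by
    have h1 : ∀ k j, k < j → e k < e j := by
      intro k j hkj
      have h2 : e k ∈ t j := htmono (k+1) j hkj (hemem k)
      exact hAbk j (e k) h2 (e j) (hek j)
    exact fun k j h => h1 k j h
  have heM : ∀ k, e k ∈ M := by
    intro k
    have : Ms k ⊆ M0 := hMs0 ▸ hMsmono 0 k (Nat.zero_le k)
    exact hM0sub (this (hek k))
  refine ⟨e, hmono, heM, ?_⟩
  intro s hs
  -- s finite subset of range e; find minimal k with s ⊆ t k
  have hsk : ∃ k, s ⊆ t k := by
    apply finset_subset_of_forall_mem htmono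
    intro x hx
    obtain ⟨j, rfl⟩ := hs hx
    exact ⟨j + 1, hemem j⟩
  obtain ⟨k, hkspec, hkmin⟩ : ∃ k, s ⊆ t k ∧ ∀ j < k, ¬ s ⊆ t j :=
    ⟨Nat.find hsk, Nat.find_spec hsk, fun j hj => Nat.find_min hsk hj⟩
  have htail : {m ∈ Set.range e | ∀ x ∈ s, x < m} ⊆ Ms k := by
    rintro m ⟨⟨j, rfl⟩, hm2⟩
    -- show e j ∈ Ms k; if j ≥ k fine, else contradiction
    by_cases hjk : k ≤ j
    · exact hMsmono k j hjk (hek j)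
    · push_neg at hjk
      -- j < k, so e j ∈ t k; also e j > all of s. Get contradiction with minimality of k
      exfalso
      have hk0 : k ≠ 0 := by omega
      set k' := k - 1 with hk'
      have hkk : k = k' + 1 := by omega
      have hnotsub : ¬ s ⊆ t k' := hkmin k' (by omega)
      have hsk1 : s ⊆ t (k' + 1) := by rw [← hkk]; exact hkspec
      have hek' : e k' ∈ s := by
        by_contra hne
        apply hnotsub
        intro x hx
        have := hsk1 hx
        rw [htsucc] at this
        rcases Finset.mem_union.mp this with h | h
        · exact h
        · exact absurd (Finset.mem_singleton.mp h ▸ hx) hne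
      have h1 : e k' < e j := hm2 (e k') hek'
      have h2 : e j ≤ e k' := hmono.le_iff_le.mpr (by omega)
      omega
  exact decides_mono htail (hDeck k s hkspec)

end Machine

section NWmain
variable {F : Finset ℕ → Prop}

theorem nashWilliams (F : Finset ℕ → Prop) (M : Set ℕ) (hM : M.Infinite) :
    ∃ N : Set ℕ, N ⊆ M ∧ N.Infinite ∧
      ((∀ s : Finset ℕ, ↑s ⊆ N → ¬ F s) ∨
       (∀ P : Set ℕ, P ⊆ N → P.Infinite → ∃ n, F (seg P n))) := by
  obtain ⟨e, hemono, heM, hdec⟩ := exists_machine (F := F) M hM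
  set Nstar : Set ℕ := Set.range e with hNstar
  have hNstarM : Nstar ⊆ M := by rintro _ ⟨k, rfl⟩; exact heM k
  have hNstarInf : Nstar.Infinite := Set.infinite_range_of_injective hemono.injective
  -- Tail of a finite set within Nstar
  set Tail : Finset ℕ → Set ℕ := fun s => {m ∈ Nstar | ∀ x ∈ s, x < m} with hTail
  have hTailNstar : ∀ s, Tail s ⊆ Nstar := fun s m hm => hm.1
  have hTailInf : ∀ s, (Tail s).Infinite := by
    intro s
    have : Nstar \ {m | m ≤ s.sup id} ⊆ Tail s := by
      rintro m ⟨hm1, hm2⟩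
      refine ⟨hm1, fun x hx => ?_⟩
      have : x ≤ s.sup id := Finset.le_sup (f := id) hx
      simp only [Set.mem_setOf_eq, not_le] at hm2
      omega
    exact ((hNstarInf.diff (Set.finite_Iic _)).mono this)
  have hTailMono : ∀ s s' : Finset ℕ, s ⊆ s' → Tail s' ⊆ Tail s := by
    intro s s' hss m hm
    exact ⟨hm.1, fun x hx => hm.2 x (hss hx)⟩
  by_cases hacc : accepts F Nstar ∅
  · -- second alternative
    refine ⟨Nstar, hNstarM, hNstarInf, Or.inr ?_⟩
    intro P hP hPinf
    obtain ⟨n, hn⟩ := hacc P hP hPinf (by simp)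
    exact ⟨n, by simpa using hn⟩
  · -- strong rejection of ∅ on Nstar
    have hsrej0 : srej F Nstar ∅ := by
      have := hdec ∅ (by simp)
      have hTe : Tail ∅ = Nstar := by ext m; simp [hTail]
      rw [show {m ∈ Set.range e | ∀ x ∈ (∅ : Finset ℕ), x < m} = Tail ∅ from rfl, hTe] at this
      exact this.resolve_left hacc
    -- SR property
    set SR : Finset ℕ → Prop := fun s => ∀ M' ⊆ Tail s, M'.Infinite → ¬ accepts F M' s with hSR
    have hSR0 : SR ∅ := by
      intro M' hM' hM'inf
      exact hsrej0 M' (hM'.trans (hTailNstar ∅)) hM'inf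
    -- Bad sets are finite
    have hBadFin : ∀ s : Finset ℕ, ↑s ⊆ Nstar → SR s →
        {m ∈ Tail s | ¬ SR (s ∪ {m})}.Finite := by
      intro s hsN hSRs
      by_contra hinf
      rw [← Set.not_infinite, not_not] at hinf
      set P := {m ∈ Tail s | ¬ SR (s ∪ {m})} with hP
      have hPTail : P ⊆ Tail s := fun m hm => hm.1
      -- every m in P: the tail of s ∪ {m} accepts s ∪ {m}
      have hPacc : ∀ m ∈ P, accepts F (Tail (s ∪ {m})) (s ∪ {m}) := by
        rintro m ⟨hm1, hm2⟩
        have hsubN : ↑(s ∪ {m}) ⊆ Nstar := by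
          intro x hx
          rcases Finset.mem_union.mp hx with h | h
          · exact hsN h
          · rw [Finset.mem_singleton.mp h]; exact hm1.1
        have hd := hdec (s ∪ {m}) hsubN
        rw [show {x ∈ Set.range e | ∀ y ∈ s ∪ {m}, y < x} = Tail (s ∪ {m}) from rfl] at hd
        rcases hd with h | h
        · exact h
        · exfalso; apply hm2
          intro M' hM' hM'inf
          exact h M' hM' hM'inf
      -- P accepts s, contradiction with SR s
      apply hSRs P hPTail hinf
      intro Q hQP hQinf habove
      have hQne : Q.Nonempty := hQinf.nonempty
      set m := sInf Q with hm
      have hmQ : m ∈ Q := Nat.sInf_mem hQne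
      have hmP : m ∈ P := hQP hmQ
      set Q' := Q \ {m} with hQ'
      have hQ'sub : Q' ⊆ Tail (s ∪ {m}) := by
        rintro q ⟨hq1, hq2⟩
        simp only [Set.mem_singleton_iff] at hq2
        have hqP : q ∈ P := hQP hq1
        refine ⟨hqP.1.1, fun x hx => ?_⟩
        rcases Finset.mem_union.mp hx with h | h
        · exact habove q hq1 x h
        · rw [Finset.mem_singleton.mp h]
          have : m ≤ q := Nat.sInf_le hq1
          omega
      have hQ'inf : Q'.Infinite := hQinf.diff (Set.finite_singleton m)
      have hQ'above : ∀ q ∈ Q', ∀ x ∈ s ∪ {m}, x < q := by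
        intro q hq x hx
        exact (hQ'sub hq).2 x hx
      obtain ⟨n, hn⟩ := hPacc m hmP Q' hQ'sub hQ'inf hQ'above
      refine ⟨max n (m + 1), ?_⟩
      have hset : (s ∪ {m}) ∪ seg Q' n = s ∪ seg Q (max n (m + 1)) := by
        ext y
        simp only [Finset.mem_union, Finset.mem_singleton, mem_seg, hQ', Set.mem_diff,
          Set.mem_singleton_iff]
        constructor
        · rintro ((h | rfl) | ⟨hy1, hy2, hy3⟩)
          · exact Or.inl h
          · exact Or.inr ⟨by omega, hmQ⟩
          · exact Or.inr ⟨by omega, hy2⟩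
        · rintro (h | ⟨hy1, hy2⟩)
          · exact Or.inl (Or.inl h)
          · by_cases hym : y = m
            · exact Or.inl (Or.inr hym)
            · have : m ≤ y := Nat.sInf_le hy2
              have hym' : m < y := by omega
              refine Or.inr ⟨?_, hy2, hym⟩
              rcases le_or_gt n (m+1) with h' | h'
              · omega
              · omega
      rw [hset] at hn
      exact hn
    -- build the final chain
    set β := {u : Finset ℕ // ↑u ⊆ Nstar ∧ ∀ s ⊆ u, SR s} with hβ
    have hstep2 : ∀ a : β, ∃ b : β, ∃ m ∈ Tail a.val, b.val = a.val ∪ {m} := by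
      rintro ⟨u, huN, huSR⟩
      -- collect bad sets over all subsets of u
      have hBig : {m ∈ Tail u | ∃ s ⊆ u, ¬ SR (s ∪ {m})}.Finite := by
        have hsub : {m ∈ Tail u | ∃ s ⊆ u, ¬ SR (s ∪ {m})} ⊆
            ⋃ s ∈ u.powerset, {m ∈ Tail s | ¬ SR (s ∪ {m})} := by
          rintro m ⟨hm1, s, hs, hm2⟩
          exact Set.mem_biUnion (Finset.mem_coe.mpr (Finset.mem_powerset.mpr hs))
            ⟨hTailMono s u hs hm1, hm2⟩
        refine Set.Finite.subset ?_ hsub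
        apply Set.Finite.biUnion (Set.finite_mem_finset _)
        intro s hs
        exact hBadFin s (fun x hx => huN (Finset.mem_powerset.mp hs hx)) (huSR s (Finset.mem_powerset.mp hs))
      have : (Tail u \ {m ∈ Tail u | ∃ s ⊆ u, ¬ SR (s ∪ {m})}).Infinite :=
        (hTailInf u).diff hBig
      obtain ⟨m, hm⟩ := this.nonempty
      have hmT : m ∈ Tail u := hm.1
      have hmgood : ∀ s ⊆ u, SR (s ∪ {m}) := by
        intro s hs
        by_contra hbad
        exact hm.2 ⟨hm.1, s, hs, hbad⟩
      refine ⟨⟨u ∪ {m}, ?_, ?_⟩, m, hmT, rfl⟩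
      · intro x hx
        rcases Finset.mem_union.mp hx with h | h
        · exact huN h
        · rw [Finset.mem_singleton.mp h]; exact hmT.1
      · intro s hs
        by_cases hms : m ∈ s
        · have : s = (s.erase m) ∪ {m} := by
            ext x
            simp only [Finset.mem_union, Finset.mem_erase, Finset.mem_singleton]
            constructor
            · intro h; by_cases hxm : x = m
              · exact Or.inr hxm
              · exact Or.inl ⟨hxm, h⟩
            · rintro (⟨_, h⟩ | rfl) <;> [exact h; exact hms]
          rw [this]
          apply hmgood
          intro x hx
          have hxs : x ∈ s := Finset.mem_of_mem_erase hx
          have := hs hxs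
          rcases Finset.mem_union.mp this with h | h
          · exact h
          · exact absurd (Finset.mem_singleton.mp h) (Finset.ne_of_mem_erase hx)
        · apply huSR
          intro x hx
          have := hs hx
          rcases Finset.mem_union.mp this with h | h
          · exact h
          · exact absurd (Finset.mem_singleton.mp h ▸ hx) hms
      -- done step2
    obtain ⟨g, hg0, hgR⟩ := exists_chain (⟨∅, by simp, fun s hs => by
      rw [Finset.subset_empty.mp hs]; exact hSR0⟩ : β) _ hstep2
    set u : ℕ → Finset ℕ := fun k => (g k).val with hu
    choose mm hmm1 hmm2 using fun k => hgR k
    have husucc : ∀ k, u (k+1) = u k ∪ {mm k} := hmm2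
    have humono : ∀ j k, j ≤ k → u j ⊆ u k := fun j k h =>
      monotone_nat_of_le_succ (fun k => by rw [husucc k]; exact Finset.subset_union_left) h
    have hmmN : ∀ k, mm k ∈ Nstar := fun k => (hmm1 k).1
    have hmmTail : ∀ k, mm k ∈ Tail (u k) := hmm1
    have hmmmem : ∀ k, mm k ∈ u (k+1) := by intro k; rw [husucc]; simp
    have hmmmono : StrictMono mm := by
      intro j k hjk
      have h1 : mm j ∈ u k := humono (j+1) k hjk (hmmmem j)
      exact (hmmTail k).2 (mm j) h1
    refine ⟨Set.range mm, ?_, Set.infinite_range_of_injective hmmmono.injective, Or.inl ?_⟩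
    · rintro _ ⟨k, rfl⟩; exact hNstarM (hmmN k)
    · intro s hs hFs
      have hsu : ∃ k, s ⊆ u k := by
        apply finset_subset_of_forall_mem humono
        intro x hx
        obtain ⟨j, rfl⟩ := hs hx
        exact ⟨j + 1, hmmmem j⟩
      obtain ⟨k, hk⟩ := hsu
      have hSRs : SR s := (g k).property.2 s hk
      exact hSRs (Tail s) subset_rfl (hTailInf s) (accepts_of_F hFs)

end NWmain


lemma exists_chain_dep {α : Type*} (init : α) (R : ℕ → α → α → Prop)
    (h : ∀ n a, ∃ b, R n a b) :
    ∃ f : ℕ → α, f 0 = init ∧ ∀ n, R n (f n) (f (n + 1)) := by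
  obtain ⟨g, hg0, hgR⟩ := exists_chain ((0, init) : ℕ × α)
    (fun p q => q.1 = p.1 + 1 ∧ R p.1 p.2 q.2)
    (fun p => by obtain ⟨b, hb⟩ := h p.1 p.2; exact ⟨(p.1 + 1, b), rfl, hb⟩)
  have hfst : ∀ n, (g n).1 = n := by
    intro n
    induction n with
    | zero => rw [hg0]
    | succ n ih => rw [(hgR n).1, ih]
  refine ⟨fun n => (g n).2, by simp [hg0], fun n => ?_⟩
  have := (hgR n).2
  rwa [hfst n] at this

section StepA
variable {X : Type*} [NormedAddCommGroup X] [NormedSpace ℝ X]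

/-- oscillation of `x` over `M` with parameters -/
def Osc (x : ℕ → X) (K r sb : ℝ) (M : Set ℕ) : Prop :=
  ∃ t : X →L[ℝ] ℝ, ‖t‖ ≤ K ∧ {m ∈ M | t (x m) < r}.Infinite ∧ {m ∈ M | sb < t (x m)}.Infinite

lemma osc_mono {x : ℕ → X} {K r sb : ℝ} {M M' : Set ℕ} (hsub : M' ⊆ M)
    (hfin : (M \ M').Finite) (h : Osc x K r sb M) : Osc x K r sb M' := by
  obtain ⟨t, h1, h2, h3⟩ := h
  refine ⟨t, h1, ?_, ?_⟩
  · have : {m ∈ M | t (x m) < r} \ (M \ M') ⊆ {m ∈ M' | t (x m) < r} := by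
      rintro m ⟨⟨h4, h5⟩, h6⟩
      exact ⟨by simp only [Set.mem_diff] at h6; tauto, h5⟩
    exact ((h2.diff hfin).mono this)
  · have : {m ∈ M | sb < t (x m)} \ (M \ M') ⊆ {m ∈ M' | sb < t (x m)} := by
      rintro m ⟨⟨h4, h5⟩, h6⟩
      exact ⟨by simp only [Set.mem_diff] at h6; tauto, h5⟩
    exact ((h3.diff hfin).mono this)

lemma stepA (x : ℕ → X) (C : ℝ) (hbd : ∀ n, ‖x n‖ ≤ C)
    (hdiv : ∀ M : Set ℕ, M.Infinite → ∃ f : X →L[ℝ] ℝ,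
        ¬ ∃ l : ℝ, Tendsto (fun k => f (x (Nat.nth (· ∈ M) k))) atTop (𝓝 l)) :
    ∃ (M₀ : Set ℕ) (K r sb : ℝ), M₀.Infinite ∧ 0 < K ∧ r < sb ∧
      ∀ M, M ⊆ M₀ → M.Infinite → Osc x K r sb M := by
  by_contra hcon
  push_neg at hcon
  -- enumerate rational triples
  obtain ⟨τ, hτ⟩ := exists_surjective_nat (ℚ × ℚ × ℕ)
  -- chain of decreasing infinite sets
  set good : ℚ × ℚ × ℕ → Prop := fun q => 0 < q.2.2 ∧ (q.1 : ℝ) < (q.2.1 : ℝ) with hgood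
  have hstep : ∀ (k : ℕ) (a : {M : Set ℕ // M.Infinite}),
      ∃ b : {M : Set ℕ // M.Infinite}, b.val ⊆ a.val ∧
        (good (τ k) → ¬ Osc x (τ k).2.2 (τ k).1 (τ k).2.1 b.val) := by
    intro k a
    by_cases hg : good (τ k)
    · obtain ⟨M, hM1, hM2, hM3⟩ := hcon a.val ((τ k).2.2 : ℝ) ((τ k).1 : ℝ) ((τ k).2.1 : ℝ)
        a.property (by exact_mod_cast hg.1) hg.2
      exact ⟨⟨M, hM2⟩, hM1, fun _ => hM3⟩
    · exact ⟨a, subset_rfl, fun h => absurd h hg⟩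
  obtain ⟨Ms, hMs0, hMsR⟩ := exists_chain_dep (⟨Set.univ, Set.infinite_univ⟩ :
    {M : Set ℕ // M.Infinite}) _ hstep
  have hMsdec : ∀ j k, j ≤ k → (Ms k).val ⊆ (Ms j).val := fun j k h =>
    Set.le_iff_subset.mp (antitone_nat_of_succ_le (f := fun n => (Ms n).val)
      (fun n => Set.le_iff_subset.mpr (hMsR n).1) h)
  -- diagonal sequence
  have hdiag : ∀ (k : ℕ) (a : ℕ), ∃ b : ℕ, a < b ∧ b ∈ (Ms (k + 1)).val := by
    intro k a
    obtain ⟨b, hb1, hb2⟩ := (Ms (k + 1)).property.exists_gt a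
    exact ⟨b, hb2, hb1⟩
  obtain ⟨nn, hnn0, hnnR⟩ := exists_chain_dep (sInf (Ms 0).val) _ hdiag
  have hnnmono : StrictMono nn := strictMono_nat_of_lt_succ (fun n => (hnnR n).1)
  have hnnmem : ∀ k, nn k ∈ (Ms k).val := by
    intro k
    cases k with
    | zero => rw [hnn0]; exact Nat.sInf_mem (Ms 0).property.nonempty
    | succ k => exact (hnnR k).2
  set D : Set ℕ := Set.range nn with hD
  have hDinf : D.Infinite := Set.infinite_range_of_injective hnnmono.injective
  -- D is almost contained in each Ms k
  have hDfin : ∀ k, (D \ (Ms k).val).Finite := by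
    intro k
    have : D \ (Ms k).val ⊆ nn '' {j | j < k} := by
      rintro _ ⟨⟨j, rfl⟩, hm2⟩
      by_cases hjk : k ≤ j
      · exact absurd (hMsdec k j hjk (hnnmem j)) hm2
      · exact ⟨j, by simp only [Set.mem_setOf_eq]; omega, rfl⟩
    exact Set.Finite.subset ((Set.finite_Iio k).image nn) this
  -- no good triple oscillates on D
  have hnoosc : ∀ q : ℚ × ℚ × ℕ, good q → ¬ Osc x (q.2.2 : ℝ) (q.1 : ℝ) (q.2.1 : ℝ) D := by
    intro q hq hOsc
    obtain ⟨k, rfl⟩ := hτ q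
    have hsub : D ∩ (Ms (k+1)).val ⊆ (Ms (k+1)).val := Set.inter_subset_right
    have hOsc2 : Osc x ((τ k).2.2 : ℝ) ((τ k).1 : ℝ) ((τ k).2.1 : ℝ) (D ∩ (Ms (k+1)).val) := by
      apply osc_mono (Set.inter_subset_left) _ hOsc
      have : D \ (D ∩ (Ms (k+1)).val) ⊆ D \ (Ms (k+1)).val := by
        rintro m ⟨hm1, hm2⟩
        exact ⟨hm1, fun h => hm2 ⟨hm1, h⟩⟩
      exact Set.Finite.subset (hDfin (k+1)) this
    -- but Ms (k+1) doesn't oscillate, and oscillation is monotone under subsets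
    apply (hMsR k).2 hq
    obtain ⟨t, h1, h2, h3⟩ := hOsc2
    exact ⟨t, h1, h2.mono (fun m hm => ⟨hsub hm.1, hm.2⟩), h3.mono (fun m hm => ⟨hsub hm.1, hm.2⟩)⟩
  -- now apply hdiv to D
  obtain ⟨f, hf⟩ := hdiv D hDinf
  set u : ℕ → ℝ := fun k => f (x (Nat.nth (· ∈ D) k)) with hu
  have hDinf' : {n | (fun m => m ∈ D) n}.Infinite := by simpa using hDinf
  have hub : ∀ k, |u k| ≤ ‖f‖ * C := by
    intro k
    calc |u k| ≤ ‖f‖ * ‖x (Nat.nth (· ∈ D) k)‖ := f.le_opNorm _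
    _ ≤ ‖f‖ * C := by
        apply mul_le_mul_of_nonneg_left (hbd _) (norm_nonneg f)
  have hbdd1 : IsBoundedUnder (· ≤ ·) atTop u :=
    Filter.isBoundedUnder_of ⟨‖f‖ * C, fun k => (abs_le.mp (hub k)).2⟩
  have hbdd2 : IsBoundedUnder (· ≥ ·) atTop u :=
    Filter.isBoundedUnder_of ⟨-(‖f‖ * C), fun k => (abs_le.mp (hub k)).1⟩
  have hlim : liminf u atTop < limsup u atTop := by
    rcases lt_or_ge (liminf u atTop) (limsup u atTop) with h | h
    · exact h
    · exfalso
      have heq : liminf u atTop = limsup u atTop :=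
        le_antisymm (liminf_le_limsup hbdd1 hbdd2) h
      exact hf ⟨limsup u atTop, tendsto_of_liminf_eq_limsup heq rfl hbdd1 hbdd2⟩
  obtain ⟨r, hr1, hr2⟩ := exists_rat_btwn hlim
  obtain ⟨sb, hsb1, hsb2⟩ := exists_rat_btwn hr2
  set K : ℕ := ⌈‖f‖⌉₊ + 1 with hK
  have hKf : ‖f‖ ≤ (K : ℝ) := by
    calc ‖f‖ ≤ (⌈‖f‖⌉₊ : ℝ) := Nat.le_ceil _
    _ ≤ (K : ℝ) := by exact_mod_cast Nat.le_succ _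
  apply hnoosc (r, sb, K) ⟨Nat.succ_pos _, hsb1⟩
  refine ⟨f, hKf, ?_, ?_⟩
  · -- {m ∈ D | f (x m) < r} infinite
    have hfreq : {k | u k < (r : ℝ)}.Infinite := by
      rw [← Nat.frequently_atTop_iff_infinite]
      exact frequently_lt_of_liminf_lt hbdd1.isCoboundedUnder_ge hr1
    have himg := hfreq.image (Set.injOn_of_injective (Nat.nth_injective hDinf'))
    apply himg.mono
    rintro _ ⟨k, hk, rfl⟩
    exact ⟨Nat.nth_mem_of_infinite hDinf' k, hk⟩
  · have hfreq : {k | (sb : ℝ) < u k}.Infinite := by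
      rw [← Nat.frequently_atTop_iff_infinite]
      exact frequently_lt_of_lt_limsup hbdd2.isCoboundedUnder_le hsb2
    have himg := hfreq.image (Set.injOn_of_injective (Nat.nth_injective hDinf'))
    apply himg.mono
    rintro _ ⟨k, hk, rfl⟩
    exact ⟨Nat.nth_mem_of_infinite hDinf' k, hk⟩

end StepA

section Rosenthal
variable {X : Type*} [NormedAddCommGroup X] [NormedSpace ℝ X]
variable (x : ℕ → X) (K r sb : ℝ)

def Aset (n : ℕ) : Set (X →L[ℝ] ℝ) := {t | ‖t‖ ≤ K ∧ t (x n) < r}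
def Bset (n : ℕ) : Set (X →L[ℝ] ℝ) := {t | ‖t‖ ≤ K ∧ sb < t (x n)}

def Mini (s : Finset ℕ) (a : ℕ) : Prop := a ∈ s ∧ ∀ b ∈ s, ¬ b < a
def Consec (s : Finset ℕ) (a a' : ℕ) : Prop :=
  a ∈ s ∧ a' ∈ s ∧ a < a' ∧ ∀ b ∈ s, ¬ (a < b ∧ b < a')

def Alt (s : Finset ℕ) : Set (X →L[ℝ] ℝ) :=
  {t | (∀ a, Mini s a → t ∈ Aset x K r a) ∧
    ∀ a a', Consec s a a' →
      ((t ∈ Aset x K r a ∧ t ∈ Bset x K sb a') ∨ (t ∈ Bset x K sb a ∧ t ∈ Aset x K r a'))}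

variable {x K r sb}

lemma AB_disj (hrs : r < sb) (n : ℕ) (t : X →L[ℝ] ℝ) :
    ¬ (t ∈ Aset x K r n ∧ t ∈ Bset x K sb n) := by
  rintro ⟨⟨_, h1⟩, ⟨_, h2⟩⟩
  linarith

/-- appending larger elements shrinks Alt -/
lemma alt_append {s u : Finset ℕ} (hu : ∀ b ∈ u, ∀ a ∈ s, a < b) :
    Alt x K r sb (s ∪ u) ⊆ Alt x K r sb s := by
  rintro t ⟨h1, h2⟩
  constructor
  · intro a ⟨ha1, ha2⟩
    apply h1 a
    refine ⟨Finset.mem_union_left _ ha1, ?_⟩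
    intro b hb
    rcases Finset.mem_union.mp hb with h | h
    · exact ha2 b h
    · exact not_lt.mpr (le_of_lt (hu b h a ha1))
  · intro a a' ⟨ha1, ha2, ha3, ha4⟩
    apply h2 a a'
    refine ⟨Finset.mem_union_left _ ha1, Finset.mem_union_left _ ha2, ha3, ?_⟩
    intro b hb
    rcases Finset.mem_union.mp hb with h | h
    · exact ha4 b h
    · rintro ⟨_, hlt⟩
      exact absurd hlt (not_lt.mpr (le_of_lt (hu b h a' ha2)))

def Letter (b : Bool) (n : ℕ) : Set (X →L[ℝ] ℝ) :=
  if b then Aset x K r n else Bset x K sb n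

lemma letter_flip (hrs : r < sb) {s : Finset ℕ} {a a' : ℕ} {t : X →L[ℝ] ℝ}
    (hc : Consec s a a') (ht : t ∈ Alt x K r sb s) {b : Bool}
    (hl : t ∈ Letter (x := x) (K := K) (r := r) (sb := sb) b a) :
    t ∈ Letter (x := x) (K := K) (r := r) (sb := sb) (!b) a' := by
  have := ht.2 a a' hc
  cases b with
  | true =>
    simp only [Letter, if_pos rfl] at hl ⊢
    rcases this with ⟨_, h⟩ | ⟨h, _⟩
    · simpa [Letter] using h
    · exact absurd ⟨hl, h⟩ (AB_disj hrs a t)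
  | false =>
    simp only [Letter] at hl ⊢
    rcases this with ⟨h, _⟩ | ⟨_, h⟩
    · exact absurd ⟨h, hl⟩ (AB_disj hrs a t)
    · simpa using h

/-- main extraction: from hereditary oscillation get full sign patterns on a subsequence -/
lemma rosenthal_extraction (hK : 0 < K) (hrs : r < sb) (M₀ : Set ℕ) (hM₀ : M₀.Infinite)
    (hosc : ∀ M, M ⊆ M₀ → M.Infinite → Osc x K r sb M) :
    ∃ y : ℕ → ℕ, StrictMono y ∧
      ∀ (k : ℕ) (ε : ℕ → Bool), ∃ t : X →L[ℝ] ℝ, ‖t‖ ≤ K ∧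
        ∀ i < k, (ε i = true → t (x (y i)) < r) ∧ (ε i = false → sb < t (x (y i))) := by
  classical
  obtain ⟨N, hNM, hNinf, hdich⟩ := nashWilliams (fun s => Alt x K r sb s = ∅) M₀ hM₀
  rcases hdich with hleft | hright
  · -- good case: all finite subsets of N have nonempty Alt
    set ν : ℕ → ℕ := fun j => Nat.nth (· ∈ N) j with hν
    have hNinf' : {n | (fun m => m ∈ N) n}.Infinite := by simpa using hNinf
    have hνmono : StrictMono ν := Nat.nth_strictMono hNinf'
    have hνN : ∀ j, ν j ∈ N := fun j => Nat.nth_mem_of_infinite hNinf' j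
    refine ⟨fun i => ν (2 * i + 1), fun i j hij => hνmono (by omega), ?_⟩
    intro k ε
    rcases Nat.eq_zero_or_pos k with rfl | hk
    · exact ⟨0, by simpa using hK.le, fun i hi => absurd hi (by omega)⟩
    -- build the finite set s by induction
    have key : ∀ k : ℕ, ∃ s : Finset ℕ,
        (∀ m ∈ s, ∃ j, j < 2 * (k + 1) ∧ m = ν j) ∧ ν (2 * k + 1) ∈ s ∧
        (∀ m ∈ s, m ≤ ν (2 * k + 1)) ∧
        (∀ t ∈ Alt x K r sb s, ∀ i ≤ k,
          t ∈ Letter (x := x) (K := K) (r := r) (sb := sb) (ε i) (ν (2 * i + 1))) := by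
      intro k
      induction k with
      | zero =>
        cases hε0 : ε 0 with
        | true =>
          refine ⟨{ν 1}, ?_, by simp, by simp, ?_⟩
          · intro m hm; exact ⟨1, by omega, Finset.mem_singleton.mp hm⟩
          · intro t ht i hi
            interval_cases i
            simp only [show 2*0+1 = 1 from rfl]
            rw [hε0]
            simp only [Letter, if_pos rfl]
            apply ht.1
            refine ⟨Finset.mem_singleton_self _, ?_⟩
            intro b hb
            rw [Finset.mem_singleton.mp hb]; omega
        | false =>
          refine ⟨{ν 0, ν 1}, ?_, by simp, ?_, ?_⟩
          · intro m hm
            rcases Finset.mem_insert.mp hm with h | h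
            · exact ⟨0, by omega, h⟩
            · exact ⟨1, by omega, Finset.mem_singleton.mp h⟩
          · intro m hm
            rcases Finset.mem_insert.mp hm with h | h
            · rw [h]; exact (hνmono (by omega : (0:ℕ) < 1)).le
            · rw [Finset.mem_singleton.mp h]
          · intro t ht i hi
            interval_cases i
            simp only [show 2*0+1 = 1 from rfl]
            rw [hε0]
            have h01 : ν 0 < ν 1 := hνmono (by omega)
            have hmin : t ∈ Aset x K r (ν 0) := by
              apply ht.1
              refine ⟨by simp, ?_⟩
              intro b hb
              rcases Finset.mem_insert.mp hb with h | h
              · rw [h]; omega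
              · rw [Finset.mem_singleton.mp h]; omega
            have hcon : Consec ({ν 0, ν 1} : Finset ℕ) (ν 0) (ν 1) := by
              refine ⟨by simp, by simp, h01, ?_⟩
              intro b hb
              rcases Finset.mem_insert.mp hb with h | h
              · rw [h]; omega
              · rw [Finset.mem_singleton.mp h]; omega
            have := letter_flip (b := true) hrs hcon ht (by simpa [Letter] using hmin)
            simpa [Letter] using this
      | succ k ih =>
        obtain ⟨s, hs1, hs2, hs3, hs4⟩ := ih
        set u : Finset ℕ := if ε (k + 1) = ε k then {ν (2 * k + 2), ν (2 * k + 3)}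
          else {ν (2 * k + 3)} with hu
        have hub : ∀ b ∈ u, ν (2 * k + 1) < b := by
          intro b hb
          rw [hu] at hb
          split_ifs at hb with h
          · rcases Finset.mem_insert.mp hb with h' | h'
            · rw [h']; exact hνmono (by omega)
            · rw [Finset.mem_singleton.mp h']; exact hνmono (by omega)
          · rw [Finset.mem_singleton.mp hb]; exact hνmono (by omega)
        have hularge : ∀ b ∈ u, ∀ a ∈ s, a < b := by
          intro b hb a ha
          exact lt_of_le_of_lt (hs3 a ha) (hub b hb)
        have hidx : 2 * (k + 1) + 1 = 2 * k + 3 := by ring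
        refine ⟨s ∪ u, ?_, ?_, ?_, ?_⟩
        · intro m hm
          rcases Finset.mem_union.mp hm with h | h
          · obtain ⟨j, hj, rfl⟩ := hs1 m h
            exact ⟨j, by omega, rfl⟩
          · rw [hu] at h
            split_ifs at h with hc
            · rcases Finset.mem_insert.mp h with h' | h'
              · exact ⟨2 * k + 2, by omega, h'⟩
              · exact ⟨2 * k + 3, by omega, Finset.mem_singleton.mp h'⟩
            · exact ⟨2 * k + 3, by omega, Finset.mem_singleton.mp h⟩
        · rw [hidx]
          apply Finset.mem_union_right
          rw [hu]
          split_ifs <;> simp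
        · intro m hm
          rw [hidx]
          rcases Finset.mem_union.mp hm with h | h
          · calc m ≤ ν (2 * k + 1) := hs3 m h
            _ ≤ ν (2 * k + 3) := (hνmono.le_iff_le).mpr (by omega)
          · rw [hu] at h
            split_ifs at h with hc
            · rcases Finset.mem_insert.mp h with h' | h'
              · rw [h']; exact (hνmono.le_iff_le).mpr (by omega)
              · rw [Finset.mem_singleton.mp h']
            · rw [Finset.mem_singleton.mp h]
        · intro t ht i hi
          have hts : t ∈ Alt x K r sb s := alt_append hularge ht
          rcases Nat.lt_or_ge i (k + 1) with hik | hik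
          · exact hs4 t hts i (by omega)
          · have hieq : i = k + 1 := by omega
            subst hieq
            rw [hidx]
            -- need letter at ν (2k+3)
            have hlk : t ∈ Letter (x := x) (K := K) (r := r) (sb := sb) (ε k) (ν (2 * k + 1)) :=
              hs4 t hts k le_rfl
            have hsmem : ∀ b ∈ s ∪ u, b ≤ ν (2 * k + 1) ∨ b = ν (2 * k + 2) ∨ b = ν (2 * k + 3) := by
              intro b hb
              rcases Finset.mem_union.mp hb with h | h
              · exact Or.inl (hs3 b h)
              · rw [hu] at h
                split_ifs at h with hc
                · rcases Finset.mem_insert.mp h with h' | h'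
                  · exact Or.inr (Or.inl h')
                  · exact Or.inr (Or.inr (Finset.mem_singleton.mp h'))
                · exact Or.inr (Or.inr (Finset.mem_singleton.mp h))
            by_cases hc : ε (k + 1) = ε k
            · -- with buffer: two flips
              have humem1 : ν (2 * k + 2) ∈ s ∪ u := by
                apply Finset.mem_union_right; rw [hu, if_pos hc]; simp
              have humem2 : ν (2 * k + 3) ∈ s ∪ u := by
                apply Finset.mem_union_right; rw [hu, if_pos hc]; simp
              have hcon1 : Consec (s ∪ u) (ν (2 * k + 1)) (ν (2 * k + 2)) := by
                refine ⟨Finset.mem_union_left _ hs2, humem1, hνmono (by omega), ?_⟩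
                intro b hb
                rcases hsmem b hb with h | h | h
                · omega
                · rw [h]; omega
                · rw [h]
                  have : ν (2*k+2) < ν (2*k+3) := hνmono (by omega)
                  omega
              have hcon2 : Consec (s ∪ u) (ν (2 * k + 2)) (ν (2 * k + 3)) := by
                refine ⟨humem1, humem2, hνmono (by omega), ?_⟩
                intro b hb
                rcases hsmem b hb with h | h | h
                · have : ν (2*k+1) < ν (2*k+2) := hνmono (by omega)
                  omega
                · rw [h]; omega
                · rw [h]; omega
              have l1 := letter_flip hrs hcon1 ht hlk
              have l2 := letter_flip hrs hcon2 ht l1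
              rw [hc]
              simpa using l2
            · -- no buffer: one flip
              have humem2 : ν (2 * k + 3) ∈ s ∪ u := by
                apply Finset.mem_union_right; rw [hu, if_neg hc]; simp
              have hcon : Consec (s ∪ u) (ν (2 * k + 1)) (ν (2 * k + 3)) := by
                refine ⟨Finset.mem_union_left _ hs2, humem2, hνmono (by omega), ?_⟩
                intro b hb
                rcases hsmem b hb with h | h | h
                · omega
                · rw [h]
                  exfalso
                  -- ν(2k+2) ∉ s ∪ u in this case; b = ν(2k+2) can't be a member
                  rcases Finset.mem_union.mp hb with h' | h'
                  · have := hs3 _ h'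
                    have h2 : ν (2*k+1) < ν (2*k+2) := hνmono (by omega)
                    omega
                  · rw [hu, if_neg hc] at h'
                    have := Finset.mem_singleton.mp h'
                    rw [h] at this
                    exact absurd (hνmono.injective this) (by omega)
                · rw [h]; omega
              have l1 := letter_flip hrs hcon ht hlk
              have : ε (k + 1) = !(ε k) := by
                cases h1 : ε (k+1) <;> cases h2 : ε k <;> simp_all
              rw [this]
              exact l1
    obtain ⟨s, hs1, _, _, hs4⟩ := key (k - 1)
    have hsN : ↑s ⊆ N := by
      intro m hm
      obtain ⟨j, _, rfl⟩ := hs1 m (Finset.mem_coe.mp hm)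
      exact hνN j
    have hne : Alt x K r sb s ≠ ∅ := hleft s hsN
    obtain ⟨t, ht⟩ := Set.nonempty_iff_ne_empty.mpr hne
    have hnorm : ‖t‖ ≤ K := by
      have hl := hs4 t ht 0 (by omega)
      cases h : ε 0 <;> rw [h] at hl <;> simp only [Letter, Aset, Bset, if_true,
        Bool.false_eq_true, if_false, Set.mem_setOf_eq] at hl <;> exact hl.1
    refine ⟨t, hnorm, ?_⟩
    intro i hi
    have hl := hs4 t ht i (by omega)
    constructor
    · intro hε; rw [hε] at hl
      simp only [Letter, Aset, if_true, Set.mem_setOf_eq] at hl; exact hl.2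
    · intro hε; rw [hε] at hl
      simp only [Letter, Bset, Bool.false_eq_true, if_false, Set.mem_setOf_eq] at hl
      exact hl.2
  · -- impossible case: use oscillation on N
    exfalso
    obtain ⟨t, htK, hta, htb⟩ := hosc N hNM hNinf
    set SA := {m ∈ N | t (x m) < r} with hSA
    set SB := {m ∈ N | sb < t (x m)} with hSB
    -- build alternating P
    have hstep : ∀ (k a : ℕ), ∃ b : ℕ, a < b ∧ ((k + 1) % 2 = 0 → b ∈ SA) ∧
        ((k + 1) % 2 = 1 → b ∈ SB) := by
      intro k a
      by_cases h : (k + 1) % 2 = 0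
      · obtain ⟨b, hb1, hb2⟩ := hta.exists_gt a
        exact ⟨b, hb2, fun _ => hb1, fun hk => absurd hk (by omega)⟩
      · obtain ⟨b, hb1, hb2⟩ := htb.exists_gt a
        exact ⟨b, hb2, fun hk => absurd hk h, fun _ => hb1⟩
    obtain ⟨p, hp0, hpR⟩ := exists_chain_dep (sInf SA) _ hstep
    have hpmono : StrictMono p := strictMono_nat_of_lt_succ (fun n => (hpR n).1)
    have hpar : ∀ j, (j % 2 = 0 → p j ∈ SA) ∧ (j % 2 = 1 → p j ∈ SB) := by
      intro j
      cases j with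
      | zero =>
        constructor
        · intro _; rw [hp0]; exact Nat.sInf_mem hta.nonempty
        · intro h; exact absurd h (by omega)
      | succ j => exact ⟨(hpR j).2.1, (hpR j).2.2⟩
    have hpN : ∀ j, p j ∈ N := by
      intro j
      rcases Nat.even_or_odd j with h | h
      · exact ((hpar j).1 (Nat.even_iff.mp h)).1
      · have : j % 2 = 1 := Nat.odd_iff.mp h
        exact ((hpar j).2 this).1
    set P : Set ℕ := Set.range p with hP
    have hPN : P ⊆ N := by rintro _ ⟨j, rfl⟩; exact hpN j
    have hPinf : P.Infinite := Set.infinite_range_of_injective hpmono.injective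
    obtain ⟨n, hFn⟩ := hright P hPN hPinf
    -- but t ∈ Alt (seg P n)
    apply Set.nonempty_iff_ne_empty.mp _ hFn
    refine ⟨t, ?_, ?_⟩
    · rintro a ⟨ha1, ha2⟩
      obtain ⟨hlt, j, rfl⟩ := mem_seg.mp ha1
      have hj0 : j = 0 := by
        by_contra hj
        have h0 : p 0 < p j := hpmono (by omega)
        have h0seg : p 0 ∈ seg P n := mem_seg.mpr ⟨by omega, 0, rfl⟩
        exact ha2 (p 0) h0seg h0
      subst hj0
      have := (hpar 0).1 (by omega)
      exact ⟨htK, this.2⟩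
    · rintro a a' ⟨ha1, ha2, ha3, ha4⟩
      obtain ⟨hlt, i, rfl⟩ := mem_seg.mp ha1
      obtain ⟨hlt', j, rfl⟩ := mem_seg.mp ha2
      have hij : i < j := by
        by_contra hc
        push_neg at hc
        have := hpmono.le_iff_le.mpr hc
        omega
      have hji : j = i + 1 := by
        by_contra hc
        have h1 : p i < p (i+1) := hpmono (by omega)
        have h2 : p (i+1) < p j := hpmono (by omega)
        have hmem : p (i+1) ∈ seg P n := mem_seg.mpr ⟨by omega, i+1, rfl⟩
        exact ha4 (p (i+1)) hmem ⟨h1, h2⟩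
      subst hji
      rcases Nat.even_or_odd i with h | h
      · have hi0 : i % 2 = 0 := Nat.even_iff.mp h
        have hA : p i ∈ SA := (hpar i).1 hi0
        have hB : p (i+1) ∈ SB := (hpar (i+1)).2 (by omega)
        exact Or.inl ⟨⟨htK, hA.2⟩, ⟨htK, hB.2⟩⟩
      · have hi1 : i % 2 = 1 := Nat.odd_iff.mp h
        have hB : p i ∈ SB := (hpar i).2 hi1
        have hA : p (i+1) ∈ SA := (hpar (i+1)).1 (by omega)
        exact Or.inr ⟨⟨htK, hB.2⟩, ⟨htK, hA.2⟩⟩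

end Rosenthal
set_option maxHeartbeats 1000000

section Goldstine
variable {Y : Type*} [NormedAddCommGroup Y] [NormedSpace ℝ Y]

/-- finite-dimensional Goldstine / local reflexivity lemma -/
lemma finite_goldstine (Φ : (Y →L[ℝ] ℝ) →L[ℝ] ℝ) {k : ℕ} (g : Fin k → (Y →L[ℝ] ℝ))
    {ε : ℝ} (hε : 0 < ε) :
    ∃ y : Y, ‖y‖ ≤ ‖Φ‖ + ε ∧ ∀ i, |g i y - Φ (g i)| ≤ ε := by
  classical
  set T : Y →L[ℝ] (Fin k → ℝ) := ContinuousLinearMap.pi g with hT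
  set Cs : Set (Fin k → ℝ) := closure (T '' closedBall 0 (‖Φ‖ + ε)) with hCs
  set v : Fin k → ℝ := fun i => Φ (g i) with hv
  have hΦε : 0 < ‖Φ‖ + ε := lt_of_lt_of_le hε (by linarith [norm_nonneg Φ])
  have hvC : v ∈ Cs := by
    by_contra hnot
    have hlin : IsLinearMap ℝ (⇑T) := ⟨T.map_add, T.map_smul⟩
    have himg : Convex ℝ (⇑T '' closedBall 0 (‖Φ‖ + ε)) :=
      (convex_closedBall (0 : Y) (‖Φ‖ + ε)).is_linear_image hlin
    have hconv : Convex ℝ Cs := himg.closure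
    obtain ⟨φ, u, hs, hu⟩ := geometric_hahn_banach_closed_point hconv isClosed_closure hnot
    -- the composed functional
    set G : Y →L[ℝ] ℝ := ∑ i, φ ((Pi.single i (1:ℝ) : Fin k → ℝ)) • g i with hG
    have hGy : ∀ y : Y, G y = φ (T y) := by
      intro y
      have hpi : (T y) = ∑ i, (T y i) • (Pi.single i (1:ℝ) : Fin k → ℝ) := by
        rw [pi_eq_sum_univ (T y)]
        congr 1
        ext i j
        simp [Pi.single_apply, eq_comm]
      rw [hpi, map_sum]
      simp only [map_smul, smul_eq_mul]
      rw [hG]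
      simp only [ContinuousLinearMap.sum_apply, ContinuousLinearMap.smul_apply, smul_eq_mul]
      congr 1
      ext i
      simp only [hT, ContinuousLinearMap.pi_apply]
      ring
    have hΦG : Φ G = φ v := by
      rw [hG, map_sum]
      have hpiv : v = ∑ i, v i • (Pi.single i (1:ℝ) : Fin k → ℝ) := by
        rw [pi_eq_sum_univ v]
        congr 1
        ext i j
        simp [Pi.single_apply, eq_comm]
      rw [hpiv, map_sum]
      simp only [map_smul, smul_eq_mul, hv]
      congr 1
      ext i
      ring
    have hu0 : 0 < u := by
      have h0C : (0 : Fin k → ℝ) ∈ Cs := by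
        apply subset_closure
        exact ⟨0, mem_closedBall_self hΦε.le, by simp⟩
      have := hs 0 h0C
      simpa using this
    -- bound on G
    have hGbound : ∀ y : Y, ‖y‖ ≤ ‖Φ‖ + ε → G y < u := by
      intro y hy
      rw [hGy]
      exact hs (T y) (subset_closure ⟨y, by simpa [Metric.mem_closedBall, dist_zero_right] using hy, rfl⟩)
    have hGnorm : ‖G‖ ≤ u / (‖Φ‖ + ε) := by
      apply ContinuousLinearMap.opNorm_le_bound _ (div_nonneg hu0.le hΦε.le)
      intro y
      rcases eq_or_ne y 0 with rfl | hy0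
      · simp
      · have hyn : 0 < ‖y‖ := norm_pos_iff.mpr hy0
        set z : Y := ((‖Φ‖ + ε) / ‖y‖) • y with hz
        have hzn : ‖z‖ = ‖Φ‖ + ε := by
          rw [hz, norm_smul]
          simp only [norm_div, Real.norm_eq_abs]
          rw [abs_of_pos hΦε, abs_of_pos hyn]
          field_simp
        have h1 : G z < u := hGbound z hzn.le
        have h2 : G (-z) < u := hGbound (-z) (by rw [norm_neg]; exact hzn.le)
        have h3 : |G z| ≤ u := by
          rw [abs_le]
          constructor
          · have : G (-z) = - G z := by simp
            linarith [this ▸ h2]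
          · linarith
        have h4 : G z = ((‖Φ‖ + ε) / ‖y‖) * G y := by rw [hz, map_smul]; simp
        rw [h4] at h3
        rw [abs_mul, abs_of_pos (div_pos hΦε hyn)] at h3
        have h5 : |G y| ≤ u * ‖y‖ / (‖Φ‖ + ε) := by
          rw [le_div_iff₀ hΦε]
          calc |G y| * (‖Φ‖ + ε) = (‖Φ‖ + ε) / ‖y‖ * |G y| * ‖y‖ := by field_simp
          _ ≤ u * ‖y‖ := mul_le_mul_of_nonneg_right h3 hyn.le
        calc ‖G y‖ = |G y| := rfl
        _ ≤ u * ‖y‖ / (‖Φ‖ + ε) := h5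
        _ = u / (‖Φ‖ + ε) * ‖y‖ := by ring
    -- contradiction
    have hfinal : φ v ≤ ‖Φ‖ * (u / (‖Φ‖ + ε)) := by
      rw [← hΦG]
      calc Φ G ≤ |Φ G| := le_abs_self _
      _ ≤ ‖Φ‖ * ‖G‖ := Φ.le_opNorm G
      _ ≤ ‖Φ‖ * (u / (‖Φ‖ + ε)) := mul_le_mul_of_nonneg_left hGnorm (norm_nonneg Φ)
    have : ‖Φ‖ * (u / (‖Φ‖ + ε)) < u := by
      rw [mul_div_assoc']
      rw [div_lt_iff₀ hΦε]
      have : ‖Φ‖ < ‖Φ‖ + ε := by linarith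
      calc ‖Φ‖ * u < (‖Φ‖ + ε) * u := by
            apply mul_lt_mul_of_pos_right this hu0
      _ = u * (‖Φ‖ + ε) := by ring
    linarith
  -- v ∈ Cs: extract approximation
  rw [hCs, Metric.mem_closure_iff] at hvC
  obtain ⟨w, hw1, hw2⟩ := hvC ε hε
  obtain ⟨y, hy1, rfl⟩ := hw1
  refine ⟨y, by simpa [Metric.mem_closedBall, dist_zero_right] using hy1, ?_⟩
  intro i
  have := dist_le_pi_dist v (T y) i
  have h2 : dist (v i) (T y i) < ε := lt_of_le_of_lt this hw2
  rw [Real.dist_eq] at h2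
  have : T y i = g i y := by simp [hT]
  rw [this] at h2
  rw [abs_sub_comm] at h2
  exact h2.le

end Goldstine

section Annihilator
variable {E : Type*} [NormedAddCommGroup E] [NormedSpace ℝ E]

lemma exists_functional_annihilator (S : Submodule ℝ E) (hS : IsClosed (S : Set E))
    (F : E) (d : ℝ) (hd : 0 < d) (hdist : ∀ s ∈ S, d ≤ ‖F - s‖) :
    ∃ Φ : E →L[ℝ] ℝ, ‖Φ‖ ≤ 1 ∧ (∀ s ∈ S, Φ s = 0) ∧ d ≤ Φ F := by
  haveI : IsClosed (S : Set E) := hS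
  set Fbar : E ⧸ S := Submodule.Quotient.mk F with hFbar
  have hnorm : d ≤ ‖Fbar‖ := by
    by_contra h
    push_neg at h
    obtain ⟨m, hm1, hm2⟩ := Submodule.Quotient.norm_mk_lt Fbar (show 0 < d - ‖Fbar‖ by linarith)
    have hFm : F - m ∈ S := by
      rw [← Submodule.Quotient.eq]
      exact hm1.symm ▸ rfl
    have := hdist (F - m) hFm
    have hsimp : F - (F - m) = m := by abel
    rw [hsimp] at this
    linarith
  have hne : Fbar ≠ 0 := by
    intro h
    rw [h, norm_zero] at hnorm
    linarith
  obtain ⟨ψ, hψ1, hψ2⟩ := exists_dual_vector ℝ Fbar (norm_ne_zero_iff.mpr hne)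
  -- mkQ as continuous linear map
  have hcont : Continuous (S.mkQ) := by
    rw [Submodule.mkQ]
    exact continuous_quot_mk
  set mkc : E →L[ℝ] E ⧸ S := ⟨S.mkQ, hcont⟩ with hmkc
  refine ⟨ψ.comp mkc, ?_, ?_, ?_⟩
  · apply ContinuousLinearMap.opNorm_le_bound _ zero_le_one
    intro y
    calc ‖ψ (mkc y)‖ ≤ ‖ψ‖ * ‖mkc y‖ := ψ.le_opNorm _
    _ = ‖mkc y‖ := by rw [hψ1, one_mul]
    _ ≤ ‖y‖ := Submodule.Quotient.norm_mk_le S y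
    _ = 1 * ‖y‖ := (one_mul _).symm
  · intro s hs
    have : mkc s = 0 := (Submodule.Quotient.mk_eq_zero S).mpr hs
    simp [ContinuousLinearMap.comp_apply, this]
  · have : mkc F = Fbar := rfl
    rw [ContinuousLinearMap.comp_apply, this, hψ2]
    exact hnorm

end Annihilator

section UF
variable {X : Type*} [NormedAddCommGroup X] [NormedSpace ℝ X]

lemma ultrafilter_functional (U : Ultrafilter ℕ) (f : ℕ → (X →L[ℝ] ℝ)) (B : ℝ)
    (hB : 0 ≤ B) (hf : ∀ i, ‖f i‖ ≤ B) :
    ∃ g : X →L[ℝ] ℝ, ∀ x : X, Tendsto (fun i => f i x) (U : Filter ℕ) (𝓝 (g x)) := by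
  have hlim : ∀ x : X, ∃ c : ℝ, Tendsto (fun i => f i x) (U : Filter ℕ) (𝓝 c) := by
    intro x
    have hcomp : IsCompact (Set.Icc (-(B * ‖x‖)) (B * ‖x‖)) := isCompact_Icc
    have hmem : ∀ i, f i x ∈ Set.Icc (-(B * ‖x‖)) (B * ‖x‖) := by
      intro i
      have h1 : |f i x| ≤ B * ‖x‖ := by
        calc |f i x| = ‖f i x‖ := rfl
        _ ≤ ‖f i‖ * ‖x‖ := (f i).le_opNorm x
        _ ≤ B * ‖x‖ := mul_le_mul_of_nonneg_right (hf i) (norm_nonneg x)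
      rw [Set.mem_Icc]
      constructor <;> [linarith [neg_abs_le (f i x)]; linarith [le_abs_self (f i x)]]
    obtain ⟨c, _, hc⟩ := hcomp.ultrafilter_le_nhds (U.map (fun i => f i x)) (by
      rw [Filter.le_principal_iff]
      exact Filter.mem_map.mpr (Filter.univ_mem' hmem))
    exact ⟨c, hc⟩
  choose c hc using hlim
  have hadd : ∀ x y : X, c (x + y) = c x + c y := by
    intro x y
    have h1 : Tendsto (fun i => f i (x + y)) (U : Filter ℕ) (𝓝 (c x + c y)) := by
      have := (hc x).add (hc y)
      simpa [map_add] using this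
    exact tendsto_nhds_unique (hc (x + y)) h1
  have hsmul : ∀ (a : ℝ) (x : X), c (a • x) = a * c x := by
    intro a x
    have h1 : Tendsto (fun i => f i (a • x)) (U : Filter ℕ) (𝓝 (a * c x)) := by
      have := (hc x).const_mul a
      simpa [map_smul, smul_eq_mul] using this
    exact tendsto_nhds_unique (hc (a • x)) h1
  have hbound : ∀ x : X, ‖c x‖ ≤ B * ‖x‖ := by
    intro x
    have h1 : ∀ i, |f i x| ≤ B * ‖x‖ := by
      intro i
      calc |f i x| = ‖f i x‖ := rfl
      _ ≤ ‖f i‖ * ‖x‖ := (f i).le_opNorm x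
      _ ≤ B * ‖x‖ := mul_le_mul_of_nonneg_right (hf i) (norm_nonneg x)
    have h2 : Tendsto (fun i => |f i x|) (U : Filter ℕ) (𝓝 |c x|) := (hc x).abs
    exact le_of_tendsto h2 (Filter.univ_mem' h1)
  set gl : X →ₗ[ℝ] ℝ := { toFun := c, map_add' := hadd, map_smul' := hsmul } with hgl
  exact ⟨LinearMap.mkContinuous gl B hbound, hc⟩

end UF

lemma exists_chain2 {α : Type*} (init : α) (R : α → α → Prop) (h : ∀ a, ∃ b, R a b) :
    ∃ f : ℕ → α, f 0 = init ∧ ∀ n, R (f n) (f (n + 1)) := by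
  choose g hg using h
  refine ⟨fun n => g^[n] init, rfl, fun n => ?_⟩
  have : g^[n+1] init = g (g^[n] init) := Function.iterate_succ_apply' g n init
  simpa [this] using hg (g^[n] init)

noncomputable instance ddSubAddCommGroup {X : Type*} [NormedAddCommGroup X] [NormedSpace ℝ X]
    (S : Submodule ℝ (StrongDual ℝ (StrongDual ℝ X))) : AddCommGroup S :=
  @Submodule.addCommGroup ℝ (StrongDual ℝ (StrongDual ℝ X)) _ ContinuousLinearMap.addCommGroup _ S

section ArrayConstruction
variable {X : Type*} [NormedAddCommGroup X] [NormedSpace ℝ X] [CompleteSpace X]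

open NormedSpace

/-- the James-type array in a non-reflexive space -/
lemma exists_james_array
    (hnonrefl : ¬ Function.Surjective (inclusionInDoubleDual ℝ X)) :
    ∃ (d C : ℝ) (xs : ℕ → X) (fs : ℕ → (X →L[ℝ] ℝ)), 0 < d ∧ 0 < C ∧
      (∀ m, ‖xs m‖ ≤ C) ∧ (∀ i, ‖fs i‖ ≤ 2) ∧
      (∀ i m, i ≤ m → d / 2 ≤ fs i (xs m)) ∧
      (∀ m i, m < i → |fs i (xs m)| ≤ (1/2 : ℝ) ^ i) := by
  classical
  set j : X →L[ℝ] StrongDual ℝ (StrongDual ℝ X) := inclusionInDoubleDual ℝ X with hj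
  obtain ⟨F, hF⟩ := not_forall.mp (fun h => hnonrefl (fun y => h y))
  push_neg at hF
  have hFnotin : F ∉ Set.range j := by
    rintro ⟨x, rfl⟩
    exact hF x rfl
  have hclosed : IsClosed (Set.range j) := by
    have hiso : Isometry j := (inclusionInDoubleDualLi ℝ (E := X)).isometry
    exact hiso.isClosedEmbedding.isClosed_range
  set d : ℝ := infDist F (Set.range j) with hd
  have hdpos : 0 < d := by
    rcases lt_or_ge 0 d with h | h
    · exact h
    · exfalso
      have hd0 : d = 0 := le_antisymm h (infDist_nonneg)
      have : F ∈ Set.range j := by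
        rw [hclosed.mem_iff_infDist_zero (⟨j 0, 0, rfl⟩ : (Set.range j).Nonempty)]
        exact hd0
      exact hFnotin this
  have hdist_range : ∀ z ∈ Set.range j, d ≤ ‖F - z‖ := by
    intro z hz
    rw [← dist_eq_norm F z]
    exact infDist_le_dist_of_mem hz
  set C : ℝ := ‖F‖ + 1 with hC
  have hCpos : 0 < C := by positivity
  -- invariant structure: (k, fs, xs)
  set Inv : ℕ → (ℕ → (X →L[ℝ] ℝ)) → (ℕ → X) → Prop := fun k fs xs =>
    (∀ i < k, ‖fs i‖ ≤ 2) ∧ (∀ m < k, ‖xs m‖ ≤ C) ∧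
    (∀ i m, i ≤ m → m < k → d / 2 ≤ fs i (xs m)) ∧
    (∀ m i, m < i → i < k → |fs i (xs m)| ≤ (1/2 : ℝ) ^ i) ∧
    (∀ i < k, 3 * d / 4 ≤ F (fs i)) with hInv
  -- one step
  have hstep : ∀ (k : ℕ) (fs : ℕ → (X →L[ℝ] ℝ)) (xs : ℕ → X), Inv k fs xs →
      ∃ (fnew : X →L[ℝ] ℝ) (xnew : X), Inv (k+1) (Function.update fs k fnew)
        (Function.update xs k xnew) := by
    intro k fs xs hinv
    obtain ⟨h1, h2, h3, h4, h5⟩ := hinv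
    -- Step 1: choose fnew
    set S : Submodule ℝ (StrongDual ℝ (StrongDual ℝ X)) :=
      Submodule.span ℝ ((fun m => j (xs m)) '' (Set.Iio k)) with hS
    have hSfin : FiniteDimensional ℝ S :=
      FiniteDimensional.span_of_finite ℝ ((Set.finite_Iio k).image (fun m => j (xs m)))
    have hSclosed : IsClosed (S : Set (StrongDual ℝ (StrongDual ℝ X))) :=
      @Submodule.closed_of_finiteDimensional ℝ _ _ _ ContinuousLinearMap.addCommGroup _ _ _ _ _ S hSfin
    have hSrange : (S : Set (StrongDual ℝ (StrongDual ℝ X))) ⊆ Set.range j := by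
      have : S ≤ LinearMap.range (j : X →ₗ[ℝ] StrongDual ℝ (StrongDual ℝ X)) := by
        rw [hS, Submodule.span_le]
        rintro _ ⟨m, _, rfl⟩
        exact ⟨xs m, rfl⟩
      intro z hz
      obtain ⟨y, hy⟩ := this hz
      exact ⟨y, hy⟩
    have hSdist : ∀ s ∈ S, d ≤ ‖F - s‖ := fun s hs => hdist_range s (hSrange hs)
    obtain ⟨Φ, hΦ1, hΦ2, hΦ3⟩ := exists_functional_annihilator S hSclosed F d hdpos hSdist
    -- Goldstine for the dual: points j (xs 0), ..., j (xs (k-1)), F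
    set ε1 : ℝ := min (d/4) (min 1 ((1/2 : ℝ)^k)) with hε1
    have hε1pos : 0 < ε1 := by
      apply lt_min (by linarith)
      exact lt_min one_pos (by positivity)
    set pts : Fin (k+1) → ((X →L[ℝ] ℝ) →L[ℝ] ℝ) :=
      fun i => if h : (i : ℕ) < k then j (xs i) else F with hpts
    obtain ⟨fnew, hfn1, hfn2⟩ := finite_goldstine (Y := X →L[ℝ] ℝ) Φ pts hε1pos
    have hfnormle : ‖fnew‖ ≤ 2 := by
      have : ε1 ≤ 1 := le_trans (min_le_right _ _) (min_le_left _ _)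
      calc ‖fnew‖ ≤ ‖Φ‖ + ε1 := hfn1
      _ ≤ 1 + 1 := add_le_add hΦ1 this
      _ = 2 := by norm_num
    have hfsmall : ∀ m < k, |fnew (xs m)| ≤ (1/2 : ℝ)^k := by
      intro m hm
      have := hfn2 ⟨m, by omega⟩
      rw [hpts] at this
      simp only [dif_pos hm] at this
      have happ : j (xs m) fnew = fnew (xs m) := dual_def _ _ _ _
      have hvan : Φ (j (xs m)) = 0 := hΦ2 _ (Submodule.subset_span ⟨m, by
        simpa using hm, rfl⟩)
      rw [happ, hvan, sub_zero] at this
      calc |fnew (xs m)| ≤ ε1 := this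
      _ ≤ (1/2 : ℝ)^k := le_trans (min_le_right _ _) (min_le_right _ _)
    have hfbig : 3 * d / 4 ≤ F fnew := by
      have := hfn2 ⟨k, by omega⟩
      rw [hpts] at this
      simp only [dif_neg (lt_irrefl k)] at this
      have h6 : ε1 ≤ d/4 := min_le_left _ _
      have h7 : |F fnew - Φ F| ≤ d/4 := le_trans this h6
      rw [abs_le] at h7
      linarith
    -- Step 2: choose xnew via Goldstine for F
    set fs' : ℕ → (X →L[ℝ] ℝ) := Function.update fs k fnew with hfs'
    have hfs'eq : ∀ i < k, fs' i = fs i := by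
      intro i hi
      rw [hfs', Function.update_of_ne (by omega)]
    have hfs'k : fs' k = fnew := by rw [hfs', Function.update_self]
    have hfs'big : ∀ i ≤ k, 3 * d / 4 ≤ F (fs' i) := by
      intro i hi
      rcases Nat.lt_or_ge i k with h | h
      · rw [hfs'eq i h]; exact h5 i h
      · have : i = k := by omega
        rw [this, hfs'k]; exact hfbig
    set pts2 : Fin (k+1) → (X →L[ℝ] ℝ) := fun i => fs' i with hpts2
    have hd4 : (0:ℝ) < d/4 := by linarith
    obtain ⟨xnew, hxn1, hxn2⟩ := finite_goldstine (Y := X) F pts2 (lt_min hd4 one_pos)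
    have hxnorm : ‖xnew‖ ≤ C := by
      calc ‖xnew‖ ≤ ‖F‖ + min (d/4) 1 := hxn1
      _ ≤ ‖F‖ + 1 := by
          have := min_le_right (d/4) (1:ℝ)
          linarith
    have hxval : ∀ i ≤ k, d/2 ≤ fs' i xnew := by
      intro i hi
      have := hxn2 ⟨i, by omega⟩
      rw [hpts2] at this
      simp only [] at this
      have h8 : |fs' i xnew - F (fs' i)| ≤ d/4 :=
        le_trans this (min_le_left _ _)
      rw [abs_le] at h8
      have := hfs'big i hi
      linarith
    refine ⟨fnew, xnew, ?_, ?_, ?_, ?_, ?_⟩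
    · intro i hi
      rcases Nat.lt_or_ge i k with h | h
      · rw [Function.update_of_ne (by omega)]; exact h1 i h
      · have : i = k := by omega
        rw [this, Function.update_self]; exact hfnormle
    · intro m hm
      rcases Nat.lt_or_ge m k with h | h
      · rw [Function.update_of_ne (by omega)]; exact h2 m h
      · have : m = k := by omega
        rw [this, Function.update_self]; exact hxnorm
    · intro i m him hm
      rcases Nat.lt_or_ge m k with h | h
      · rw [Function.update_of_ne (show m ≠ k by omega),
          Function.update_of_ne (show i ≠ k by omega)]
        exact h3 i m him h
      · have hmk : m = k := by omega
        subst hmk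
        rw [Function.update_self]
        have := hxval i him
        rwa [hfs'] at this
    · intro m i hmi hik
      rcases Nat.lt_or_ge i k with h | h
      · rw [Function.update_of_ne (show i ≠ k by omega),
          Function.update_of_ne (show m ≠ k by omega)]
        exact h4 m i hmi h
      · have hik' : i = k := by omega
        subst hik'
        rw [Function.update_self, Function.update_of_ne (show m ≠ i by omega)]
        exact hfsmall m (by omega)
    · intro i hi
      rcases Nat.lt_or_ge i k with h | h
      · rw [Function.update_of_ne (by omega)]; exact h5 i h
      · have : i = k := by omega
        rw [this, Function.update_self]; exact hfbig
  -- chain it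
  set α := {p : ℕ × (ℕ → (X →L[ℝ] ℝ)) × (ℕ → X) // Inv p.1 p.2.1 p.2.2} with hα
  have hR : ∀ a : α, ∃ b : α, b.val.1 = a.val.1 + 1 ∧
      (∀ i < a.val.1, b.val.2.1 i = a.val.2.1 i) ∧
      (∀ m < a.val.1, b.val.2.2 m = a.val.2.2 m) := by
    rintro ⟨⟨k, fs, xs⟩, hinv⟩
    obtain ⟨fnew, xnew, hnew⟩ := hstep k fs xs hinv
    refine ⟨⟨⟨k+1, Function.update fs k fnew, Function.update xs k xnew⟩, hnew⟩, rfl, ?_, ?_⟩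
    · intro i hi
      have hik : i < k := hi
      exact Function.update_of_ne (by omega) _ _
    · intro m hm
      have hmk : m < k := hm
      exact Function.update_of_ne (by omega) _ _
  have hInv0 : Inv 0 (fun _ => 0) (fun _ => 0) := by
    refine ⟨?_, ?_, ?_, ?_, ?_⟩ <;> intro a b <;> omega
  obtain ⟨ch, hch0, hchR⟩ := exists_chain2 (⟨⟨0, fun _ => 0, fun _ => 0⟩, hInv0⟩ : α) _ hR
  have hk : ∀ n, (ch n).val.1 = n := by
    intro n
    induction n with
    | zero => rw [hch0]
    | succ n ih => rw [(hchR n).1, ih]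
  -- agreement
  have hagree_f : ∀ i n n', i < n → n ≤ n' → (ch n').val.2.1 i = (ch n).val.2.1 i := by
    intro i n n' hin hnn
    induction hnn with
    | refl => rfl
    | @step n'' h ih =>
      rw [← ih]
      exact (hchR n'').2.1 i (by rw [hk]; exact lt_of_lt_of_le hin h)
  have hagree_x : ∀ m n n', m < n → n ≤ n' → (ch n').val.2.2 m = (ch n).val.2.2 m := by
    intro m n n' hmn hnn
    induction hnn with
    | refl => rfl
    | @step n'' h ih =>
      rw [← ih]
      exact (hchR n'').2.2 m (by rw [hk]; exact lt_of_lt_of_le hmn h)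
  set fs : ℕ → (X →L[ℝ] ℝ) := fun i => (ch (i+1)).val.2.1 i with hfsdef
  set xs : ℕ → X := fun m => (ch (m+1)).val.2.2 m with hxsdef
  refine ⟨d, C, xs, fs, hdpos, hCpos, ?_, ?_, ?_, ?_⟩
  · intro m
    have := ((ch (m+1)).property).2.1 m (by rw [hk]; omega)
    exact this
  · intro i
    have := ((ch (i+1)).property).1 i (by rw [hk]; omega)
    exact this
  · intro i m him
    have hinv := (ch (m+1)).property
    have h3 := hinv.2.2.1 i m him (by rw [hk]; omega)
    have hfi : (ch (m+1)).val.2.1 i = fs i := by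
      rw [hfsdef]
      exact hagree_f i (i+1) (m+1) (by omega) (by omega)
    rw [hfi] at h3
    exact h3
  · intro m i hmi
    have hinv := (ch (i+1)).property
    have h4 := hinv.2.2.2.1 m i hmi (by rw [hk]; omega)
    have hxm : (ch (i+1)).val.2.2 m = xs m := by
      rw [hxsdef]
      exact hagree_x m (m+1) (i+1) (by omega) (by omega)
    rw [hxm] at h4
    exact h4

end ArrayConstruction

section Remaining
variable {X : Type*} [NormedAddCommGroup X] [NormedSpace ℝ X]

lemma array_no_weak_cauchy
    (hwsc : ∀ x : ℕ → X,
      (∀ f : X →L[ℝ] ℝ, ∃ l : ℝ, Tendsto (fun n => f (x n)) atTop (𝓝 l)) →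
      ∃ z : X, ∀ f : X →L[ℝ] ℝ, Tendsto (fun n => f (x n)) atTop (𝓝 (f z)))
    (d : ℝ) (hdpos : 0 < d) (xs : ℕ → X) (fs : ℕ → (X →L[ℝ] ℝ))
    (hfb : ∀ i, ‖fs i‖ ≤ 2)
    (hval : ∀ i m, i ≤ m → d / 2 ≤ fs i (xs m))
    (hsmall : ∀ m i, m < i → |fs i (xs m)| ≤ (1/2 : ℝ)^i) :
    ∀ M : Set ℕ, M.Infinite → ∃ f : X →L[ℝ] ℝ,
      ¬ ∃ l : ℝ, Tendsto (fun k => f (xs (Nat.nth (· ∈ M) k))) atTop (𝓝 l) := by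
  set U : Ultrafilter ℕ := Ultrafilter.of atTop with hU
  have hUle : (U : Filter ℕ) ≤ atTop := Ultrafilter.of_le atTop
  obtain ⟨g, hg⟩ := ultrafilter_functional U fs 2 (by norm_num) hfb
  have hg0 : ∀ m, g (xs m) = 0 := by
    intro m
    have h1 : Tendsto (fun i => fs i (xs m)) atTop (𝓝 0) := by
      apply squeeze_zero_norm' (a := fun i => (1/2 : ℝ)^i)
      · filter_upwards [eventually_gt_atTop m] with i hi
        exact hsmall m i hi
      · exact tendsto_pow_atTop_nhds_zero_of_lt_one (by norm_num) (by norm_num)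
    exact tendsto_nhds_unique (hg (xs m)) (h1.mono_left hUle)
  intro M hM
  by_contra h
  push_neg at h
  obtain ⟨z, hz⟩ := hwsc (fun k => xs (Nat.nth (· ∈ M) k)) h
  have hMinf' : {n | (fun m => m ∈ M) n}.Infinite := by simpa using hM
  have hnth : StrictMono (Nat.nth (· ∈ M)) := Nat.nth_strictMono hMinf'
  have hfz : ∀ i, d/2 ≤ fs i z := by
    intro i
    apply ge_of_tendsto (hz (fs i))
    filter_upwards [eventually_ge_atTop i] with k hk
    exact hval i _ (le_trans hk hnth.le_apply)
  have hgz1 : d/2 ≤ g z := by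
    apply ge_of_tendsto (hg z)
    exact Filter.univ_mem' hfz
  have hgz0 : g z = 0 := by
    have h1 : Tendsto (fun k => g (xs (Nat.nth (· ∈ M) k))) atTop (𝓝 (g z)) := hz g
    have h2 : (fun k => g (xs (Nat.nth (· ∈ M) k))) = fun _ => (0:ℝ) := by
      funext k; exact hg0 _
    rw [h2] at h1
    exact tendsto_nhds_unique h1 tendsto_const_nhds
  linarith

lemma l1_lower_bound (w : ℕ → X) (K r sb : ℝ) (hK : 0 < K) (hrs : r < sb)
    (hpat : ∀ (k : ℕ) (ε : ℕ → Bool), ∃ t : X →L[ℝ] ℝ, ‖t‖ ≤ K ∧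
      ∀ i < k, (ε i = true → t (w i) < r) ∧ (ε i = false → sb < t (w i)))
    (a : ℕ → ℝ) (k : ℕ) :
    (sb - r) * (∑ i ∈ Finset.range k, |a i|) ≤
      2 * K * ‖∑ i ∈ Finset.range k, a i • w i‖ := by
  classical
  set ε : ℕ → Bool := fun i => decide (a i < 0) with hε
  obtain ⟨t1, ht1K, ht1⟩ := hpat k ε
  obtain ⟨t2, ht2K, ht2⟩ := hpat k (fun i => !(ε i))
  have hterm : ∀ i ∈ Finset.range k,
      (sb - r) * |a i| ≤ a i * (t1 (w i) - t2 (w i)) := by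
    intro i hi
    rw [Finset.mem_range] at hi
    by_cases hai : a i < 0
    · have he : ε i = true := by rw [hε]; simp [hai]
      have h1 : t1 (w i) < r := (ht1 i hi).1 he
      have h2 : sb < t2 (w i) := (ht2 i hi).2 (by simp [he])
      rw [abs_of_neg hai]
      nlinarith
    · push_neg at hai
      have he : ε i = false := by rw [hε]; simp [not_lt.mpr hai]
      have h1 : sb < t1 (w i) := (ht1 i hi).2 he
      have h2 : t2 (w i) < r := (ht2 i hi).1 (by simp [he])
      rw [abs_of_nonneg hai]
      nlinarith
  have hsum : (sb - r) * (∑ i ∈ Finset.range k, |a i|) ≤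
      (t1 - t2) (∑ i ∈ Finset.range k, a i • w i) := by
    rw [Finset.mul_sum, map_sum]
    apply Finset.sum_le_sum
    intro i hi
    have heq : (t1 - t2) (a i • w i) = a i * (t1 (w i) - t2 (w i)) := by
      simp only [ContinuousLinearMap.sub_apply, map_smul, smul_eq_mul]
      try ring
    rw [heq]
    exact hterm i hi
  have hnorm : (t1 - t2) (∑ i ∈ Finset.range k, a i • w i) ≤
      2 * K * ‖∑ i ∈ Finset.range k, a i • w i‖ := by
    calc (t1 - t2) (∑ i ∈ Finset.range k, a i • w i)
        ≤ |(t1 - t2) (∑ i ∈ Finset.range k, a i • w i)| := le_abs_self _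
      _ ≤ ‖t1 - t2‖ * ‖∑ i ∈ Finset.range k, a i • w i‖ := (t1 - t2).le_opNorm _
      _ ≤ 2 * K * ‖∑ i ∈ Finset.range k, a i • w i‖ := by
          apply mul_le_mul_of_nonneg_right _ (norm_nonneg _)
          calc ‖t1 - t2‖ ≤ ‖t1‖ + ‖t2‖ := norm_sub_le _ _
          _ ≤ 2 * K := by linarith
  linarith

lemma lp_embedding [CompleteSpace X] (w : ℕ → X) (C c : ℝ) (hC : 0 < C) (hc : 0 < c)
    (hwb : ∀ i, ‖w i‖ ≤ C)
    (hlow : ∀ (a : ℕ → ℝ) (k : ℕ),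
      c * (∑ i ∈ Finset.range k, |a i|) ≤ ‖∑ i ∈ Finset.range k, a i • w i‖) :
    ∃ T : lp (fun _ : ℕ => ℝ) 1 →L[ℝ] X, ∀ a, c * ‖a‖ ≤ ‖T a‖ := by
  classical
  have hsumnorm : ∀ a : lp (fun _ : ℕ => ℝ) 1, Summable (fun i => ‖(a : ℕ → ℝ) i‖) := by
    intro a
    have := (lp.memℓp a).summable (by norm_num)
    simpa using this
  have hsummand : ∀ a : lp (fun _ : ℕ => ℝ) 1, Summable (fun i => (a : ℕ → ℝ) i • w i) := by
    intro a
    apply Summable.of_norm_bounded (g := fun i => C * ‖(a : ℕ → ℝ) i‖)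
      ((hsumnorm a).mul_left C)
    intro i
    rw [norm_smul]
    calc ‖(a : ℕ → ℝ) i‖ * ‖w i‖ ≤ ‖(a : ℕ → ℝ) i‖ * C :=
      mul_le_mul_of_nonneg_left (hwb i) (norm_nonneg _)
    _ = C * ‖(a : ℕ → ℝ) i‖ := mul_comm _ _
  have hnorm_eq : ∀ a : lp (fun _ : ℕ => ℝ) 1, ‖a‖ = ∑' i, ‖(a : ℕ → ℝ) i‖ := by
    intro a
    rw [lp.norm_eq_tsum_rpow (by norm_num)]
    simp
  set Tfun : lp (fun _ : ℕ => ℝ) 1 → X := fun a => ∑' i, (a : ℕ → ℝ) i • w i with hTfun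
  have hTadd : ∀ a b, Tfun (a + b) = Tfun a + Tfun b := by
    intro a b
    rw [hTfun]
    simp only []
    have hco : ∀ i, ((a + b : lp (fun _ : ℕ => ℝ) 1) : ℕ → ℝ) i • w i
        = (a : ℕ → ℝ) i • w i + (b : ℕ → ℝ) i • w i := by
      intro i
      rw [lp.coeFn_add]
      simp [add_smul]
    rw [tsum_congr hco]
    exact Summable.tsum_add (hsummand a) (hsummand b)
  have hTsmul : ∀ (t : ℝ) a, Tfun (t • a) = t • Tfun a := by
    intro t a
    rw [hTfun]
    simp only []
    have hco : ∀ i, ((t • a : lp (fun _ : ℕ => ℝ) 1) : ℕ → ℝ) i • w i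
        = t • ((a : ℕ → ℝ) i • w i) := by
      intro i
      rw [lp.coeFn_smul]
      simp [smul_smul]
    rw [tsum_congr hco]
    exact Summable.tsum_const_smul t (hsummand a)
  have hTbound : ∀ a, ‖Tfun a‖ ≤ C * ‖a‖ := by
    intro a
    rw [hnorm_eq a]
    calc ‖Tfun a‖ ≤ ∑' i, ‖(a : ℕ → ℝ) i • w i‖ := by
          apply norm_tsum_le_tsum_norm
          apply Summable.of_nonneg_of_le (fun i => norm_nonneg _)
            (fun i => by
              rw [norm_smul]
              calc ‖(a : ℕ → ℝ) i‖ * ‖w i‖ ≤ ‖(a : ℕ → ℝ) i‖ * C :=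
                mul_le_mul_of_nonneg_left (hwb i) (norm_nonneg _)
              _ = C * ‖(a : ℕ → ℝ) i‖ := mul_comm _ _)
            ((hsumnorm a).mul_left C)
    _ ≤ ∑' i, C * ‖(a : ℕ → ℝ) i‖ := by
          apply Summable.tsum_le_tsum _ _ ((hsumnorm a).mul_left C)
          · intro i
            rw [norm_smul]
            calc ‖(a : ℕ → ℝ) i‖ * ‖w i‖ ≤ ‖(a : ℕ → ℝ) i‖ * C :=
              mul_le_mul_of_nonneg_left (hwb i) (norm_nonneg _)
            _ = C * ‖(a : ℕ → ℝ) i‖ := mul_comm _ _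
          · apply Summable.of_nonneg_of_le (fun i => norm_nonneg _)
              (fun i => by
                rw [norm_smul]
                calc ‖(a : ℕ → ℝ) i‖ * ‖w i‖ ≤ ‖(a : ℕ → ℝ) i‖ * C :=
                  mul_le_mul_of_nonneg_left (hwb i) (norm_nonneg _)
                _ = C * ‖(a : ℕ → ℝ) i‖ := mul_comm _ _)
              ((hsumnorm a).mul_left C)
    _ = C * ∑' i, ‖(a : ℕ → ℝ) i‖ := by rw [tsum_mul_left]
  set Tlin : lp (fun _ : ℕ => ℝ) 1 →ₗ[ℝ] X :=
    { toFun := Tfun, map_add' := hTadd, map_smul' := hTsmul } with hTlin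
  set T : lp (fun _ : ℕ => ℝ) 1 →L[ℝ] X := LinearMap.mkContinuous Tlin C hTbound with hT
  refine ⟨T, ?_⟩
  intro a
  have hTa : T a = Tfun a := rfl
  -- lower bound via limits
  have hpartial : Tendsto (fun k => c * ∑ i ∈ Finset.range k, ‖(a : ℕ → ℝ) i‖)
      atTop (𝓝 (c * ‖a‖)) := by
    rw [hnorm_eq a]
    exact ((hsumnorm a).hasSum.tendsto_sum_nat).const_mul c
  have htail : Tendsto (fun k => ‖T a‖ + C * ∑' i, ‖(a : ℕ → ℝ) (i + k)‖)
      atTop (𝓝 (‖T a‖ + C * 0)) := by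
    apply Tendsto.const_add
    apply Tendsto.const_mul
    exact tendsto_sum_nat_add (fun i => ‖(a : ℕ → ℝ) i‖)
  have hineq : ∀ k, c * ∑ i ∈ Finset.range k, ‖(a : ℕ → ℝ) i‖ ≤
      ‖T a‖ + C * ∑' i, ‖(a : ℕ → ℝ) (i + k)‖ := by
    intro k
    have h1 : c * ∑ i ∈ Finset.range k, ‖(a : ℕ → ℝ) i‖ ≤
        ‖∑ i ∈ Finset.range k, (a : ℕ → ℝ) i • w i‖ := by
      have := hlow (a : ℕ → ℝ) k
      simpa [Real.norm_eq_abs] using this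
    have hsplit : (∑ i ∈ Finset.range k, (a : ℕ → ℝ) i • w i) +
        (∑' i, (a : ℕ → ℝ) (i + k) • w (i + k)) = Tfun a :=
      Summable.sum_add_tsum_nat_add k (hsummand a)
    have h2 : ‖∑ i ∈ Finset.range k, (a : ℕ → ℝ) i • w i‖ ≤
        ‖Tfun a‖ + ‖∑' i, (a : ℕ → ℝ) (i + k) • w (i + k)‖ := by
      calc ‖∑ i ∈ Finset.range k, (a : ℕ → ℝ) i • w i‖
          = ‖Tfun a - ∑' i, (a : ℕ → ℝ) (i + k) • w (i + k)‖ := by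
            rw [← hsplit, add_sub_cancel_right]
      _ ≤ ‖Tfun a‖ + ‖∑' i, (a : ℕ → ℝ) (i + k) • w (i + k)‖ := norm_sub_le _ _
    have h3 : ‖∑' i, (a : ℕ → ℝ) (i + k) • w (i + k)‖ ≤
        C * ∑' i, ‖(a : ℕ → ℝ) (i + k)‖ := by
      have hsum2 : Summable (fun i => ‖(a : ℕ → ℝ) (i + k)‖) :=
        ((hsumnorm a)).comp_injective (add_left_injective k)
      calc ‖∑' i, (a : ℕ → ℝ) (i + k) • w (i + k)‖
          ≤ ∑' i, ‖(a : ℕ → ℝ) (i + k) • w (i + k)‖ := by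
            apply norm_tsum_le_tsum_norm
            apply Summable.of_nonneg_of_le (fun i => norm_nonneg _)
              (fun i => by
                rw [norm_smul]
                calc ‖(a : ℕ → ℝ) (i+k)‖ * ‖w (i+k)‖ ≤ ‖(a : ℕ → ℝ) (i+k)‖ * C :=
                  mul_le_mul_of_nonneg_left (hwb _) (norm_nonneg _)
                _ = C * ‖(a : ℕ → ℝ) (i+k)‖ := mul_comm _ _)
              (hsum2.mul_left C)
      _ ≤ ∑' i, C * ‖(a : ℕ → ℝ) (i + k)‖ := by
            apply Summable.tsum_le_tsum _ _ (hsum2.mul_left C)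
            · intro i
              rw [norm_smul]
              calc ‖(a : ℕ → ℝ) (i+k)‖ * ‖w (i+k)‖ ≤ ‖(a : ℕ → ℝ) (i+k)‖ * C :=
                mul_le_mul_of_nonneg_left (hwb _) (norm_nonneg _)
              _ = C * ‖(a : ℕ → ℝ) (i+k)‖ := mul_comm _ _
            · apply Summable.of_nonneg_of_le (fun i => norm_nonneg _)
                (fun i => by
                  rw [norm_smul]
                  calc ‖(a : ℕ → ℝ) (i+k)‖ * ‖w (i+k)‖ ≤ ‖(a : ℕ → ℝ) (i+k)‖ * C :=
                    mul_le_mul_of_nonneg_left (hwb _) (norm_nonneg _)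
                  _ = C * ‖(a : ℕ → ℝ) (i+k)‖ := mul_comm _ _)
                (hsum2.mul_left C)
      _ = C * ∑' i, ‖(a : ℕ → ℝ) (i + k)‖ := by rw [tsum_mul_left]
    calc c * ∑ i ∈ Finset.range k, ‖(a : ℕ → ℝ) i‖
        ≤ ‖∑ i ∈ Finset.range k, (a : ℕ → ℝ) i • w i‖ := h1
    _ ≤ ‖Tfun a‖ + ‖∑' i, (a : ℕ → ℝ) (i + k) • w (i + k)‖ := h2
    _ ≤ ‖Tfun a‖ + C * ∑' i, ‖(a : ℕ → ℝ) (i + k)‖ := by linarith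
    _ = ‖T a‖ + C * ∑' i, ‖(a : ℕ → ℝ) (i + k)‖ := by rw [hTa]
  have := le_of_tendsto_of_tendsto' hpartial htail hineq
  simpa using this

end Remaining

theorem contains_ell1_of_weaklySeqComplete_nonreflexive
    (X : Type*) [NormedAddCommGroup X] [NormedSpace ℝ X] [CompleteSpace X]
    (hwsc : ∀ x : ℕ → X,
      (∀ f : X →L[ℝ] ℝ, ∃ l : ℝ, Tendsto (fun n => f (x n)) atTop (𝓝 l)) →
      ∃ z : X, ∀ f : X →L[ℝ] ℝ, Tendsto (fun n => f (x n)) atTop (𝓝 (f z)))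
    (hnonrefl : ¬ Function.Surjective (NormedSpace.inclusionInDoubleDual ℝ X)) :
    ContainsIsomorphicCopy (lp (fun _ : ℕ => ℝ) 1) X := by
  classical
  obtain ⟨d, C, xs, fs, hdpos, hCpos, hxb, hfb, hval, hsmall⟩ := exists_james_array hnonrefl
  have hdiv := array_no_weak_cauchy hwsc d hdpos xs fs hfb hval hsmall
  obtain ⟨M₀, K, r, sb, hM₀inf, hK, hrs, hosc⟩ := stepA xs C hxb hdiv
  obtain ⟨y, hymono, hpat⟩ := rosenthal_extraction hK hrs M₀ hM₀inf hosc
  set w : ℕ → X := fun i => xs (y i) with hw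
  have hwb : ∀ i, ‖w i‖ ≤ C := fun i => hxb _
  set c : ℝ := (sb - r) / (2 * K) with hc
  have hcpos : 0 < c := div_pos (by linarith) (by linarith)
  have hlow : ∀ (a : ℕ → ℝ) (k : ℕ),
      c * (∑ i ∈ Finset.range k, |a i|) ≤ ‖∑ i ∈ Finset.range k, a i • w i‖ := by
    intro a k
    have hlb := l1_lower_bound w K r sb hK hrs hpat a k
    rw [hc, div_mul_eq_mul_div, div_le_iff₀ (by linarith : (0:ℝ) < 2*K)]
    linarith
  obtain ⟨T, hT⟩ := lp_embedding w C c hCpos hcpos hwb hlow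
  exact ⟨T, c, hcpos, hT⟩
end
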